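/- arXiv:1506.02340 — 4 statements merged into one kernel-verified Lean document; each statement's English description precedes it below -/
import Mathlib

section
/- For any permuton γ and positive integer m, let γ^m be the step permuton whose density on each half-open square Q_{ij} = ((i−1)/m, i/m] × ((j−1)/m, j/m] is the constant m²γ(Q_{ij}). Then lim_{m→∞} H(γ^m) = H(γ); in particular, when H(γ) = −∞ the sequence H(γ^m) diverges to −∞. -/
open MeasureTheory Real Set Filter
open scoped Classical ENNReal

noncomputable section

/-- A *permuton* is a Borel probability measure on `[0,1]²` (viewed as a measure on `ℝ × ℝ`)
both of whose coordinate marginals are Lebesgue measure on `[0,1]`. -/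
def IsPermuton (γ : Measure (ℝ × ℝ)) : Prop :=
  IsProbabilityMeasure γ ∧
    γ.map Prod.fst = volume.restrict (Icc (0 : ℝ) 1) ∧
    γ.map Prod.snd = volume.restrict (Icc (0 : ℝ) 1)

/-- The entropy `H(γ) = ∫ -g log g` of a measure on `ℝ × ℝ`, taking the value `⊥ = -∞`
if `γ` is not absolutely continuous (w.r.t. Lebesgue measure) with density `g` such that
`g log g` is integrable. -/
def permutonEntropy (γ : Measure (ℝ × ℝ)) : EReal :=
  if (γ ≪ volume) ∧
      Integrable (fun p => (γ.rnDeriv volume p).toReal * Real.log (γ.rnDeriv volume p).toReal)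
        volume then
    (((∫ p, -((γ.rnDeriv volume p).toReal * Real.log (γ.rnDeriv volume p).toReal)) : ℝ) : EReal)
  else ⊥

/-- The rectangle distance `d_□` between two measures on `ℝ × ℝ`: the supremum over
axis-aligned rectangles `R` of `|γ₁(R) - γ₂(R)|`. -/
def permutonDist (γ₁ γ₂ : Measure (ℝ × ℝ)) : ℝ :=
  ⨆ R : ℝ × ℝ × ℝ × ℝ,
    |(γ₁ (Icc R.1 R.2.1 ×ˢ Icc R.2.2.1 R.2.2.2)).toReal -
      (γ₂ (Icc R.1 R.2.1 ×ˢ Icc R.2.2.1 R.2.2.2)).toReal|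

/-- The half-open grid cell `(i/m, (i+1)/m] × (j/m, (j+1)/m]` (0-indexed version of `Q_{ij}`). -/
def gridCell (m i j : ℕ) : Set (ℝ × ℝ) :=
  Ioc ((i : ℝ) / m) ((i + 1 : ℝ) / m) ×ˢ Ioc ((j : ℝ) / m) ((j + 1 : ℝ) / m)

/-- The permuton `γ_π` associated to a permutation `π ∈ S_n`: density `n` on each
grid square `(i/n,(i+1)/n] × (π(i)/n,(π(i)+1)/n]`, and `0` elsewhere. -/
def permutationPermuton (n : ℕ) (σp : Equiv.Perm (Fin n)) : Measure (ℝ × ℝ) :=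
  volume.withDensity fun p =>
    ∑ i : Fin n, (gridCell n i (σp i)).indicator (fun _ => (n : ℝ≥0∞)) p

/-- The number of permutations of `Fin n` satisfying a predicate. -/
def permCount (n : ℕ) (P : Equiv.Perm (Fin n) → Prop) : ℕ :=
  Nat.card {σp : Equiv.Perm (Fin n) // P σp}

/-- `(1/n) log (c / n!)`, as an extended real, with value `⊥ = -∞` when `c = 0`. -/
def normLog (n c : ℕ) : EReal :=
  if c = 0 then ⊥ else ((Real.log ((c : ℝ) / (n.factorial : ℝ)) / n : ℝ) : EReal)

/-- The event that `m` points of `ℝ × ℝ`, when reindexed in increasing order of `x`-coordinate,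
have `y`-coordinates in the relative order given by the pattern `τ`. -/
def patternEvent {m : ℕ} (τ : Equiv.Perm (Fin m)) : Set (Fin m → ℝ × ℝ) :=
  {p | ∃ σ : Equiv.Perm (Fin m),
        StrictMono (fun i => (p (σ i)).1) ∧
        ∀ i j : Fin m, i < j → ((p (σ i)).2 < (p (σ j)).2 ↔ τ i < τ j)}

/-- The density `ρ_τ(γ)` of the pattern `τ ∈ S_m` in the measure `γ`: the probability that
`m` points drawn independently from `γ` induce the pattern `τ`. -/
def patternDensity {m : ℕ} (τ : Equiv.Perm (Fin m)) (γ : Measure (ℝ × ℝ)) : ℝ :=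
  ((Measure.pi fun _ : Fin m => γ) (patternEvent τ)).toReal

end

/-- The step-permuton approximation `γ^m`: the measure whose density on each grid cell
`Q_{ij}` is the constant `m² γ(Q_{ij})`. -/
noncomputable def stepPermuton (γ : Measure (ℝ × ℝ)) (m : ℕ) : Measure (ℝ × ℝ) :=
  volume.withDensity fun p =>
    ∑ i : Fin m, ∑ j : Fin m,
      (gridCell m i j).indicator (fun _ => (m : ℝ≥0∞) ^ 2 * γ (gridCell m i j)) p

namespace StepAux

open MeasureTheory Real Set Filter
open scoped ENNReal

noncomputable section

/-- The half-open unit square. -/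
def sq : Set (ℝ × ℝ) := Ioc (0:ℝ) 1 ×ˢ Ioc (0:ℝ) 1

/-- The cell indexed by a pair. -/
def cell (m : ℕ) (ij : Fin m × Fin m) : Set (ℝ × ℝ) := gridCell m ij.1 ij.2

/-- `t log t`. -/
def mlog (t : ℝ) : ℝ := t * Real.log t

def fden (γ : Measure (ℝ × ℝ)) (m : ℕ) : ℝ × ℝ → ℝ≥0∞ := fun p =>
  ∑ i : Fin m, ∑ j : Fin m,
      (gridCell m i j).indicator (fun _ => (m : ℝ≥0∞) ^ 2 * γ (gridCell m i j)) p

def cco (γ : Measure (ℝ × ℝ)) (m : ℕ) (ij : Fin m × Fin m) : ℝ :=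
  ((m : ℝ≥0∞) ^ 2 * γ (cell m ij)).toReal

def gm (γ : Measure (ℝ × ℝ)) (m : ℕ) (p : ℝ × ℝ) : ℝ := (fden γ m p).toReal

def gR (γ : Measure (ℝ × ℝ)) (p : ℝ × ℝ) : ℝ := (γ.rnDeriv volume p).toReal

def stepFn (m : ℕ) (c : Fin m × Fin m → ℝ) (p : ℝ × ℝ) : ℝ :=
  ∑ ij : Fin m × Fin m, (cell m ij).indicator (fun _ => c ij) p

def dI (γ : Measure (ℝ × ℝ)) (m : ℕ) : ℝ := ∫ p, mlog (gm γ m p)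

lemma measurableSet_sq : MeasurableSet sq := measurableSet_Ioc.prod measurableSet_Ioc

lemma volume_prod_set (s t : Set ℝ) : volume (s ×ˢ t) = volume s * volume t := by
  rw [Measure.volume_eq_prod, Measure.prod_prod]

lemma volume_sq : volume sq = 1 := by
  rw [sq, volume_prod_set, Real.volume_Ioc]
  norm_num

lemma measurableSet_cell {m : ℕ} (ij : Fin m × Fin m) : MeasurableSet (cell m ij) :=
  measurableSet_Ioc.prod measurableSet_Ioc

lemma aux_div_le {m : ℕ} (i : Fin m) : ((i:ℕ)+1:ℝ)/m ≤ 1 := by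
  have hm : (0:ℝ) < m := by exact_mod_cast i.pos
  rw [div_le_one hm]
  exact_mod_cast i.2

lemma aux_div_nonneg {m : ℕ} (i : Fin m) : (0:ℝ) ≤ ((i:ℕ):ℝ)/m := by positivity

lemma cell_subset_sq {m : ℕ} (ij : Fin m × Fin m) : cell m ij ⊆ sq := by
  rintro ⟨x, y⟩ ⟨hx, hy⟩
  constructor
  · exact Ioc_subset_Ioc (aux_div_nonneg ij.1) (aux_div_le ij.1) hx
  · exact Ioc_subset_Ioc (aux_div_nonneg ij.2) (aux_div_le ij.2) hy

lemma grid_len {m : ℕ} (i : Fin m) : ((i:ℕ)+1:ℝ)/m - ((i:ℕ):ℝ)/m = 1/(m:ℝ) := by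
  have hm : (0:ℝ) < m := by exact_mod_cast i.pos
  field_simp
  ring

lemma volume_cell {m : ℕ} (ij : Fin m × Fin m) :
    volume (cell m ij) = ENNReal.ofReal (1/(m:ℝ)) * ENNReal.ofReal (1/(m:ℝ)) := by
  rw [cell, gridCell, volume_prod_set, Real.volume_Ioc, Real.volume_Ioc,
    grid_len ij.1, grid_len ij.2]

lemma volume_cell_ne_top {m : ℕ} (ij : Fin m × Fin m) : volume (cell m ij) ≠ ∞ := by
  rw [volume_cell]; exact ENNReal.mul_ne_top ENNReal.ofReal_ne_top ENNReal.ofReal_ne_top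

lemma volume_cell_toReal {m : ℕ} (ij : Fin m × Fin m) :
    (volume (cell m ij)).toReal = 1/(m:ℝ)^2 := by
  have hm : (0:ℝ) < m := by exact_mod_cast ij.1.pos
  rw [volume_cell, ENNReal.toReal_mul, ENNReal.toReal_ofReal (by positivity)]
  field_simp

lemma volume_cell_pos {m : ℕ} (ij : Fin m × Fin m) : 0 < volume (cell m ij) := by
  have hm : (0:ℝ) < m := by exact_mod_cast ij.1.pos
  rw [volume_cell]
  have : (0:ℝ≥0∞) < ENNReal.ofReal (1/(m:ℝ)) := by
    rw [ENNReal.ofReal_pos]; positivity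
  exact ENNReal.mul_pos this.ne' this.ne' |>.bot_lt

lemma mem_Ioc_unique {m i k : ℕ} (hm : 0 < m) {x : ℝ}
    (hi : x ∈ Ioc ((i:ℝ)/m) ((i+1:ℝ)/m)) (hk : x ∈ Ioc ((k:ℝ)/m) ((k+1:ℝ)/m)) : i = k := by
  have hm' : (0:ℝ) < m := by exact_mod_cast hm
  have h1 : (i:ℝ)/m < (k+1:ℝ)/m := hi.1.trans_le hk.2
  have h2 : (k:ℝ)/m < (i+1:ℝ)/m := hk.1.trans_le hi.2
  rw [div_lt_div_iff_of_pos_right hm'] at h1 h2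
  have h1' : i < k + 1 := by exact_mod_cast h1
  have h2' : k < i + 1 := by exact_mod_cast h2
  omega

lemma cell_eq_of_mem {m : ℕ} {ij kl : Fin m × Fin m} {p : ℝ × ℝ}
    (h1 : p ∈ cell m ij) (h2 : p ∈ cell m kl) : ij = kl := by
  have hm : 0 < m := ij.1.pos
  have e1 : (ij.1 : ℕ) = kl.1 := mem_Ioc_unique hm (by exact_mod_cast h1.1) (by exact_mod_cast h2.1)
  have e2 : (ij.2 : ℕ) = kl.2 := mem_Ioc_unique hm (by exact_mod_cast h1.2) (by exact_mod_cast h2.2)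
  ext
  · exact e1
  · exact e2

lemma exists_mem_Ioc {m : ℕ} (hm : 0 < m) {x : ℝ} (hx : x ∈ Ioc (0:ℝ) 1) :
    ∃ i : Fin m, x ∈ Ioc ((i:ℝ)/m) (((i:ℕ)+1:ℝ)/m) := by
  have hm' : (0:ℝ) < m := by exact_mod_cast hm
  have hxm : 0 < x * m := mul_pos hx.1 hm'
  set k := ⌈x * m⌉₊ with hkdef
  have hk1 : 1 ≤ k := Nat.one_le_iff_ne_zero.2 (by
    intro h0
    have := Nat.ceil_eq_zero.1 h0
    linarith)
  have hkm : k ≤ m := Nat.ceil_le.2 (by nlinarith [hx.2])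
  refine ⟨⟨k - 1, by omega⟩, ?_, ?_⟩
  · have hlt : ((k - 1 : ℕ) : ℝ) < x * m := by
      have : (k - 1 : ℕ) < ⌈x * m⌉₊ := by omega
      exact Nat.lt_ceil.1 this
    show ((k - 1 : ℕ) : ℝ)/m < x
    rw [div_lt_iff₀ hm']
    linarith
  · have hle : x * m ≤ ((k - 1 : ℕ) : ℝ) + 1 := by
      have h1 : x * m ≤ (k : ℝ) := Nat.le_ceil _
      have h2 : ((k - 1 : ℕ) : ℝ) + 1 = (k : ℝ) := by
        have : ((k - 1 : ℕ) : ℝ) = (k : ℝ) - 1 := by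
          have : (k - 1 : ℕ) + 1 = k := by omega
          have := congrArg (fun n : ℕ => (n : ℝ)) this
          push_cast at this
          linarith
        rw [this]; ring
      rw [h2]; exact h1
    show x ≤ (((⟨k-1, by omega⟩ : Fin m) : ℕ) + 1 : ℝ)/m
    rw [le_div_iff₀ hm']
    exact hle

lemma exists_cell_mem {m : ℕ} (hm : 0 < m) {p : ℝ × ℝ} (hp : p ∈ sq) :
    ∃ ij : Fin m × Fin m, p ∈ cell m ij := by
  obtain ⟨i, hi⟩ := exists_mem_Ioc hm hp.1
  obtain ⟨j, hj⟩ := exists_mem_Ioc hm hp.2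
  exact ⟨(i, j), hi, hj⟩

lemma sq_eq_biUnion {m : ℕ} (hm : 0 < m) :
    (⋃ ij ∈ (Finset.univ : Finset (Fin m × Fin m)), cell m ij) = sq := by
  apply Set.Subset.antisymm
  · refine Set.iUnion₂_subset fun ij _ => cell_subset_sq ij
  · intro p hp
    obtain ⟨ij, hij⟩ := exists_cell_mem hm hp
    exact Set.mem_biUnion (Finset.mem_univ ij) hij

lemma cells_pairwise_disjoint {m : ℕ} (T : Finset (Fin m × Fin m)) :
    (T : Set (Fin m × Fin m)).PairwiseDisjoint (cell m) := by
  intro ij _ kl _ hne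
  refine Set.disjoint_left.2 fun p hp hp' => hne (cell_eq_of_mem hp hp')

/-! ### step functions -/

lemma stepFn_apply {m : ℕ} {c : Fin m × Fin m → ℝ} {ij : Fin m × Fin m} {p : ℝ × ℝ}
    (hp : p ∈ cell m ij) : stepFn m c p = c ij := by
  rw [stepFn, Finset.sum_eq_single ij]
  · exact Set.indicator_of_mem hp _
  · intro kl _ hkl
    exact Set.indicator_of_notMem (fun hk => hkl (cell_eq_of_mem hk hp)) _
  · intro h
    exact absurd (Finset.mem_univ ij) h

lemma stepFn_apply_zero {m : ℕ} {c : Fin m × Fin m → ℝ} {p : ℝ × ℝ}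
    (hp : ∀ ij, p ∉ cell m ij) : stepFn m c p = 0 := by
  rw [stepFn]
  exact Finset.sum_eq_zero fun ij _ => Set.indicator_of_notMem (hp ij) _

lemma stepFn_apply_zero' {m : ℕ} {c : Fin m × Fin m → ℝ} {p : ℝ × ℝ}
    (hp : p ∉ sq) : stepFn m c p = 0 :=
  stepFn_apply_zero fun ij h => hp (cell_subset_sq ij h)

lemma fden_eq_sum (γ : Measure (ℝ × ℝ)) (m : ℕ) (p : ℝ × ℝ) :
    fden γ m p = ∑ ij : Fin m × Fin m,
      (cell m ij).indicator (fun _ => (m : ℝ≥0∞) ^ 2 * γ (cell m ij)) p := by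
  rw [fden, Fintype.sum_prod_type]
  rfl

lemma gm_eq_stepFn (γ : Measure (ℝ × ℝ)) (m : ℕ) (p : ℝ × ℝ) :
    gm γ m p = stepFn m (cco γ m) p := by
  by_cases h : ∃ ij, p ∈ cell m ij
  · obtain ⟨ij, hij⟩ := h
    rw [gm, fden_eq_sum, Finset.sum_eq_single ij, Set.indicator_of_mem hij,
      stepFn_apply hij, cco]
    · intro kl _ hkl
      exact Set.indicator_of_notMem (fun hk => hkl (cell_eq_of_mem hk hij)) _
    · intro h
      exact absurd (Finset.mem_univ ij) h
  · push_neg at h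
    rw [gm, fden_eq_sum, Finset.sum_eq_zero fun ij _ => Set.indicator_of_notMem (h ij) _,
      stepFn_apply_zero h]
    rfl

lemma comp_stepFn {F : ℝ → ℝ} (hF : F 0 = 0) {m : ℕ} (c : Fin m × Fin m → ℝ) (p : ℝ × ℝ) :
    F (stepFn m c p) = stepFn m (fun ij => F (c ij)) p := by
  by_cases h : ∃ ij, p ∈ cell m ij
  · obtain ⟨ij, hij⟩ := h
    rw [stepFn_apply hij, stepFn_apply hij]
  · push_neg at h
    rw [stepFn_apply_zero h, stepFn_apply_zero h, hF]

lemma abs_sub_stepFn {m : ℕ} (c c' : Fin m × Fin m → ℝ) (p : ℝ × ℝ) :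
    |stepFn m c p - stepFn m c' p| = stepFn m (fun ij => |c ij - c' ij|) p := by
  by_cases h : ∃ ij, p ∈ cell m ij
  · obtain ⟨ij, hij⟩ := h
    rw [stepFn_apply hij, stepFn_apply hij, stepFn_apply hij]
  · push_neg at h
    rw [stepFn_apply_zero h, stepFn_apply_zero h, stepFn_apply_zero h]
    simp

lemma measurable_stepFn {m : ℕ} (c : Fin m × Fin m → ℝ) : Measurable (stepFn m c) := by
  apply Finset.measurable_sum
  intro ij _
  exact (measurable_const).indicator (measurableSet_cell ij)

lemma integrable_stepFn {m : ℕ} (c : Fin m × Fin m → ℝ) : Integrable (stepFn m c) volume := by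
  apply integrable_finset_sum
  intro ij _
  rw [integrable_indicator_iff (measurableSet_cell ij)]
  exact integrableOn_const (volume_cell_ne_top ij)

lemma integral_biUnion_stepFn {m : ℕ} (c : Fin m × Fin m → ℝ) (T : Finset (Fin m × Fin m)) :
    ∫ p in ⋃ ij ∈ T, cell m ij, stepFn m c p = ∑ ij ∈ T, c ij * (1/(m:ℝ)^2) := by
  rw [integral_biUnion_finset T (fun ij _ => measurableSet_cell ij)
    (cells_pairwise_disjoint T) (fun ij _ => (integrable_stepFn c).integrableOn)]
  refine Finset.sum_congr rfl fun ij _ => ?_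
  rw [setIntegral_congr_fun (measurableSet_cell ij) (fun p hp => stepFn_apply hp),
    setIntegral_const, measureReal_def, volume_cell_toReal, smul_eq_mul, mul_comm]

lemma integral_stepFn_eq_setIntegral {m : ℕ} (c : Fin m × Fin m → ℝ) :
    ∫ p, stepFn m c p = ∫ p in sq, stepFn m c p := by
  have h : stepFn m c = sq.indicator (stepFn m c) := by
    funext p
    by_cases hp : p ∈ sq
    · rw [Set.indicator_of_mem hp]
    · rw [Set.indicator_of_notMem hp, stepFn_apply_zero' hp]
  conv_lhs => rw [h]
  exact integral_indicator measurableSet_sq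

lemma integral_stepFn {m : ℕ} (hm : 0 < m) (c : Fin m × Fin m → ℝ) :
    ∫ p, stepFn m c p = ∑ ij : Fin m × Fin m, c ij * (1/(m:ℝ)^2) := by
  rw [integral_stepFn_eq_setIntegral, ← sq_eq_biUnion hm, integral_biUnion_stepFn]

/-! ### basic analysis facts -/

lemma mlog_zero : mlog 0 = 0 := by simp [mlog]

lemma continuous_mlog : Continuous mlog := by
  have h := Real.continuous_negMulLog.neg
  convert h using 1
  funext t
  simp [mlog, Real.negMulLog]

lemma measurable_mlog : Measurable mlog := continuous_mlog.measurable

lemma convexOn_mlog : ConvexOn ℝ (Ici (0:ℝ)) mlog := by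
  have h := Real.concaveOn_negMulLog.neg
  have e : mlog = -Real.negMulLog := by
    funext t
    simp [mlog, Real.negMulLog]
  rw [e]; exact h

lemma sub_one_le_mlog {t : ℝ} (ht : 0 ≤ t) : t - 1 ≤ mlog t := by
  rcases eq_or_lt_of_le ht with h | h
  · simp [← h, mlog]
  · have h1 : Real.log t⁻¹ ≤ t⁻¹ - 1 := Real.log_le_sub_one_of_pos (by positivity)
    rw [Real.log_inv] at h1
    have h2 : 1 - t⁻¹ ≤ Real.log t := by linarith
    have h3 := mul_le_mul_of_nonneg_left h2 (le_of_lt h)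
    calc t - 1 = t * (1 - t⁻¹) := by field_simp
    _ ≤ t * Real.log t := h3
    _ = mlog t := rfl

/-! ### permuton facts -/

lemma gamma_compl_sq {γ : Measure (ℝ × ℝ)} (hγ : IsPermuton γ) : γ sqᶜ = 0 := by
  have key : ∀ (pr : ℝ × ℝ → ℝ), Measurable pr → γ.map pr = volume.restrict (Icc (0:ℝ) 1) →
      γ (pr ⁻¹' (Ioc (0:ℝ) 1)ᶜ) = 0 := by
    intro pr hpr hmap
    have h : γ.map pr ((Ioc (0:ℝ) 1)ᶜ) = 0 := by
      rw [hmap, Measure.restrict_apply measurableSet_Ioc.compl]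
      refine measure_mono_null ?_ (Real.volume_singleton (a := (0:ℝ)))
      intro x hx
      simp only [mem_inter_iff, mem_compl_iff, mem_Ioc, mem_Icc] at hx
      simp only [mem_singleton_iff]
      by_contra hne
      exact hx.1 ⟨lt_of_le_of_ne hx.2.1 (Ne.symm hne), hx.2.2⟩
    rwa [Measure.map_apply hpr measurableSet_Ioc.compl] at h
  have hfst := key Prod.fst measurable_fst hγ.2.1
  have hsnd := key Prod.snd measurable_snd hγ.2.2
  refine measure_mono_null ?_ (measure_union_null hfst hsnd)
  intro p hp
  simp only [sq, mem_compl_iff, mem_prod] at hp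
  rcases not_and_or.1 hp with h | h
  · exact Or.inl h
  · exact Or.inr h

lemma gamma_sq {γ : Measure (ℝ × ℝ)} (hγ : IsPermuton γ) : γ sq = 1 := by
  haveI := hγ.1
  exact (prob_compl_eq_zero_iff measurableSet_sq).1 (gamma_compl_sq hγ)

lemma cco_eq (γ : Measure (ℝ × ℝ)) {m : ℕ} (ij : Fin m × Fin m) :
    cco γ m ij = (m:ℝ)^2 * (γ (cell m ij)).toReal := by
  rw [cco, ENNReal.toReal_mul, ENNReal.toReal_pow, ENNReal.toReal_natCast]

lemma measurable_fden (γ : Measure (ℝ × ℝ)) (m : ℕ) : Measurable (fden γ m) := by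
  apply Finset.measurable_sum
  intro i _
  apply Finset.measurable_sum
  intro j _
  exact measurable_const.indicator (measurableSet_cell (i, j))

lemma measurable_gm (γ : Measure (ℝ × ℝ)) (m : ℕ) : Measurable (gm γ m) :=
  (measurable_fden γ m).ennreal_toReal

lemma measurable_gR (γ : Measure (ℝ × ℝ)) : Measurable (gR γ) :=
  (Measure.measurable_rnDeriv γ volume).ennreal_toReal

lemma integrable_gm (γ : Measure (ℝ × ℝ)) (m : ℕ) : Integrable (gm γ m) volume := by
  have h : gm γ m = stepFn m (cco γ m) := funext (gm_eq_stepFn γ m)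
  rw [h]
  exact integrable_stepFn _

lemma mlog_gm_eq (γ : Measure (ℝ × ℝ)) (m : ℕ) (p : ℝ × ℝ) :
    mlog (gm γ m p) = stepFn m (fun ij => mlog (cco γ m ij)) p := by
  rw [gm_eq_stepFn, comp_stepFn mlog_zero]

lemma integrable_mlog_gm (γ : Measure (ℝ × ℝ)) (m : ℕ) :
    Integrable (fun p => mlog (gm γ m p)) volume := by
  have h : (fun p => mlog (gm γ m p)) = stepFn m (fun ij => mlog (cco γ m ij)) :=
    funext (mlog_gm_eq γ m)
  rw [h]
  exact integrable_stepFn _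

lemma dI_eq_sum (γ : Measure (ℝ × ℝ)) {m : ℕ} (hm : 0 < m) :
    dI γ m = ∑ ij : Fin m × Fin m, mlog (cco γ m ij) * (1/(m:ℝ)^2) := by
  rw [dI]
  have h : (fun p => mlog (gm γ m p)) = stepFn m (fun ij => mlog (cco γ m ij)) :=
    funext (mlog_gm_eq γ m)
  rw [h, integral_stepFn hm]

lemma dI_eq_setIntegral (γ : Measure (ℝ × ℝ)) (m : ℕ) :
    dI γ m = ∫ p in sq, mlog (gm γ m p) := by
  rw [dI]
  have h : (fun p => mlog (gm γ m p)) = stepFn m (fun ij => mlog (cco γ m ij)) :=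
    funext (mlog_gm_eq γ m)
  rw [h, integral_stepFn_eq_setIntegral]

/-! ### the entropy formula for step permutons -/

lemma step_ac (γ : Measure (ℝ × ℝ)) (m : ℕ) : stepPermuton γ m ≪ volume :=
  withDensity_absolutelyContinuous _ _

lemma rnDeriv_step (γ : Measure (ℝ × ℝ)) (m : ℕ) :
    (stepPermuton γ m).rnDeriv volume =ᵐ[volume] fden γ m :=
  Measure.rnDeriv_withDensity volume (measurable_fden γ m)

lemma entropy_step_eq (γ : Measure (ℝ × ℝ)) (m : ℕ) :
    permutonEntropy (stepPermuton γ m) = ((-(dI γ m) : ℝ) : EReal) := by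
  have hae : (fun p => ((stepPermuton γ m).rnDeriv volume p).toReal *
      Real.log ((stepPermuton γ m).rnDeriv volume p).toReal)
      =ᵐ[volume] (fun p => mlog (gm γ m p)) := by
    filter_upwards [rnDeriv_step γ m] with p hp
    rw [mlog, gm, hp]
  have hint : Integrable (fun p => ((stepPermuton γ m).rnDeriv volume p).toReal *
      Real.log ((stepPermuton γ m).rnDeriv volume p).toReal) volume :=
    (integrable_mlog_gm γ m).congr hae.symm
  rw [permutonEntropy, if_pos ⟨step_ac γ m, hint⟩]
  have hval : (∫ p, -(((stepPermuton γ m).rnDeriv volume p).toReal *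
      Real.log ((stepPermuton γ m).rnDeriv volume p).toReal)) = -(dI γ m) := by
    rw [integral_neg]
    congr 1
    exact integral_congr_ae hae
  rw [hval]

/-! ### facts about the density of γ -/

lemma integrable_gR {γ : Measure (ℝ × ℝ)} (hγ : IsPermuton γ) : Integrable (gR γ) volume := by
  haveI := hγ.1
  exact Measure.integrable_toReal_rnDeriv

lemma setIntegral_gR {γ : Measure (ℝ × ℝ)} (hγ : IsPermuton γ) (hac : γ ≪ volume)
    (s : Set (ℝ × ℝ)) : ∫ p in s, gR γ p = (γ s).toReal := by
  haveI := hγ.1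
  exact Measure.setIntegral_toReal_rnDeriv hac s

lemma gR_ae_zero {γ : Measure (ℝ × ℝ)} (hγ : IsPermuton γ) (hac : γ ≪ volume) :
    ∀ᵐ p ∂volume, p ∉ sq → gR γ p = 0 := by
  haveI := hγ.1
  have h0 : ∫⁻ p in sqᶜ, γ.rnDeriv volume p ∂volume = 0 := by
    rw [Measure.setLIntegral_rnDeriv hac]
    exact gamma_compl_sq hγ
  have h1 : ∀ᵐ p ∂(volume.restrict sqᶜ), γ.rnDeriv volume p = 0 :=
    (lintegral_eq_zero_iff (Measure.measurable_rnDeriv γ volume)).1 h0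
  rw [ae_restrict_iff' measurableSet_sq.compl] at h1
  filter_upwards [h1] with p hp hps
  rw [gR, hp hps, ENNReal.toReal_zero]

lemma integral_mlog_gR_eq {γ : Measure (ℝ × ℝ)} (hγ : IsPermuton γ) (hac : γ ≪ volume) :
    ∫ p, mlog (gR γ p) = ∫ p in sq, mlog (gR γ p) := by
  have h1 : ∫ p, Set.indicator sq (fun q => mlog (gR γ q)) p = ∫ p in sq, mlog (gR γ p) :=
    integral_indicator measurableSet_sq
  rw [← h1]
  refine integral_congr_ae ?_
  filter_upwards [gR_ae_zero hγ hac] with p hp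
  by_cases hps : p ∈ sq
  · exact (Set.indicator_of_mem hps (fun q => mlog (gR γ q))).symm
  · rw [Set.indicator_of_notMem hps, hp hps, mlog_zero]

lemma setIntegral_gR_sq {γ : Measure (ℝ × ℝ)} (hγ : IsPermuton γ) (hac : γ ≪ volume) :
    ∫ p in sq, gR γ p = 1 := by
  rw [setIntegral_gR hγ hac, gamma_sq hγ, ENNReal.toReal_one]

lemma integral_gm_biUnion {γ : Measure (ℝ × ℝ)} (hγ : IsPermuton γ) {m : ℕ}
    (T : Finset (Fin m × Fin m)) :
    ∫ p in ⋃ ij ∈ T, cell m ij, gm γ m p = (γ (⋃ ij ∈ T, cell m ij)).toReal := by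
  haveI := hγ.1
  have hfun : gm γ m = stepFn m (cco γ m) := funext (gm_eq_stepFn γ m)
  rw [hfun, integral_biUnion_stepFn,
    measure_biUnion_finset (cells_pairwise_disjoint T) (fun ij _ => measurableSet_cell ij),
    ENNReal.toReal_sum (fun ij _ => measure_ne_top γ _)]
  refine Finset.sum_congr rfl fun ij _ => ?_
  rw [cco_eq]
  have hm : ((m:ℝ))^2 ≠ 0 := by
    have : (0:ℝ) < m := by exact_mod_cast ij.1.pos
    positivity
  field_simp
  exact mul_div_cancel_left₀ _ (Nat.cast_ne_zero.2 ij.1.pos.ne')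

lemma integral_gm_sq {γ : Measure (ℝ × ℝ)} (hγ : IsPermuton γ) {m : ℕ} (hm : 0 < m) :
    ∫ p in sq, gm γ m p = 1 := by
  rw [← sq_eq_biUnion hm, integral_gm_biUnion hγ, sq_eq_biUnion hm, gamma_sq hγ,
    ENNReal.toReal_one]

lemma dI_nonneg {γ : Measure (ℝ × ℝ)} (hγ : IsPermuton γ) {m : ℕ} (hm : 0 < m) :
    0 ≤ dI γ m := by
  rw [dI_eq_setIntegral]
  have h1 : ∫ p in sq, (gm γ m p - 1) ≤ ∫ p in sq, mlog (gm γ m p) := by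
    refine integral_mono ((integrable_gm γ m).integrableOn.sub (integrableOn_const
      (by rw [volume_sq]; exact ENNReal.one_ne_top))) (integrable_mlog_gm γ m).integrableOn
      fun p => sub_one_le_mlog ENNReal.toReal_nonneg
  have h2 : ∫ p in sq, (gm γ m p - 1 : ℝ) = 0 := by
    rw [integral_sub (integrable_gm γ m).integrableOn (integrableOn_const
      (by rw [volume_sq]; exact ENNReal.one_ne_top)), integral_gm_sq hγ hm,
      setIntegral_const, measureReal_def, volume_sq, ENNReal.toReal_one, one_smul, sub_self]
  linarith

/-! ### Jensen's inequality per cell -/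

lemma jensen_core {γ : Measure (ℝ × ℝ)} (hγ : IsPermuton γ) {s : Set (ℝ × ℝ)}
    (hs : MeasurableSet s) (hvpos : 0 < volume s) (hvne : volume s ≠ ∞)
    {f : ℝ × ℝ → ℝ} (hf : ∀ p, 0 ≤ f p) (hfi : IntegrableOn f s volume)
    (hgi : IntegrableOn (fun p => mlog (f p)) s volume) :
    (volume s).toReal * mlog ((∫ p in s, f p) / (volume s).toReal)
      ≤ ∫ p in s, mlog (f p) := by
  haveI : IsFiniteMeasure (volume.restrict s) :=
    ⟨by rw [Measure.restrict_apply_univ]; exact hvne.lt_top⟩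
  haveI : NeZero (volume.restrict s) := by
    refine ⟨fun h => ?_⟩
    have := congrArg (fun μ : Measure (ℝ×ℝ) => μ Set.univ) h
    simp only [Measure.restrict_apply_univ, Measure.coe_zero, Pi.zero_apply] at this
    exact hvpos.ne' this
  have hJ := convexOn_mlog.map_average_le continuous_mlog.continuousOn isClosed_Ici
    (ae_of_all _ fun p => hf p) hfi hgi
  rw [average_eq, average_eq, measureReal_restrict_apply_univ, measureReal_def, smul_eq_mul, smul_eq_mul] at hJ
  have hvr : 0 < (volume s).toReal := ENNReal.toReal_pos hvpos.ne' hvne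
  have h2 := mul_le_mul_of_nonneg_left hJ (le_of_lt hvr)
  calc (volume s).toReal * mlog ((∫ p in s, f p) / (volume s).toReal)
      = (volume s).toReal * mlog ((volume s).toReal⁻¹ * ∫ p in s, f p) := by
        rw [div_eq_inv_mul]
    _ ≤ (volume s).toReal * ((volume s).toReal⁻¹ * ∫ p in s, mlog (f p)) := h2
    _ = ∫ p in s, mlog (f p) := by field_simp

lemma jensen_cell {γ : Measure (ℝ × ℝ)} (hγ : IsPermuton γ) (hac : γ ≪ volume)
    (hgi : Integrable (fun p => mlog (gR γ p)) volume) {m : ℕ} (ij : Fin m × Fin m) :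
    mlog (cco γ m ij) * (1/(m:ℝ)^2) ≤ ∫ p in cell m ij, mlog (gR γ p) := by
  have hm : (0:ℝ) < m := by exact_mod_cast ij.1.pos
  have h := jensen_core hγ (measurableSet_cell ij) (volume_cell_pos ij) (volume_cell_ne_top ij)
    (f := gR γ) (fun p => ENNReal.toReal_nonneg) (integrable_gR hγ).integrableOn
    hgi.integrableOn
  rw [volume_cell_toReal, setIntegral_gR hγ hac] at h
  have harg : ((γ (cell m ij)).toReal) / (1/(m:ℝ)^2) = cco γ m ij := by
    rw [cco_eq]
    field_simp
  rw [harg] at h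
  calc mlog (cco γ m ij) * (1/(m:ℝ)^2) = (1/(m:ℝ)^2) * mlog (cco γ m ij) := by ring
  _ ≤ ∫ p in cell m ij, mlog (gR γ p) := h

lemma dI_le {γ : Measure (ℝ × ℝ)} (hγ : IsPermuton γ) (hac : γ ≪ volume)
    (hgi : Integrable (fun p => mlog (gR γ p)) volume) {m : ℕ} (hm : 0 < m) :
    dI γ m ≤ ∫ p in sq, mlog (gR γ p) := by
  rw [dI_eq_sum γ hm, ← sq_eq_biUnion hm,
    integral_biUnion_finset _ (fun ij _ => measurableSet_cell ij) (cells_pairwise_disjoint _)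
      (fun ij _ => hgi.integrableOn)]
  exact Finset.sum_le_sum fun ij _ => jensen_cell hγ hac hgi ij

/-! ### Fatou machinery -/

lemma tendsto_toReal_of_liminf {f : ℕ → ℝ≥0∞} {B : ℝ≥0∞} (hB : B ≠ ⊤)
    (h1 : ∀ᶠ k in atTop, f k ≤ B) (h2 : B ≤ liminf f atTop) :
    Tendsto (fun k => (f k).toReal) atTop (nhds B.toReal) := by
  have hsup : limsup f atTop ≤ B := limsup_le_of_le (by isBoundedDefault) h1
  have hinf : liminf f atTop ≤ limsup f atTop := liminf_le_limsup
  have heq1 : liminf f atTop = B := le_antisymm (hinf.trans hsup) h2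
  have heq2 : limsup f atTop = B := le_antisymm hsup (h2.trans hinf)
  exact (ENNReal.tendsto_toReal hB).comp (tendsto_of_liminf_eq_limsup heq1 heq2)

def FF (γ : Measure (ℝ × ℝ)) (m : ℕ) (p : ℝ × ℝ) : ℝ := mlog (gm γ m p) - gm γ m p + 1

def FR (γ : Measure (ℝ × ℝ)) (p : ℝ × ℝ) : ℝ := mlog (gR γ p) - gR γ p + 1

lemma FF_nonneg (γ : Measure (ℝ × ℝ)) (m : ℕ) (p : ℝ × ℝ) : 0 ≤ FF γ m p := by
  have := sub_one_le_mlog (t := gm γ m p) ENNReal.toReal_nonneg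
  rw [FF]; linarith

lemma FR_nonneg (γ : Measure (ℝ × ℝ)) (p : ℝ × ℝ) : 0 ≤ FR γ p := by
  have := sub_one_le_mlog (t := gR γ p) ENNReal.toReal_nonneg
  rw [FR]; linarith

lemma measurable_FR (γ : Measure (ℝ × ℝ)) : Measurable (FR γ) :=
  ((measurable_mlog.comp (measurable_gR γ)).sub (measurable_gR γ)).add measurable_const

lemma measurable_FF (γ : Measure (ℝ × ℝ)) (m : ℕ) : Measurable (FF γ m) :=
  ((measurable_mlog.comp (measurable_gm γ m)).sub (measurable_gm γ m)).add measurable_const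

lemma integrableOn_const_sq {c : ℝ} : IntegrableOn (fun _ : ℝ × ℝ => c) sq volume :=
  integrableOn_const (by rw [volume_sq]; exact ENNReal.one_ne_top)

lemma integrableOn_FF (γ : Measure (ℝ × ℝ)) (m : ℕ) : IntegrableOn (FF γ m) sq volume :=
  ((integrable_mlog_gm γ m).integrableOn.sub (integrable_gm γ m).integrableOn).add
    integrableOn_const_sq

lemma setIntegral_FF {γ : Measure (ℝ × ℝ)} (hγ : IsPermuton γ) {m : ℕ} (hm : 0 < m) :
    ∫ p in sq, FF γ m p = dI γ m := by
  have h1 : ∫ p in sq, FF γ m p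
      = (∫ p in sq, (mlog (gm γ m p) - gm γ m p)) + ∫ p in sq, (1:ℝ) :=
    integral_add ((integrable_mlog_gm γ m).integrableOn.sub (integrable_gm γ m).integrableOn)
      integrableOn_const_sq
  have h2 : ∫ p in sq, (mlog (gm γ m p) - gm γ m p)
      = (∫ p in sq, mlog (gm γ m p)) - ∫ p in sq, gm γ m p :=
    integral_sub (integrable_mlog_gm γ m).integrableOn (integrable_gm γ m).integrableOn
  rw [h1, h2, integral_gm_sq hγ hm, setIntegral_const, measureReal_def, volume_sq, ENNReal.toReal_one, one_smul,
    dI_eq_setIntegral]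
  ring

lemma lint_FF {γ : Measure (ℝ × ℝ)} (hγ : IsPermuton γ) {m : ℕ} (hm : 0 < m) :
    ∫⁻ p in sq, ENNReal.ofReal (FF γ m p) = ENNReal.ofReal (dI γ m) := by
  rw [← ofReal_integral_eq_lintegral_ofReal (integrableOn_FF γ m)
    (ae_of_all _ fun p => FF_nonneg γ m p), setIntegral_FF hγ hm]

/-- Fatou's lemma along an a.e. convergent subsequence. -/
lemma fatou_liminf {γ : Measure (ℝ × ℝ)} (ns : ℕ → ℕ)
    (hae : ∀ᵐ p ∂(volume.restrict sq),
      Tendsto (fun k => gm γ (ns k) p) atTop (nhds (gR γ p))) :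
    ∫⁻ p in sq, ENNReal.ofReal (FR γ p)
      ≤ liminf (fun k => ∫⁻ p in sq, ENNReal.ofReal (FF γ (ns k) p)) atTop := by
  have hFae : ∀ᵐ p ∂(volume.restrict sq),
      ENNReal.ofReal (FR γ p)
        = liminf (fun k => ENNReal.ofReal (FF γ (ns k) p)) atTop := by
    filter_upwards [hae] with p hp
    have h1 : Tendsto (fun k => FF γ (ns k) p) atTop (nhds (FR γ p)) := by
      have hmlog : Tendsto (fun k => mlog (gm γ (ns k) p)) atTop (nhds (mlog (gR γ p))) :=
        (continuous_mlog.tendsto _).comp hp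
      simpa [FF, FR] using (hmlog.sub hp).add tendsto_const_nhds
    exact ((ENNReal.continuous_ofReal.tendsto _).comp h1).liminf_eq.symm
  calc ∫⁻ p in sq, ENNReal.ofReal (FR γ p)
      = ∫⁻ p in sq, liminf (fun k => ENNReal.ofReal (FF γ (ns k) p)) atTop :=
        lintegral_congr_ae hFae
    _ ≤ liminf (fun k => ∫⁻ p in sq, ENNReal.ofReal (FF γ (ns k) p)) atTop :=
        lintegral_liminf_le' fun k => ((measurable_FF γ (ns k)).ennreal_ofReal).aemeasurable

lemma integrableOn_FR_sq {γ : Measure (ℝ × ℝ)} (hγ : IsPermuton γ)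
    (hgi : Integrable (fun p => mlog (gR γ p)) volume) : IntegrableOn (FR γ) sq volume :=
  (hgi.integrableOn.sub (integrable_gR hγ).integrableOn).add integrableOn_const_sq

lemma setIntegral_FR {γ : Measure (ℝ × ℝ)} (hγ : IsPermuton γ) (hac : γ ≪ volume)
    (hgi : Integrable (fun p => mlog (gR γ p)) volume) :
    ∫ p in sq, FR γ p = ∫ p, mlog (gR γ p) := by
  have h1 : ∫ p in sq, FR γ p
      = (∫ p in sq, (mlog (gR γ p) - gR γ p)) + ∫ p in sq, (1:ℝ) :=
    integral_add (hgi.integrableOn.sub (integrable_gR hγ).integrableOn) integrableOn_const_sq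
  have h2 : ∫ p in sq, (mlog (gR γ p) - gR γ p)
      = (∫ p in sq, mlog (gR γ p)) - ∫ p in sq, gR γ p :=
    integral_sub hgi.integrableOn (integrable_gR hγ).integrableOn
  rw [h1, h2, setIntegral_gR_sq hγ hac, setIntegral_const, measureReal_def, volume_sq, ENNReal.toReal_one,
    one_smul, integral_mlog_gR_eq hγ hac]
  ring

lemma integral_mlog_gR_nonneg {γ : Measure (ℝ × ℝ)} (hγ : IsPermuton γ) (hac : γ ≪ volume)
    (hgi : Integrable (fun p => mlog (gR γ p)) volume) : 0 ≤ ∫ p, mlog (gR γ p) := by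
  rw [← setIntegral_FR hγ hac hgi]
  exact integral_nonneg fun p => FR_nonneg γ p

/-- Case (i) along an a.e.-convergent subsequence. -/
lemma tendsto_dI_subseq_int {γ : Measure (ℝ × ℝ)} (hγ : IsPermuton γ) (hac : γ ≪ volume)
    (hgi : Integrable (fun p => mlog (gR γ p)) volume)
    (ns : ℕ → ℕ) (hns : Tendsto ns atTop atTop)
    (hae : ∀ᵐ p ∂(volume.restrict sq),
      Tendsto (fun k => gm γ (ns k) p) atTop (nhds (gR γ p))) :
    Tendsto (fun k => dI γ (ns k)) atTop (nhds (∫ p, mlog (gR γ p))) := by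
  set B : ℝ≥0∞ := ∫⁻ p in sq, ENNReal.ofReal (FR γ p) with hBdef
  set u : ℕ → ℝ≥0∞ := fun k => ∫⁻ p in sq, ENNReal.ofReal (FF γ (ns k) p) with hudef
  have hBval : B = ENNReal.ofReal (∫ p, mlog (gR γ p)) := by
    rw [hBdef, ← ofReal_integral_eq_lintegral_ofReal (integrableOn_FR_sq hγ hgi)
      (ae_of_all _ fun p => FR_nonneg γ p), setIntegral_FR hγ hac hgi]
  have hpos : ∀ᶠ k in atTop, 0 < ns k := hns.eventually_gt_atTop 0
  have hB_ne : B ≠ ⊤ := by rw [hBval]; exact ENNReal.ofReal_ne_top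
  have h1 : ∀ᶠ k in atTop, u k ≤ B := by
    filter_upwards [hpos] with k hk
    rw [hudef, hBval]
    simp only []
    rw [lint_FF hγ hk]
    exact ENNReal.ofReal_le_ofReal ((dI_le hγ hac hgi hk).trans_eq
      (integral_mlog_gR_eq hγ hac).symm)
  have h2 : B ≤ liminf u atTop := fatou_liminf ns hae
  have h3 := tendsto_toReal_of_liminf hB_ne h1 h2
  have h4 : ∀ᶠ k in atTop, (u k).toReal = dI γ (ns k) := by
    filter_upwards [hpos] with k hk
    rw [hudef]
    simp only []
    rw [lint_FF hγ hk, ENNReal.toReal_ofReal (dI_nonneg hγ hk)]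
  have hBtr : B.toReal = ∫ p, mlog (gR γ p) := by
    rw [hBval, ENNReal.toReal_ofReal (integral_mlog_gR_nonneg hγ hac hgi)]
  rw [← hBtr]
  exact h3.congr' h4

/-- Case (ii) along an a.e.-convergent subsequence. -/
lemma tendsto_dI_subseq_nonint {γ : Measure (ℝ × ℝ)} (hγ : IsPermuton γ) (hac : γ ≪ volume)
    (hni : ¬ Integrable (fun p => mlog (gR γ p)) volume)
    (ns : ℕ → ℕ) (hns : Tendsto ns atTop atTop)
    (hae : ∀ᵐ p ∂(volume.restrict sq),
      Tendsto (fun k => gm γ (ns k) p) atTop (nhds (gR γ p))) :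
    Tendsto (fun k => dI γ (ns k)) atTop atTop := by
  set B : ℝ≥0∞ := ∫⁻ p in sq, ENNReal.ofReal (FR γ p) with hBdef
  set u : ℕ → ℝ≥0∞ := fun k => ∫⁻ p in sq, ENNReal.ofReal (FF γ (ns k) p) with hudef
  have hpos : ∀ᶠ k in atTop, 0 < ns k := hns.eventually_gt_atTop 0
  have hBtop : B = ⊤ := by
    by_contra hB
    have hFRfin : IntegrableOn (FR γ) sq volume := by
      refine ⟨(measurable_FR γ).aestronglyMeasurable, ?_⟩
      rw [hasFiniteIntegral_iff_norm]
      have : ∀ p, ENNReal.ofReal ‖FR γ p‖ = ENNReal.ofReal (FR γ p) := fun p => by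
        rw [Real.norm_eq_abs, abs_of_nonneg (FR_nonneg γ p)]
      calc ∫⁻ p in sq, ENNReal.ofReal ‖FR γ p‖ = ∫⁻ p in sq, ENNReal.ofReal (FR γ p) := by
            refine lintegral_congr fun p => by rw [this p]
        _ < ⊤ := lt_top_iff_ne_top.2 hB
    have hmlogint : IntegrableOn (fun p => mlog (gR γ p)) sq volume := by
      have heq : (fun p => mlog (gR γ p)) = fun p => FR γ p + gR γ p - 1 := by
        funext p; rw [FR]; ring
      rw [heq]
      exact (hFRfin.add (integrable_gR hγ).integrableOn).sub integrableOn_const_sq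
    apply hni
    have hglob : Integrable (sq.indicator fun p => mlog (gR γ p)) volume :=
      (integrable_indicator_iff measurableSet_sq).2 hmlogint
    refine hglob.congr ?_
    filter_upwards [gR_ae_zero hγ hac] with p hp
    by_cases hps : p ∈ sq
    · exact Set.indicator_of_mem hps _
    · rw [Set.indicator_of_notMem hps, hp hps, mlog_zero]
  have h2 : (⊤:ℝ≥0∞) ≤ liminf u atTop := by
    have := fatou_liminf ns hae
    rw [← hBdef, hBtop] at this
    exact this
  rw [tendsto_atTop]
  intro b
  have hev : ∀ᶠ k in atTop, ENNReal.ofReal b < u k :=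
    eventually_lt_of_lt_liminf (lt_of_lt_of_le ENNReal.ofReal_lt_top (top_le_iff.1 h2).ge)
  filter_upwards [hev, hpos] with k hk hk1
  have huk : u k = ENNReal.ofReal (dI γ (ns k)) := by
    rw [hudef]; simp only []; exact lint_FF hγ hk1
  rw [huk] at hk
  by_cases hb : 0 ≤ b
  · exact le_of_lt ((ENNReal.ofReal_lt_ofReal_iff_of_nonneg hb).1 hk)
  · exact (dI_nonneg hγ hk1).trans' (le_of_lt (not_le.1 hb))

/-! ### L¹ convergence of the step densities -/

def avgc (h : ℝ × ℝ → ℝ) (m : ℕ) (ij : Fin m × Fin m) : ℝ :=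
  (m:ℝ)^2 * ∫ p in cell m ij, h p

lemma integrableOn_const_cell {m : ℕ} (ij : Fin m × Fin m) {c : ℝ} :
    IntegrableOn (fun _ : ℝ × ℝ => c) (cell m ij) volume :=
  integrableOn_const (volume_cell_ne_top ij)

lemma abs_setIntegral_le {f : ℝ × ℝ → ℝ} {s : Set (ℝ × ℝ)} :
    |∫ p in s, f p| ≤ ∫ p in s, |f p| := by
  have := norm_integral_le_integral_norm (μ := volume.restrict s) f
  simpa [Real.norm_eq_abs] using this

lemma step_contraction {f1 f2 : ℝ × ℝ → ℝ} (h1 : Integrable f1 volume)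
    (h2 : Integrable f2 volume) {m : ℕ} (hm : 0 < m) :
    ∫ p in sq, |stepFn m (avgc f1 m) p - stepFn m (avgc f2 m) p|
      ≤ ∫ p in sq, |f1 p - f2 p| := by
  have habs : (fun p => |stepFn m (avgc f1 m) p - stepFn m (avgc f2 m) p|)
      = stepFn m (fun ij => |avgc f1 m ij - avgc f2 m ij|) :=
    funext fun p => abs_sub_stepFn _ _ p
  rw [habs, ← integral_stepFn_eq_setIntegral, integral_stepFn hm]
  have hi : Integrable (fun p => |f1 p - f2 p|) volume := (h1.sub h2).abs
  have hsplit : ∫ p in sq, |f1 p - f2 p|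
      = ∑ ij : Fin m × Fin m, ∫ p in cell m ij, |f1 p - f2 p| := by
    rw [← sq_eq_biUnion hm, integral_biUnion_finset _ (fun ij _ => measurableSet_cell ij)
      (cells_pairwise_disjoint _) (fun ij _ => hi.integrableOn)]
  rw [hsplit]
  refine Finset.sum_le_sum fun ij _ => ?_
  have hm2 : (0:ℝ) < (m:ℝ)^2 := by
    have : (0:ℝ) < m := by exact_mod_cast ij.1.pos
    positivity
  have hval : |avgc f1 m ij - avgc f2 m ij| * (1/(m:ℝ)^2)
      = |∫ p in cell m ij, (f1 p - f2 p)| := by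
    rw [avgc, avgc, ← mul_sub, abs_mul, abs_of_pos hm2,
      integral_sub h1.integrableOn h2.integrableOn]
    field_simp
  rw [hval]
  exact abs_setIntegral_le.trans (le_of_eq (by
    refine integral_congr_ae (ae_of_all _ fun p => rfl)))

lemma dist_lt_of_mem_cell {m : ℕ} {ij : Fin m × Fin m} {p q : ℝ × ℝ}
    (hp : p ∈ cell m ij) (hq : q ∈ cell m ij) : dist q p < 1/(m:ℝ) := by
  have hm : (0:ℝ) < m := by exact_mod_cast ij.1.pos
  have key : ∀ (a : ℝ) (x y : ℝ), x ∈ Ioc a (a + 1/(m:ℝ)) → y ∈ Ioc a (a + 1/(m:ℝ)) →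
      |x - y| < 1/(m:ℝ) := by
    intro a x y hx hy
    rw [abs_sub_lt_iff]
    constructor
    · have := hx.2; have := hy.1; linarith
    · have := hy.2; have := hx.1; linarith
  have hIoc : ∀ (i : Fin m), Ioc ((i:ℕ):ℝ) (((i:ℕ):ℝ)+1) = Ioc ((i:ℕ):ℝ) (((i:ℕ):ℝ)+1) := fun _ => rfl
  have h1 : |q.1 - p.1| < 1/(m:ℝ) := by
    have e : (((ij.1:ℕ)+1:ℝ))/m = ((ij.1:ℕ):ℝ)/m + 1/(m:ℝ) := by field_simp
    refine key (((ij.1:ℕ):ℝ)/m) _ _ ?_ ?_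
    · rw [← e]; exact hq.1
    · rw [← e]; exact hp.1
  have h2 : |q.2 - p.2| < 1/(m:ℝ) := by
    have e : (((ij.2:ℕ)+1:ℝ))/m = ((ij.2:ℕ):ℝ)/m + 1/(m:ℝ) := by field_simp
    refine key (((ij.2:ℕ):ℝ)/m) _ _ ?_ ?_
    · rw [← e]; exact hq.2
    · rw [← e]; exact hp.2
  rw [Prod.dist_eq]
  rw [Real.dist_eq, Real.dist_eq]
  exact max_lt h1 h2

lemma step_approx_cont {h : ℝ × ℝ → ℝ} (hint : Integrable h volume)
    {ε δ : ℝ} (hε : 0 < ε) (hδ : 0 < δ)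
    (hu : ∀ x y : ℝ × ℝ, dist x y < δ → |h x - h y| < ε)
    {m : ℕ} (hm : 0 < m) (hmδ : 1/(m:ℝ) < δ) :
    ∀ p ∈ sq, |stepFn m (avgc h m) p - h p| ≤ ε := by
  intro p hp
  obtain ⟨ij, hij⟩ := exists_cell_mem hm hp
  rw [stepFn_apply hij, avgc]
  have hm' : (0:ℝ) < m := by exact_mod_cast hm
  have hm2 : ((m:ℝ))^2 ≠ 0 := by positivity
  have h1 : (m:ℝ)^2 * (∫ q in cell m ij, h q) - h p
      = (m:ℝ)^2 * ∫ q in cell m ij, (h q - h p) := by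
    rw [integral_sub hint.integrableOn (integrableOn_const_cell ij), setIntegral_const, measureReal_def,
      volume_cell_toReal, smul_eq_mul]
    field_simp
  rw [h1, abs_mul, abs_of_nonneg (by positivity : (0:ℝ) ≤ (m:ℝ)^2)]
  have h2 : |∫ q in cell m ij, (h q - h p)| ≤ ε * (1/(m:ℝ)^2) := by
    refine abs_setIntegral_le.trans ?_
    have h3 : ∫ q in cell m ij, |h q - h p| ≤ ∫ _ in cell m ij, ε := by
      have hi2 : IntegrableOn (fun q => |h q - h p|) (cell m ij) volume :=
        (hint.integrableOn.sub (integrableOn_const_cell ij)).abs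
      refine setIntegral_mono_on hi2
        (integrableOn_const_cell ij) (measurableSet_cell ij) fun q hq => ?_
      exact le_of_lt (hu q p ((dist_lt_of_mem_cell hij hq).trans hmδ))
    refine h3.trans (le_of_eq ?_)
    rw [setIntegral_const, measureReal_def, volume_cell_toReal, smul_eq_mul, mul_comm]
  calc (m:ℝ)^2 * |∫ q in cell m ij, (h q - h p)| ≤ (m:ℝ)^2 * (ε * (1/(m:ℝ)^2)) :=
        mul_le_mul_of_nonneg_left h2 (by positivity)
    _ = ε := by field_simp

/-! ### Case (iii): singular part forces divergence -/

lemma tendsto_dI_sing {γ : Measure (ℝ × ℝ)} (hγ : IsPermuton γ) (hnac : ¬ γ ≪ volume) :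
    Tendsto (fun m => dI γ m) atTop atTop := by
  haveI := hγ.1
  set ν := γ.singularPart volume with hνdef
  have hνγ : ν ≤ γ := Measure.singularPart_le γ volume
  haveI : IsFiniteMeasure ν :=
    ⟨lt_of_le_of_lt (hνγ Set.univ) (measure_lt_top γ Set.univ)⟩
  have hν0 : ν ≠ 0 := fun h => hnac ((Measure.singularPart_eq_zero γ volume).1 h)
  set α : ℝ≥0∞ := ν Set.univ with hαdef
  have hαpos : 0 < α := by
    rw [hαdef, pos_iff_ne_zero]
    intro h
    exact hν0 (Measure.measure_univ_eq_zero.1 h)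
  have hαfin : α ≠ ⊤ := measure_ne_top ν _
  have hα2fin : α/2 ≠ ⊤ := by
    intro h
    exact hαfin (by simpa using (ENNReal.div_eq_top.1 h))
  have hα2pos : (0:ℝ≥0∞) < α/2 := ENNReal.div_pos hαpos.ne' (by norm_num)
  obtain ⟨s0, hs0m, hνs0, hvs0c⟩ := Measure.mutuallySingular_singularPart γ volume
  set β : ℝ := α.toReal / 2 with hβdef
  have hβpos : 0 < β := by
    rw [hβdef]
    have := ENNReal.toReal_pos hαpos.ne' hαfin
    linarith
  have hβeq : β = (α/2).toReal := by rw [hβdef, ENNReal.toReal_div]; norm_num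
  rw [tendsto_atTop]
  intro C
  set C' : ℝ := max C 0 with hC'def
  have hC'0 : 0 ≤ C' := le_max_right C 0
  set ε : ℝ := β * Real.exp (-(C' + 1)/β) with hεdef
  have hεpos : 0 < ε := by
    rw [hεdef]; positivity
  have hεβ : ε ≤ β := by
    rw [hεdef]
    calc β * Real.exp (-(C' + 1)/β) ≤ β * 1 := by
          refine mul_le_mul_of_nonneg_left ?_ hβpos.le
          rw [Real.exp_le_one_iff]
          apply div_nonpos_of_nonpos_of_nonneg <;> [linarith; exact hβpos.le]
      _ = β := mul_one β
  have hS : volume s0ᶜ < ENNReal.ofReal ε := by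
    rw [hvs0c]; exact ENNReal.ofReal_pos.2 hεpos
  obtain ⟨U, hsU, hUopen, hUvol⟩ := Set.exists_isOpen_lt_of_lt _ _ hS
  have hνU : α ≤ ν U := by
    have h2 : ν s0ᶜ = α := by
      have h3 := measure_add_measure_compl (μ := ν) hs0m
      rw [hνs0, zero_add] at h3
      rw [h3]
    rw [← h2]
    exact measure_mono hsU
  obtain ⟨K, hKU, hKcomp, hKν⟩ := hUopen.measurableSet.exists_isCompact_lt_add
    (μ := ν) (measure_ne_top ν U) (ε := α/2) hα2pos.ne'
  have hKhalf : α/2 < ν K := by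
    have h4 : α/2 + α/2 < ν K + α/2 := by
      rw [ENNReal.add_halves]
      exact lt_of_le_of_lt hνU hKν
    exact (ENNReal.add_lt_add_iff_right hα2fin).1 h4
  obtain ⟨δ, hδpos, hthick⟩ := hKcomp.exists_thickening_subset_open hUopen hKU
  obtain ⟨M, hM⟩ := exists_nat_gt (1/δ)
  filter_upwards [eventually_ge_atTop (M + 1)] with m hm
  have hm0 : 0 < m := by omega
  have hm' : (0:ℝ) < m := by exact_mod_cast hm0
  have hmδ : 1/(m:ℝ) < δ := by
    rw [div_lt_iff₀ hm']
    have hMm : (1/δ : ℝ) < (m:ℝ) := by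
      refine hM.trans_le ?_
      exact_mod_cast Nat.le_of_succ_le hm
    rw [div_lt_iff₀ hδpos] at hMm
    linarith [mul_comm δ (m:ℝ)]
  classical
  set T : Finset (Fin m × Fin m) := Finset.univ.filter (fun ij => cell m ij ⊆ U) with hTdef
  set A : Set (ℝ × ℝ) := ⋃ ij ∈ T, cell m ij with hAdef
  have hAmeas : MeasurableSet A :=
    T.measurableSet_biUnion fun ij _ => measurableSet_cell ij
  have hAsubU : A ⊆ U := by
    refine iUnion₂_subset fun ij hij => ?_
    exact (Finset.mem_filter.1 hij).2
  have hAsub_sq : A ⊆ sq := iUnion₂_subset fun ij _ => cell_subset_sq ij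
  have hKA : K ∩ sq ⊆ A := by
    rintro p ⟨hpK, hpsq⟩
    obtain ⟨ij, hij⟩ := exists_cell_mem hm0 hpsq
    have hcellU : cell m ij ⊆ U := by
      refine subset_trans ?_ hthick
      intro q hq
      rw [Metric.mem_thickening_iff]
      exact ⟨p, hpK, (dist_lt_of_mem_cell hij hq).trans hmδ⟩
    exact Set.mem_biUnion (Finset.mem_filter.2 ⟨Finset.mem_univ ij, hcellU⟩) hij
  have hνsqc : ν sqᶜ = 0 :=
    le_antisymm ((hνγ sqᶜ).trans (gamma_compl_sq hγ).le) (by positivity)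
  have hνKsq : α/2 ≤ ν (K ∩ sq) := by
    have h5 : ν K ≤ ν (K ∩ sq) + ν (K \ sq) := measure_le_inter_add_diff ν K sq
    have h6 : ν (K \ sq) = 0 :=
      measure_mono_null (fun p hp => hp.2) hνsqc
    rw [h6, add_zero] at h5
    exact (hKhalf.le).trans h5
  have hγA : α/2 ≤ γ A :=
    le_trans (hνKsq.trans (measure_mono hKA)) (hνγ A)
  have hvolA_le : volume A ≤ ENNReal.ofReal ε := (measure_mono hAsubU).trans hUvol.le
  have hTne : T.Nonempty := by
    by_contra hTe
    rw [Finset.not_nonempty_iff_eq_empty] at hTe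
    have hAe : A = ∅ := by rw [hAdef, hTe]; simp
    rw [hAe, measure_empty] at hγA
    exact absurd (le_antisymm hγA (by positivity)) hα2pos.ne'
  obtain ⟨ij0, hij0⟩ := hTne
  have hvolA_pos : 0 < volume A :=
    lt_of_lt_of_le (volume_cell_pos ij0) (measure_mono (Set.subset_biUnion_of_mem (u := cell m) hij0))
  have hvolA_ne_top : volume A ≠ ⊤ := (lt_of_le_of_lt hvolA_le ENNReal.ofReal_lt_top).ne
  set a : ℝ := (γ A).toReal with hadef
  set t : ℝ := (volume A).toReal with htdef
  have hβa : β ≤ a := by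
    rw [hβeq, hadef]
    exact ENNReal.toReal_mono (measure_ne_top γ A) hγA
  have htpos : 0 < t := ENNReal.toReal_pos hvolA_pos.ne' hvolA_ne_top
  have htε : t ≤ ε := by
    rw [htdef]
    calc (volume A).toReal ≤ (ENNReal.ofReal ε).toReal :=
          ENNReal.toReal_mono ENNReal.ofReal_ne_top hvolA_le
      _ = ε := ENNReal.toReal_ofReal hεpos.le
  have hgm_int_A : ∫ p in A, gm γ m p = a := by
    rw [hAdef, integral_gm_biUnion hγ T, hadef]
  have hJ := jensen_core hγ hAmeas hvolA_pos hvolA_ne_top (f := gm γ m)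
    (fun p => ENNReal.toReal_nonneg) (integrable_gm γ m).integrableOn
    (integrable_mlog_gm γ m).integrableOn
  rw [hgm_int_A] at hJ
  have hsplit : dI γ m = (∫ p in A, mlog (gm γ m p)) + ∫ p in sq \ A, mlog (gm γ m p) := by
    rw [dI_eq_setIntegral]
    rw [← setIntegral_union disjoint_sdiff_self_right (measurableSet_sq.diff hAmeas)
      (integrable_mlog_gm γ m).integrableOn (integrable_mlog_gm γ m).integrableOn]
    rw [Set.union_diff_cancel hAsub_sq]
  have hcompl : -(1:ℝ) ≤ ∫ p in sq \ A, mlog (gm γ m p) := by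
    have hb : ∀ p : ℝ × ℝ, (-1:ℝ) ≤ mlog (gm γ m p) := fun p => by
      have h7 := sub_one_le_mlog (t := gm γ m p) ENNReal.toReal_nonneg
      have h8 : (0:ℝ) ≤ gm γ m p := ENNReal.toReal_nonneg
      linarith
    have hconst : IntegrableOn (fun _ : ℝ × ℝ => (-1:ℝ)) (sq \ A) volume := by
      refine integrableOn_const ?_
      exact (lt_of_le_of_lt (measure_mono diff_subset) (by rw [volume_sq]; exact ENNReal.one_lt_top)).ne
    have hle := integral_mono hconst (integrable_mlog_gm γ m).integrableOn (fun p => hb p)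
    have hvol_le : (volume (sq \ A)).toReal ≤ 1 := by
      have h9 : volume (sq \ A) ≤ 1 := by
        rw [← volume_sq]; exact measure_mono diff_subset
      calc (volume (sq \ A)).toReal ≤ (1:ℝ≥0∞).toReal :=
            ENNReal.toReal_mono (by norm_num) h9
        _ = 1 := by norm_num
    calc (-1:ℝ) ≤ -(volume (sq \ A)).toReal := by linarith
      _ = ∫ _ in sq \ A, (-1:ℝ) := by rw [setIntegral_const, measureReal_def, smul_eq_mul]; ring
      _ ≤ _ := hle
  have hmain : C' + 1 ≤ t * mlog (a / t) := by
    have hfrac : β / ε = Real.exp ((C'+1)/β) := by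
      rw [hεdef, neg_div, Real.exp_neg]
      field_simp
    have hlogb : Real.log (β/ε) = (C'+1)/β := by rw [hfrac, Real.log_exp]
    have heq : t * mlog (a/t) = a * Real.log (a/t) := by
      rw [mlog]
      field_simp
    have hat : β/ε ≤ a/t := div_le_div₀ (hβpos.le.trans hβa) hβa htpos htε
    have hlog1 : Real.log (β/ε) ≤ Real.log (a/t) := by
      rw [Real.log_le_log_iff (div_pos hβpos hεpos) (div_pos (hβpos.trans_le hβa) htpos)]
      exact hat
    have hlogpos : 0 ≤ Real.log (β/ε) := Real.log_nonneg ((one_le_div hεpos).2 hεβ)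
    calc C' + 1 = β * ((C'+1)/β) := by field_simp
      _ = β * Real.log (β/ε) := by rw [hlogb]
      _ ≤ a * Real.log (a/t) := mul_le_mul hβa hlog1 hlogpos (hβpos.le.trans hβa)
      _ = t * mlog (a/t) := heq.symm
  have hfinal : C' ≤ dI γ m := by
    rw [hsplit]
    linarith
  exact le_trans (le_max_left C 0) hfinal

lemma l1_tendsto {γ : Measure (ℝ × ℝ)} (hγ : IsPermuton γ) (hac : γ ≪ volume) :
    Tendsto (fun m => ∫ p in sq, |gm γ m p - gR γ p|) atTop (nhds 0) := by
  have hgint := integrable_gR hγ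
  rw [Metric.tendsto_atTop]
  intro ε hε
  obtain ⟨h, hcs, hl1, hcont, hint⟩ :=
    hgint.exists_hasCompactSupport_integral_sub_le (show (0:ℝ) < ε/4 by linarith)
  have huc : UniformContinuous h := hcs.uniformContinuous_of_continuous hcont
  obtain ⟨δ, hδpos, hδ⟩ := Metric.uniformContinuous_iff.1 huc (ε/4) (by linarith)
  obtain ⟨M, hM⟩ := exists_nat_gt (1/δ)
  refine ⟨M + 1, fun m hm => ?_⟩
  have hm0 : 0 < m := by omega
  have hm' : (0:ℝ) < m := by exact_mod_cast hm0
  have hmδ : 1/(m:ℝ) < δ := by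
    rw [div_lt_iff₀ hm']
    have hMm : (1/δ : ℝ) < (m:ℝ) := by
      refine hM.trans_le ?_
      exact_mod_cast Nat.le_of_succ_le hm
    rw [div_lt_iff₀ hδpos] at hMm
    linarith [mul_comm δ (m:ℝ)]
  set S : ℝ × ℝ → ℝ := stepFn m (avgc h m) with hSdef
  have hSint : Integrable S volume := integrable_stepFn _
  have hgm_eq : gm γ m = stepFn m (avgc (gR γ) m) := by
    have hcco : cco γ m = avgc (gR γ) m := by
      funext ij
      rw [cco_eq, avgc, setIntegral_gR hγ hac]
    rw [funext (gm_eq_stepFn γ m), hcco]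
  have hdist : dist (∫ p in sq, |gm γ m p - gR γ p|) 0 = ∫ p in sq, |gm γ m p - gR γ p| := by
    rw [Real.dist_eq, sub_zero, abs_of_nonneg]
    exact integral_nonneg fun p => abs_nonneg _
  rw [hdist]
  have htri : ∫ p in sq, |gm γ m p - gR γ p|
      ≤ (∫ p in sq, |gm γ m p - S p|) + ((∫ p in sq, |S p - h p|) + ∫ p in sq, |h p - gR γ p|) := by
    have hle : ∀ p ∈ sq, |gm γ m p - gR γ p|
        ≤ |gm γ m p - S p| + (|S p - h p| + |h p - gR γ p|) := by
      intro p _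
      calc |gm γ m p - gR γ p| ≤ |gm γ m p - S p| + |S p - gR γ p| := abs_sub_le _ _ _
      _ ≤ |gm γ m p - S p| + (|S p - h p| + |h p - gR γ p|) := by
          have := abs_sub_le (S p) (h p) (gR γ p)
          linarith
    have hA : Integrable (fun p => |gm γ m p - S p|) (volume.restrict sq) :=
      ((integrable_gm γ m).sub hSint).abs.integrableOn
    have hB : Integrable (fun p => |S p - h p|) (volume.restrict sq) :=
      (hSint.sub hint).abs.integrableOn
    have hC : Integrable (fun p => |h p - gR γ p|) (volume.restrict sq) :=
      (hint.sub hgint).abs.integrableOn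
    have h0 : Integrable (fun p => |gm γ m p - gR γ p|) (volume.restrict sq) :=
      ((integrable_gm γ m).sub hgint).abs.integrableOn
    calc ∫ p in sq, |gm γ m p - gR γ p|
        ≤ ∫ p in sq, (|gm γ m p - S p| + (|S p - h p| + |h p - gR γ p|)) :=
          setIntegral_mono_on h0 (hA.add (hB.add hC)) measurableSet_sq hle
      _ = _ := by
          have hs1 : ∫ p in sq, (|gm γ m p - S p| + (|S p - h p| + |h p - gR γ p|))
              = (∫ p in sq, |gm γ m p - S p|)
                + ∫ p in sq, (|S p - h p| + |h p - gR γ p|) := integral_add hA (hB.add hC)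
          have hs2 : ∫ p in sq, (|S p - h p| + |h p - gR γ p|)
              = (∫ p in sq, |S p - h p|) + ∫ p in sq, |h p - gR γ p| := integral_add hB hC
          rw [hs1, hs2]
  have hT1 : ∫ p in sq, |gm γ m p - S p| ≤ ε/4 := by
    rw [hgm_eq, hSdef]
    refine (step_contraction hgint hint hm0).trans ?_
    have : ∫ p in sq, |gR γ p - h p| ≤ ∫ p, |gR γ p - h p| :=
      setIntegral_le_integral (hgint.sub hint).abs (ae_of_all _ fun p => abs_nonneg _)
    refine this.trans ?_
    refine le_of_eq_of_le ?_ hl1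
    refine integral_congr_ae (ae_of_all _ fun p => ?_)
    simp [Real.norm_eq_abs]
  have hT2 : ∫ p in sq, |S p - h p| ≤ ε/4 := by
    have hb := step_approx_cont hint (show (0:ℝ) < ε/4 by linarith) hδpos
      (fun x y hxy => by
        have := hδ (a := x) (b := y) hxy
        rwa [Real.dist_eq] at this) hm0 hmδ
    calc ∫ p in sq, |S p - h p| ≤ ∫ _ in sq, (ε/4 : ℝ) := by
          refine setIntegral_mono_on ((hSint.sub hint).abs).integrableOn
            integrableOn_const_sq measurableSet_sq fun p hp => hb p hp
      _ = ε/4 := by rw [setIntegral_const, measureReal_def, volume_sq, ENNReal.toReal_one, one_smul]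
  have hT3 : ∫ p in sq, |h p - gR γ p| ≤ ε/4 := by
    have : ∫ p in sq, |h p - gR γ p| ≤ ∫ p, |h p - gR γ p| :=
      setIntegral_le_integral (hint.sub hgint).abs (ae_of_all _ fun p => abs_nonneg _)
    refine this.trans ?_
    refine le_of_eq_of_le ?_ hl1
    refine integral_congr_ae (ae_of_all _ fun p => ?_)
    simp [Real.norm_eq_abs, abs_sub_comm]
  linarith





/-! ### subsequence extraction -/

lemma eLpNorm_tendsto {γ : Measure (ℝ × ℝ)} (hγ : IsPermuton γ) (hac : γ ≪ volume) :
    Tendsto (fun m => eLpNorm (gm γ m - gR γ) 1 (volume.restrict sq)) atTop (nhds 0) := by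
  have h1 := l1_tendsto hγ hac
  have h2 : ∀ m, eLpNorm (gm γ m - gR γ) 1 (volume.restrict sq)
      = ENNReal.ofReal (∫ p in sq, |gm γ m p - gR γ p|) := by
    intro m
    have hi : Integrable (fun p => |gm γ m p - gR γ p|) (volume.restrict sq) :=
      ((integrable_gm γ m).sub (integrable_gR hγ)).abs.integrableOn
    rw [eLpNorm_one_eq_lintegral_enorm,
      ofReal_integral_eq_lintegral_ofReal hi (ae_of_all _ fun p => abs_nonneg _)]
    refine lintegral_congr fun p => ?_
    rw [← ofReal_norm_eq_enorm]
    simp [Real.norm_eq_abs]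
  have h3 : Tendsto (fun m => ENNReal.ofReal (∫ p in sq, |gm γ m p - gR γ p|)) atTop
      (nhds (ENNReal.ofReal 0)) := (ENNReal.continuous_ofReal.tendsto 0).comp h1
  rw [ENNReal.ofReal_zero] at h3
  exact h3.congr fun m => (h2 m).symm

lemma exists_ae_subseq {γ : Measure (ℝ × ℝ)} (hγ : IsPermuton γ) (hac : γ ≪ volume)
    (ns : ℕ → ℕ) (hns : Tendsto ns atTop atTop) :
    ∃ ms : ℕ → ℕ, Tendsto (ns ∘ ms) atTop atTop ∧
      ∀ᵐ p ∂(volume.restrict sq),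
        Tendsto (fun k => gm γ ((ns ∘ ms) k) p) atTop (nhds (gR γ p)) := by
  have htm : TendstoInMeasure (volume.restrict sq) (fun k => gm γ (ns k)) atTop (gR γ) := by
    refine tendstoInMeasure_of_tendsto_eLpNorm one_ne_zero
      (fun k => (measurable_gm γ (ns k)).aestronglyMeasurable)
      (measurable_gR γ).aestronglyMeasurable ?_
    exact (eLpNorm_tendsto hγ hac).comp hns
  obtain ⟨ms, hms_mono, hms⟩ := htm.exists_seq_tendsto_ae
  exact ⟨ms, hns.comp hms_mono.tendsto_atTop, hms⟩

end

end StepAux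

/-- For any permuton `γ`, `H(γ^m) → H(γ)` as `m → ∞`; in particular when
`H(γ) = -∞` the sequence `H(γ^m)` diverges to `-∞` (convergence in `EReal` to `⊥`). -/
theorem entropy_stepPermuton_tendsto (γ : Measure (ℝ × ℝ)) (hγ : IsPermuton γ) :
    Filter.Tendsto (fun m : ℕ => permutonEntropy (stepPermuton γ m)) Filter.atTop
      (nhds (permutonEntropy γ)) := by
  have hkey : ∀ m, permutonEntropy (stepPermuton γ m) = ((-(StepAux.dI γ m) : ℝ) : EReal) :=
    StepAux.entropy_step_eq γ
  by_cases hc : (γ ≪ volume) ∧ Integrable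
      (fun p => (γ.rnDeriv volume p).toReal * Real.log (γ.rnDeriv volume p).toReal) volume
  · obtain ⟨hac, hint⟩ := hc
    have hint' : Integrable (fun p => StepAux.mlog (StepAux.gR γ p)) volume := hint
    have hval : permutonEntropy γ
        = ((-(∫ p, StepAux.mlog (StepAux.gR γ p)) : ℝ) : EReal) := by
      rw [permutonEntropy, if_pos ⟨hac, hint⟩]
      have h1 : (∫ p, -((γ.rnDeriv volume p).toReal * Real.log (γ.rnDeriv volume p).toReal))
          = -(∫ p, StepAux.mlog (StepAux.gR γ p)) := by
        calc (∫ p, -((γ.rnDeriv volume p).toReal * Real.log (γ.rnDeriv volume p).toReal))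
            = ∫ p, -(StepAux.mlog (StepAux.gR γ p)) := rfl
          _ = -(∫ p, StepAux.mlog (StepAux.gR γ p)) := by rw [integral_neg]
      rw [h1]
    rw [hval]
    have hd : Tendsto (fun m => StepAux.dI γ m) atTop
        (nhds (∫ p, StepAux.mlog (StepAux.gR γ p))) := by
      refine tendsto_of_subseq_tendsto fun ns hns => ?_
      obtain ⟨ms, hcomp, hae⟩ := StepAux.exists_ae_subseq hγ hac ns hns
      exact ⟨ms, StepAux.tendsto_dI_subseq_int hγ hac hint' (ns ∘ ms) hcomp hae⟩
    have hT : Tendsto (fun m => ((-(StepAux.dI γ m) : ℝ) : EReal)) atTop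
        (nhds ((-(∫ p, StepAux.mlog (StepAux.gR γ p)) : ℝ) : EReal)) :=
      (continuous_coe_real_ereal.tendsto _).comp hd.neg
    exact Filter.Tendsto.congr (fun m => (hkey m).symm) hT
  · have hbot : permutonEntropy γ = ⊥ := by rw [permutonEntropy, if_neg hc]
    rw [hbot]
    have hd : Tendsto (fun m => StepAux.dI γ m) atTop atTop := by
      by_cases hac : γ ≪ volume
      · have hni : ¬ Integrable (fun p => StepAux.mlog (StepAux.gR γ p)) volume :=
          fun h => hc ⟨hac, h⟩
        refine tendsto_of_subseq_tendsto fun ns hns => ?_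
        obtain ⟨ms, hcomp, hae⟩ := StepAux.exists_ae_subseq hγ hac ns hns
        exact ⟨ms, StepAux.tendsto_dI_subseq_nonint hγ hac hni (ns ∘ ms) hcomp hae⟩
      · exact StepAux.tendsto_dI_sing hγ hac
    rw [EReal.tendsto_nhds_bot_iff_real]
    intro x
    filter_upwards [hd.eventually_ge_atTop (-x + 1)] with m hm
    rw [hkey m]
    have hlt : (-(StepAux.dI γ m) : ℝ) < x := by linarith
    exact_mod_cast hlt
end

section
/- Let γ be a finite Borel measure on Q = [0,1]² that is absolutely continuous with respect to Lebesgue measure, with density g, and suppose g log g is Lebesgue integrable on Q. Then the Riemann sums R_m(γ) converge as m → ∞ to ∫_Q g log g. -/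
open MeasureTheory Real Set Filter
open scoped Classical ENNReal

/-- The Riemann sum `R_m(γ) = (1/m²) Σ_{i,j} g_{ij} log g_{ij}` with `g_{ij} = m² γ(Q_{ij})`
(and the convention `0 log 0 = 0`, which holds automatically since `Real.log 0 = 0`). -/
noncomputable def riemannSum (γ : Measure (ℝ × ℝ)) (m : ℕ) : ℝ :=
  (1 / (m : ℝ) ^ 2) *
    ∑ i : Fin m, ∑ j : Fin m,
      ((m : ℝ) ^ 2 * (γ (gridCell m i j)).toReal) *
        Real.log ((m : ℝ) ^ 2 * (γ (gridCell m i j)).toReal)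


noncomputable section

namespace RST

lemma phi_ge {x : ℝ} (hx : 0 ≤ x) : -1 ≤ x * Real.log x := by
  rcases hx.eq_or_lt with h | h
  · simp [← h]
  · have h1 : 1 - x⁻¹ ≤ Real.log x := Real.one_sub_inv_le_log_of_pos h
    have h2 : x * (1 - x⁻¹) = x - 1 := by field_simp
    nlinarith [mul_le_mul_of_nonneg_left h1 hx]

def cellIdx (m : ℕ) (x : ℝ) : ℕ := ⌈(m : ℝ) * x⌉₊ - 1

lemma cellIdx_spec {m : ℕ} (hm : 1 ≤ m) {x : ℝ} (hx : x ∈ Ioc (0:ℝ) 1) :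
    cellIdx m x < m ∧ x ∈ Ioc ((cellIdx m x : ℝ) / m) (((cellIdx m x : ℝ) + 1) / m) := by
  obtain ⟨hx0, hx1⟩ := hx
  have hm0 : (0:ℝ) < m := by exact_mod_cast hm
  have hmx : 0 < (m:ℝ) * x := by positivity
  have hk1 : 1 ≤ ⌈(m:ℝ) * x⌉₊ := Nat.ceil_pos.mpr hmx
  have hkm : ⌈(m:ℝ) * x⌉₊ ≤ m := Nat.ceil_le.mpr (by nlinarith)
  have hcast : ((cellIdx m x : ℕ) : ℝ) = (⌈(m:ℝ) * x⌉₊ : ℝ) - 1 := by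
    rw [cellIdx, Nat.cast_sub hk1, Nat.cast_one]
  have hlow : ((cellIdx m x : ℕ) : ℝ) < (m:ℝ) * x := by
    by_contra hcon
    push_neg at hcon
    have : ⌈(m:ℝ) * x⌉₊ ≤ cellIdx m x := Nat.ceil_le.mpr hcon
    rw [cellIdx] at this; omega
  have hhigh : (m:ℝ) * x ≤ ((cellIdx m x : ℕ) : ℝ) + 1 := by
    rw [hcast]
    have := Nat.le_ceil ((m:ℝ) * x)
    linarith
  refine ⟨by rw [cellIdx]; omega, ?_, ?_⟩
  · rw [div_lt_iff₀ hm0]; linarith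
  · rw [le_div_iff₀ hm0]; linarith

lemma prod_Icc_ae_eq (a b c d : ℝ) :
    (Icc a b ×ˢ Icc c d : Set (ℝ × ℝ)) =ᵐ[volume] (Ioc a b ×ˢ Ioc c d : Set (ℝ × ℝ)) := by
  rw [MeasureTheory.ae_eq_set]
  constructor
  · have hsub : (Icc a b ×ˢ Icc c d : Set (ℝ × ℝ)) \ (Ioc a b ×ˢ Ioc c d) ⊆
        (({a} : Set ℝ) ×ˢ (univ : Set ℝ)) ∪ ((univ : Set ℝ) ×ˢ ({c} : Set ℝ)) := by
      rintro ⟨x, y⟩ ⟨⟨hx, hy⟩, hn⟩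
      simp only [mem_Icc] at hx hy
      by_cases hxa : a < x
      · by_cases hyc : c < y
        · exact absurd ⟨⟨hxa, hx.2⟩, hyc, hy.2⟩ hn
        · right; simp [le_antisymm (not_lt.mp hyc) hy.1]
      · left; simp [(le_antisymm (not_lt.mp hxa) hx.1).symm]
    refine le_antisymm (le_trans (measure_mono hsub) ?_) zero_le
    refine le_trans (measure_union_le _ _) ?_
    rw [Measure.volume_eq_prod ℝ ℝ, Measure.prod_prod, Measure.prod_prod]
    simp
  · have : (Ioc a b ×ˢ Ioc c d : Set (ℝ × ℝ)) \ (Icc a b ×ˢ Icc c d) = ∅ :=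
      diff_eq_empty.mpr (prod_mono Ioc_subset_Icc_self Ioc_subset_Icc_self)
    rw [this]
    simp

lemma volume_gridCell {m : ℕ} (hm : 1 ≤ m) (i j : ℕ) :
    volume (gridCell m i j) = ENNReal.ofReal (((m:ℝ) ^ 2)⁻¹) := by
  have hm0 : (0:ℝ) < m := by exact_mod_cast hm
  have key : ∀ i : ℕ, ((i:ℝ) + 1) / m - (i:ℝ) / m = 1 / m := fun i => by field_simp; ring
  rw [gridCell, Measure.volume_eq_prod ℝ ℝ, Measure.prod_prod, Real.volume_Ioc, Real.volume_Ioc,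
    key, key, ← ENNReal.ofReal_mul (by positivity)]
  congr 1
  rw [pow_two, mul_inv]
  ring

lemma doubling : ∀ x : ℝ × ℝ, ∃ᶠ r in nhdsWithin (0:ℝ) (Ioi (0:ℝ)),
    volume (Metric.closedBall x (3 * r)) ≤ (36 : NNReal) * volume (Metric.closedBall x r) := by
  intro x
  apply Eventually.frequently
  filter_upwards [self_mem_nhdsWithin] with r (hr : r ∈ Ioi (0:ℝ))
  rw [mem_Ioi] at hr
  obtain ⟨x, y⟩ := x
  rw [← closedBall_prod_same, ← closedBall_prod_same, Measure.volume_eq_prod ℝ ℝ,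
    Measure.prod_prod, Measure.prod_prod]
  simp only [Real.volume_closedBall]
  rw [← ENNReal.ofReal_mul (by positivity), ← ENNReal.ofReal_mul (by positivity)]
  have h36 : ((36 : NNReal):ℝ≥0∞) = ENNReal.ofReal 36 := by simp
  rw [h36, ← ENNReal.ofReal_mul (by norm_num)]
  apply ENNReal.ofReal_le_ofReal
  nlinarith

lemma ae_tendsto_cellAvg (g : ℝ × ℝ → ℝ) (hg : Integrable g volume) :
    ∀ᵐ p : ℝ × ℝ, p ∈ (Ioc (0:ℝ) 1 ×ˢ Ioc (0:ℝ) 1 : Set (ℝ × ℝ)) →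
      Tendsto (fun m : ℕ => (m:ℝ)^2 * ∫ q in gridCell m (cellIdx m p.1) (cellIdx m p.2), g q)
        atTop (nhds (g p)) := by
  set v := Vitali.vitaliFamily (volume : Measure (ℝ × ℝ)) 36 doubling with hv
  filter_upwards [v.ae_tendsto_average hg.locallyIntegrable] with p hp hpS
  obtain ⟨hp1, hp2⟩ := hpS
  set c : ℕ → Set (ℝ × ℝ) := fun m =>
    Icc ((cellIdx m p.1 : ℝ)/m) (((cellIdx m p.1 : ℝ)+1)/m) ×ˢ
    Icc ((cellIdx m p.2 : ℝ)/m) (((cellIdx m p.2 : ℝ)+1)/m) with hc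
  have hceq : ∀ m : ℕ, (c m : Set (ℝ × ℝ)) =ᵐ[volume]
      gridCell m (cellIdx m p.1) (cellIdx m p.2) := fun m => prod_Icc_ae_eq _ _ _ _
  have hsub : ∀ m : ℕ, 1 ≤ m → c m ⊆ Metric.closedBall p (1/m) := by
    intro m hm q hq
    have hm0 : (0:ℝ) < m := by exact_mod_cast hm
    obtain ⟨hi, hxi⟩ := cellIdx_spec hm hp1
    obtain ⟨hj, hyj⟩ := cellIdx_spec hm hp2
    obtain ⟨hq1, hq2⟩ := hq
    have e1 : ((cellIdx m p.1 : ℝ)+1)/m - (cellIdx m p.1 : ℝ)/m = 1/m := by field_simp; ring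
    have e2 : ((cellIdx m p.2 : ℝ)+1)/m - (cellIdx m p.2 : ℝ)/m = 1/m := by field_simp; ring
    have dist_le : ∀ lo hi u w : ℝ, hi - lo = 1/m → u ∈ Icc lo hi → w ∈ Ioc lo hi →
        |u - w| ≤ 1/m := by
      intro lo hi u w hlen hu hw
      rw [abs_le]
      obtain ⟨h1, h2⟩ := hu; obtain ⟨h3, h4⟩ := hw
      constructor <;> linarith
    rw [Metric.mem_closedBall, Prod.dist_eq]
    exact max_le (by rw [Real.dist_eq]; exact dist_le _ _ _ _ e1 hq1 hxi)
      (by rw [Real.dist_eq]; exact dist_le _ _ _ _ e2 hq2 hyj)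
  have hmemV : ∀ m : ℕ, 1 ≤ m → c m ∈ v.setsAt p := by
    intro m hm
    have hm0 : (0:ℝ) < m := by exact_mod_cast hm
    have hvol : volume (c m) = ENNReal.ofReal (((m:ℝ)^2)⁻¹) :=
      (measure_congr (hceq m)).trans (volume_gridCell hm _ _)
    have hsetsAt : v.setsAt p = {a : Set (ℝ × ℝ) | IsClosed a ∧ (interior a).Nonempty ∧
        ∃ r : ℝ, a ⊆ Metric.closedBall p r ∧
          volume (Metric.closedBall p (3*r)) ≤ (36 : NNReal) * volume a} := rfl
    rw [hsetsAt, mem_setOf_eq]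
    refine ⟨IsClosed.prod isClosed_Icc isClosed_Icc, ?_, 1/m, hsub m hm, ?_⟩
    · rw [hc]
      simp only [interior_prod_eq, interior_Icc]
      have hlt : ∀ k : ℕ, (k:ℝ)/m < ((k:ℝ)+1)/m := by
        intro k; rw [div_lt_div_iff_of_pos_right hm0]; linarith
      exact Nonempty.prod (nonempty_Ioo.mpr (hlt _)) (nonempty_Ioo.mpr (hlt _))
    · rw [hvol]
      rw [show p = (p.1, p.2) from rfl, ← closedBall_prod_same, Measure.volume_eq_prod ℝ ℝ,
        Measure.prod_prod]
      simp only [Real.volume_closedBall]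
      rw [← ENNReal.ofReal_mul (by positivity)]
      have h36 : ((36 : NNReal):ℝ≥0∞) = ENNReal.ofReal 36 := by simp
      rw [h36, ← ENNReal.ofReal_mul (by norm_num)]
      apply ENNReal.ofReal_le_ofReal
      apply le_of_eq
      have hme : (m:ℝ) ≠ 0 := hm0.ne'
      field_simp
      ring
  have htend : Tendsto c atTop (v.filterAt p) := by
    rw [VitaliFamily.tendsto_filterAt_iff]
    constructor
    · filter_upwards [eventually_ge_atTop 1] with m hm using hmemV m hm
    · intro ε hε
      have hev : ∀ᶠ m : ℕ in atTop, (1:ℝ)/m ≤ ε ∧ 1 ≤ m := by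
        filter_upwards [eventually_ge_atTop (max 1 ⌈ε⁻¹⌉₊)] with m hm
        have h1 : 1 ≤ m := le_trans (le_max_left _ _) hm
        have h2 : ε⁻¹ ≤ (m:ℝ) := by
          have := le_trans (le_max_right 1 ⌈ε⁻¹⌉₊) hm
          exact_mod_cast Nat.ceil_le.mp this
        have hm0 : (0:ℝ) < m := by exact_mod_cast h1
        refine ⟨?_, h1⟩
        rw [div_le_iff₀ hm0]
        have h3 : ε * ε⁻¹ ≤ ε * m := by nlinarith
        rw [mul_inv_cancel₀ hε.ne'] at h3; linarith
      filter_upwards [hev] with m hm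
      exact (hsub m hm.2).trans (Metric.closedBall_subset_closedBall hm.1)
  refine Filter.Tendsto.congr' ?_ (hp.comp htend)
  filter_upwards [eventually_ge_atTop 1] with m hm
  have hm0 : (0:ℝ) < m := by exact_mod_cast hm
  show ⨍ q in c m, g q = _
  rw [setAverage_eq, measureReal_def, measure_congr (hceq m), volume_gridCell hm,
    setIntegral_congr_set (hceq m), ENNReal.toReal_ofReal (by positivity), inv_inv, smul_eq_mul]


end RST

end

set_option maxHeartbeats 1000000 in
/-- If `γ` is a finite Borel measure on `Q = [0,1]²` which is absolutely
continuous with density `g`, and `g log g` is Lebesgue integrable, then the Riemann sums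
`R_m(γ)` converge to `∫_Q g log g` as `m → ∞`. -/
theorem riemannSum_tendsto_integral (g : ℝ × ℝ → ℝ) (hg_meas : Measurable g)
    (hg_nonneg : ∀ p, 0 ≤ g p)
    (hg_supp : ∀ p ∉ Icc (0 : ℝ) 1 ×ˢ Icc (0 : ℝ) 1, g p = 0)
    (γ : Measure (ℝ × ℝ)) (hγ : γ = volume.withDensity fun p => ENNReal.ofReal (g p))
    (hfin : IsFiniteMeasure γ)
    (hint : Integrable (fun p => g p * Real.log (g p)) volume) :
    Filter.Tendsto (riemannSum γ) Filter.atTop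
      (nhds (∫ p, g p * Real.log (g p))) := by
  haveI := hfin
  set S : Set (ℝ × ℝ) := Ioc (0:ℝ) 1 ×ˢ Ioc (0:ℝ) 1 with hS
  have hSmeas : MeasurableSet S := measurableSet_Ioc.prod measurableSet_Ioc
  have hvolS : volume S = 1 := by
    rw [hS, Measure.volume_eq_prod ℝ ℝ, Measure.prod_prod, Real.volume_Ioc]
    norm_num
  set L : ℝ := ∫ p, g p * Real.log (g p) with hLdef
  have hcellmeas : ∀ m i j : ℕ, MeasurableSet (gridCell m i j) := fun m i j =>
    measurableSet_Ioc.prod measurableSet_Ioc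
  -- integrability of g
  have hg_int : Integrable g volume := by
    refine ⟨hg_meas.aestronglyMeasurable, ?_⟩
    rw [hasFiniteIntegral_iff_ofReal (Eventually.of_forall hg_nonneg)]
    have h1 : ∫⁻ p, ENNReal.ofReal (g p) ∂volume = γ univ := by
      rw [hγ, withDensity_apply _ MeasurableSet.univ, Measure.restrict_univ]
    rw [h1]
    exact measure_lt_top γ univ
  -- cell masses
  have hcell : ∀ m i j : ℕ, (γ (gridCell m i j)).toReal = ∫ q in gridCell m i j, g q := by
    intro m i j
    have h1 : ENNReal.ofReal (∫ q in gridCell m i j, g q) = γ (gridCell m i j) := by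
      rw [ofReal_integral_eq_lintegral_ofReal hg_int.integrableOn
        (Eventually.of_forall fun q => hg_nonneg q), hγ, withDensity_apply _ (hcellmeas m i j)]
    rw [← h1, ENNReal.toReal_ofReal (setIntegral_nonneg (hcellmeas m i j) fun q _ => hg_nonneg q)]
  have hcell_nonneg : ∀ m i j : ℕ, 0 ≤ (γ (gridCell m i j)).toReal := fun m i j =>
    ENNReal.toReal_nonneg
  -- partition
  have hpart : ∀ m : ℕ, 1 ≤ m →
      (⋃ ij : Fin m × Fin m, gridCell m ij.1 ij.2) = S := by
    intro m hm
    have hm0 : (0:ℝ) < m := by exact_mod_cast hm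
    ext ⟨x, y⟩
    simp only [mem_iUnion, hS, mem_prod, gridCell, mem_Ioc]
    constructor
    · rintro ⟨⟨i, j⟩, ⟨hx1, hx2⟩, hy1, hy2⟩
      have hkey : ∀ (k : Fin m) (u : ℝ), (k:ℝ)/m < u → u ≤ ((k:ℝ)+1)/m → 0 < u ∧ u ≤ 1 := by
        intro k u h1 h2
        have hk : (k:ℝ) + 1 ≤ m := by exact_mod_cast k.isLt
        have h3 : (0:ℝ) ≤ (k:ℝ)/m := by positivity
        refine ⟨lt_of_le_of_lt h3 h1, h2.trans ?_⟩
        rw [div_le_one hm0]; exact hk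
      exact ⟨hkey i x hx1 hx2, hkey j y hy1 hy2⟩
    · rintro ⟨hx, hy⟩
      obtain ⟨hi, hxi1, hxi2⟩ := RST.cellIdx_spec hm hx
      obtain ⟨hj, hyj1, hyj2⟩ := RST.cellIdx_spec hm hy
      exact ⟨⟨⟨_, hi⟩, ⟨_, hj⟩⟩, ⟨hxi1, hxi2⟩, hyj1, hyj2⟩
  -- disjointness
  have hdisj : ∀ m : ℕ, 1 ≤ m →
      Pairwise (Function.onFun Disjoint fun ij : Fin m × Fin m => gridCell m ij.1 ij.2) := by
    intro m hm
    have hm0 : (0:ℝ) < m := by exact_mod_cast hm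
    have hIoc : ∀ k k' : ℕ, k ≠ k' →
        Disjoint (Ioc ((k:ℝ)/m) (((k:ℝ)+1)/m)) (Ioc ((k':ℝ)/m) (((k':ℝ)+1)/m)) := by
      intro k k' hkk
      rw [Set.Ioc_disjoint_Ioc]
      rcases lt_or_gt_of_ne hkk with h | h
      · have h1 : (k:ℝ) + 1 ≤ (k':ℝ) := by exact_mod_cast h
        refine le_trans (min_le_left _ _) (le_trans ?_ (le_max_right _ _))
        gcongr
      · have h1 : (k':ℝ) + 1 ≤ (k:ℝ) := by exact_mod_cast h
        refine le_trans (min_le_right _ _) (le_trans ?_ (le_max_left _ _))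
        gcongr
    rintro ⟨i, j⟩ ⟨i', j'⟩ hne
    rw [Function.onFun]
    have : (i:ℕ) ≠ (i':ℕ) ∨ (j:ℕ) ≠ (j':ℕ) := by
      by_contra h
      push_neg at h
      exact hne (Prod.ext (Fin.ext h.1) (Fin.ext h.2))
    rcases this with h | h
    · exact Disjoint.set_prod_left (hIoc _ _ h) _ _
    · exact Disjoint.set_prod_right (hIoc _ _ h) _ _
  -- rewriting riemannSum as a sum over pairs
  have hRS : ∀ m : ℕ, riemannSum γ m = ∑ ij : Fin m × Fin m,
      (1/(m:ℝ)^2) * (((m:ℝ)^2 * (γ (gridCell m ij.1 ij.2)).toReal) *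
        Real.log ((m:ℝ)^2 * (γ (gridCell m ij.1 ij.2)).toReal)) := by
    intro m
    rw [riemannSum, Finset.mul_sum, Fintype.sum_prod_type]
    refine Finset.sum_congr rfl fun i _ => ?_
    rw [Finset.mul_sum]
  -- ∫ over S equals L
  have hLS : ∫ q in S, g q * Real.log (g q) = L := by
    rw [hS, ← setIntegral_congr_set (RST.prod_Icc_ae_eq 0 1 0 1)]
    rw [setIntegral_eq_integral_of_forall_compl_eq_zero fun p hp => by rw [hg_supp p hp]; simp]
  -- Jensen upper bound
  have hupper : ∀ m : ℕ, 1 ≤ m → riemannSum γ m ≤ L := by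
    intro m hm
    have hm0 : (0:ℝ) < m := by exact_mod_cast hm
    have hstep : ∀ ij : Fin m × Fin m,
        (1/(m:ℝ)^2) * (((m:ℝ)^2 * (γ (gridCell m ij.1 ij.2)).toReal) *
          Real.log ((m:ℝ)^2 * (γ (gridCell m ij.1 ij.2)).toReal)) ≤
        ∫ q in gridCell m ij.1 ij.2, g q * Real.log (g q) := by
      intro ij
      have h0 : volume (gridCell m ij.1 ij.2) ≠ 0 := by
        rw [RST.volume_gridCell hm]
        simp only [ne_eq, ENNReal.ofReal_eq_zero, not_le]
        positivity
      have ht : volume (gridCell m ij.1 ij.2) ≠ ⊤ := by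
        rw [RST.volume_gridCell hm]; exact ENNReal.ofReal_ne_top
      have hJ := Real.convexOn_mul_log.map_set_average_le
        Real.continuous_mul_log.continuousOn isClosed_Ici h0 ht
        (Eventually.of_forall fun q => hg_nonneg q) hg_int.integrableOn hint.integrableOn
      rw [setAverage_eq, setAverage_eq, measureReal_def, RST.volume_gridCell hm,
        ENNReal.toReal_ofReal (by positivity), inv_inv, smul_eq_mul, smul_eq_mul] at hJ
      rw [hcell m ij.1 ij.2]
      calc (1/(m:ℝ)^2) * (((m:ℝ)^2 * ∫ q in gridCell m ij.1 ij.2, g q) *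
            Real.log ((m:ℝ)^2 * ∫ q in gridCell m ij.1 ij.2, g q))
          ≤ (1/(m:ℝ)^2) * ((m:ℝ)^2 * ∫ q in gridCell m ij.1 ij.2, g q * Real.log (g q)) := by
            apply mul_le_mul_of_nonneg_left hJ (by positivity)
        _ = ∫ q in gridCell m ij.1 ij.2, g q * Real.log (g q) := by
            field_simp
    calc riemannSum γ m ≤ ∑ ij : Fin m × Fin m, ∫ q in gridCell m ij.1 ij.2,
            g q * Real.log (g q) := by
          rw [hRS m]; exact Finset.sum_le_sum fun ij _ => hstep ij
      _ = ∫ q in ⋃ ij : Fin m × Fin m, gridCell m ij.1 ij.2, g q * Real.log (g q) := by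
          rw [integral_iUnion_fintype (f := fun q : ℝ × ℝ => g q * Real.log (g q))
            (fun ij : Fin m × Fin m => hcellmeas m ij.1 ij.2) (hdisj m hm)
            (fun ij => hint.integrableOn)]
      _ = L := by rw [hpart m hm, hLS]
  -- the step functions for Fatou
  set F : ℕ → ℝ × ℝ → ℝ≥0∞ := fun m p =>
    ∑ ij : Fin m × Fin m, (gridCell m ij.1 ij.2).indicator
      (fun _ => ENNReal.ofReal (((m:ℝ)^2 * (γ (gridCell m ij.1 ij.2)).toReal) *
        Real.log ((m:ℝ)^2 * (γ (gridCell m ij.1 ij.2)).toReal) + 2)) p with hF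
  have hFmeas : ∀ m, Measurable (F m) := fun m =>
    Finset.measurable_sum _ fun ij _ => measurable_const.indicator (hcellmeas m ij.1 ij.2)
  have hterm_nonneg : ∀ m : ℕ, ∀ ij : Fin m × Fin m,
      0 ≤ ((m:ℝ)^2 * (γ (gridCell m ij.1 ij.2)).toReal) *
        Real.log ((m:ℝ)^2 * (γ (gridCell m ij.1 ij.2)).toReal) + 2 := by
    intro m ij
    have := RST.phi_ge (x := (m:ℝ)^2 * (γ (gridCell m ij.1 ij.2)).toReal)
      (by positivity)
    linarith
  -- integral of F m over S
  have hFint : ∀ m : ℕ, 1 ≤ m →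
      ∫⁻ p in S, F m p ∂volume = ENNReal.ofReal (riemannSum γ m + 2) := by
    intro m hm
    have hm0 : (0:ℝ) < m := by exact_mod_cast hm
    rw [hF]
    rw [lintegral_finset_sum _ fun ij _ =>
      measurable_const.indicator (hcellmeas m ij.1 ij.2)]
    have hsubS : ∀ ij : Fin m × Fin m, gridCell m ij.1 ij.2 ⊆ S := by
      intro ij
      rw [← hpart m hm]
      exact subset_iUnion (fun ij : Fin m × Fin m => gridCell m ij.1 ij.2) ij
    have hterm : ∀ ij : Fin m × Fin m,
        (∫⁻ p in S, (gridCell m ij.1 ij.2).indicator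
          (fun _ => ENNReal.ofReal (((m:ℝ)^2 * (γ (gridCell m ij.1 ij.2)).toReal) *
            Real.log ((m:ℝ)^2 * (γ (gridCell m ij.1 ij.2)).toReal) + 2)) p ∂volume) =
        ENNReal.ofReal ((((m:ℝ)^2 * (γ (gridCell m ij.1 ij.2)).toReal) *
            Real.log ((m:ℝ)^2 * (γ (gridCell m ij.1 ij.2)).toReal) + 2) * ((m:ℝ)^2)⁻¹) := by
      intro ij
      rw [lintegral_indicator (hcellmeas m ij.1 ij.2), setLIntegral_const,
        Measure.restrict_apply (hcellmeas m ij.1 ij.2),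
        inter_eq_self_of_subset_left (hsubS ij), RST.volume_gridCell hm,
        ← ENNReal.ofReal_mul (hterm_nonneg m ij)]
    rw [Finset.sum_congr rfl fun ij _ => hterm ij]
    rw [← ENNReal.ofReal_sum_of_nonneg fun ij _ =>
      mul_nonneg (hterm_nonneg m ij) (by positivity)]
    congr 1
    have hsum2 : ∑ _ij : Fin m × Fin m, (2:ℝ) * ((m:ℝ)^2)⁻¹ = 2 := by
      rw [Finset.sum_const, Finset.card_univ, Fintype.card_prod, Fintype.card_fin,
        nsmul_eq_mul]
      push_cast
      field_simp
    calc ∑ ij : Fin m × Fin m, ((((m:ℝ)^2 * (γ (gridCell m ij.1 ij.2)).toReal) *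
            Real.log ((m:ℝ)^2 * (γ (gridCell m ij.1 ij.2)).toReal) + 2) * ((m:ℝ)^2)⁻¹)
        = ∑ ij : Fin m × Fin m, ((1/(m:ℝ)^2) * (((m:ℝ)^2 * (γ (gridCell m ij.1 ij.2)).toReal) *
            Real.log ((m:ℝ)^2 * (γ (gridCell m ij.1 ij.2)).toReal)) + 2 * ((m:ℝ)^2)⁻¹) := by
          refine Finset.sum_congr rfl fun ij _ => ?_
          ring
      _ = riemannSum γ m + 2 := by
          rw [Finset.sum_add_distrib, hsum2, ← hRS m]
  -- pointwise a.e. convergence of F m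
  have hFtend : ∀ᵐ p : ℝ × ℝ, p ∈ S → Tendsto (fun m => F m p) atTop
      (nhds (ENNReal.ofReal (g p * Real.log (g p) + 2))) := by
    filter_upwards [RST.ae_tendsto_cellAvg g hg_int] with p hp hpS
    have hcont : Continuous fun x : ℝ => ENNReal.ofReal (x * Real.log x + 2) :=
      ENNReal.continuous_ofReal.comp (Real.continuous_mul_log.add continuous_const)
    have h1 : Tendsto (fun m : ℕ => ENNReal.ofReal
        (((m:ℝ)^2 * ∫ q in gridCell m (RST.cellIdx m p.1) (RST.cellIdx m p.2), g q) *
          Real.log ((m:ℝ)^2 * ∫ q in gridCell m (RST.cellIdx m p.1) (RST.cellIdx m p.2), g q)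
          + 2)) atTop (nhds (ENNReal.ofReal (g p * Real.log (g p) + 2))) :=
      (hcont.continuousAt.tendsto).comp (hp hpS)
    refine Filter.Tendsto.congr' ?_ h1
    filter_upwards [eventually_ge_atTop 1] with m hm
    obtain ⟨hpS1, hpS2⟩ := hpS
    obtain ⟨hi, hxi⟩ := RST.cellIdx_spec hm hpS1
    obtain ⟨hj, hyj⟩ := RST.cellIdx_spec hm hpS2
    have hpmem : p ∈ gridCell m (RST.cellIdx m p.1) (RST.cellIdx m p.2) := ⟨hxi, hyj⟩
    have hFeq : F m p = ∑ ij : Fin m × Fin m, (gridCell m ij.1 ij.2).indicator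
        (fun _ => ENNReal.ofReal (((m:ℝ)^2 * (γ (gridCell m ij.1 ij.2)).toReal) *
          Real.log ((m:ℝ)^2 * (γ (gridCell m ij.1 ij.2)).toReal) + 2)) p := rfl
    rw [hFeq, ← hcell m (RST.cellIdx m p.1) (RST.cellIdx m p.2)]
    rw [Finset.sum_eq_single (⟨⟨RST.cellIdx m p.1, hi⟩, ⟨RST.cellIdx m p.2, hj⟩⟩ : Fin m × Fin m)]
    · exact (Set.indicator_of_mem hpmem
        (fun _ => ENNReal.ofReal (((m:ℝ)^2 *
          (γ (gridCell m (RST.cellIdx m p.1) (RST.cellIdx m p.2))).toReal) *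
          Real.log ((m:ℝ)^2 *
            (γ (gridCell m (RST.cellIdx m p.1) (RST.cellIdx m p.2))).toReal) + 2))).symm
    · intro ij _ hne
      have hd := hdisj m hm hne
      refine Set.indicator_of_notMem (fun hpm => ?_) _
      exact Set.disjoint_left.mp hd hpm hpmem
    · intro h
      exact absurd (Finset.mem_univ _) h
  -- Fatou
  have hFatou := lintegral_liminf_le (μ := volume.restrict S) (u := atTop) hFmeas
  have hLHS : ∫⁻ p in S, Filter.liminf (fun m => F m p) atTop ∂volume =
      ENNReal.ofReal (L + 2) := by
    have h1 : ∫⁻ p in S, Filter.liminf (fun m => F m p) atTop ∂volume =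
        ∫⁻ p in S, ENNReal.ofReal (g p * Real.log (g p) + 2) ∂volume := by
      refine lintegral_congr_ae ((ae_restrict_iff' hSmeas).mpr ?_)
      filter_upwards [hFtend] with p hp hpS
      exact (hp hpS).liminf_eq
    have hconst : IntegrableOn (fun _ : ℝ × ℝ => (2:ℝ)) S volume :=
      (integrableOn_const_iff).mpr (Or.inr (by rw [hvolS]; norm_num))
    have hi2 : IntegrableOn (fun p : ℝ × ℝ => g p * Real.log (g p) + 2) S volume := by
      exact hint.integrableOn.add hconst
    rw [h1, ← ofReal_integral_eq_lintegral_ofReal hi2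
      (Eventually.of_forall fun p => by
        have := RST.phi_ge (hg_nonneg p)
        show (0:ℝ) ≤ g p * Real.log (g p) + 2
        linarith)]
    congr 1
    rw [integral_add hint.integrableOn hconst]
    rw [setIntegral_const, hLS, measureReal_def, hvolS]
    norm_num
  have hkey : ENNReal.ofReal (L + 2) ≤
      Filter.liminf (fun m => ENNReal.ofReal (riemannSum γ m + 2)) atTop := by
    rw [← hLHS]
    refine le_trans hFatou (le_of_eq ?_)
    apply Filter.liminf_congr
    filter_upwards [eventually_ge_atTop 1] with m hm
    exact hFint m hm
  -- positivity of L + 2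
  have hL2 : (0:ℝ) < L + 2 := by
    have hi1 : IntegrableOn (fun _ : ℝ × ℝ => (1:ℝ)) S volume :=
      (integrableOn_const_iff).mpr (Or.inr (by rw [hvolS]; norm_num))
    have hi1' : IntegrableOn (fun _ : ℝ × ℝ => (2:ℝ)) S volume :=
      (integrableOn_const_iff).mpr (Or.inr (by rw [hvolS]; norm_num))
    have hi2 : IntegrableOn (fun p : ℝ × ℝ => g p * Real.log (g p) + 2) S volume := by
      exact hint.integrableOn.add hi1'

    have hmono : ∫ p in S, (1:ℝ) ∂volume ≤ ∫ p in S, (g p * Real.log (g p) + 2) ∂volume := by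
      refine integral_mono hi1 hi2 fun p => ?_
      have := RST.phi_ge (hg_nonneg p)
      dsimp only
      linarith
    rw [setIntegral_const, measureReal_def, hvolS] at hmono
    rw [integral_add hint.integrableOn hi1',
      setIntegral_const, hLS, measureReal_def, hvolS] at hmono
    norm_num at hmono
    linarith
  -- lower bound eventually
  have hlower : ∀ ε : ℝ, 0 < ε → ∀ᶠ m : ℕ in atTop, L - ε < riemannSum γ m := by
    intro ε hε
    have h1 : ENNReal.ofReal (L + 2 - ε) < ENNReal.ofReal (L + 2) :=
      (ENNReal.ofReal_lt_ofReal_iff hL2).mpr (by linarith)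
    have h2 := Filter.eventually_lt_of_lt_liminf (lt_of_lt_of_le h1 hkey)
    filter_upwards [h2] with m hm2
    by_contra hcon
    push_neg at hcon
    have : ENNReal.ofReal (riemannSum γ m + 2) ≤ ENNReal.ofReal (L + 2 - ε) :=
      ENNReal.ofReal_le_ofReal (by linarith)
    exact absurd hm2 (not_lt.mpr this)
  -- conclusion
  rw [Metric.tendsto_atTop]
  intro ε hε
  obtain ⟨N, hN⟩ := eventually_atTop.mp ((hlower ε hε).and (eventually_ge_atTop 1))
  refine ⟨N, fun n hn => ?_⟩
  obtain ⟨h1, h2⟩ := hN n hn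
  have h3 := hupper n h2
  rw [Real.dist_eq, abs_lt]
  constructor <;> [linarith; linarith]
end

section
/- Let γ be a finite Borel measure on Q = [0,1]² that is absolutely continuous with respect to Lebesgue measure, with density g, and suppose g log g is not Lebesgue integrable on Q (its integral is +∞). Then the Riemann sums R_m(γ) diverge to +∞ as m → ∞. -/
open MeasureTheory Real Set Filter
open scoped Classical ENNReal

open Metric
open scoped Topology


lemma phi_ge_sub_one {x : ℝ} (hx : 0 ≤ x) : x - 1 ≤ x * Real.log x := by
  rcases eq_or_lt_of_le hx with h | h
  · simp [← h]
  · have h2 : Real.log x⁻¹ ≤ x⁻¹ - 1 := Real.log_le_sub_one_of_pos (by positivity)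
    rw [Real.log_inv] at h2
    have h3 := mul_le_mul_of_nonneg_left h2 hx
    have h4 : x * x⁻¹ = 1 := mul_inv_cancel₀ h.ne'
    nlinarith

lemma phi_ge_neg_one {x : ℝ} (hx : 0 ≤ x) : -1 ≤ x * Real.log x := by
  have := phi_ge_sub_one hx; linarith

lemma phi_superadd {a b : ℝ} (ha : 0 ≤ a) (hb : 0 ≤ b) :
    a * Real.log a + b * Real.log b ≤ (a + b) * Real.log (a + b) := by
  have h1 : a * Real.log a ≤ a * Real.log (a + b) := by
    rcases eq_or_lt_of_le ha with h | h
    · simp [← h]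
    · exact mul_le_mul_of_nonneg_left (Real.log_le_log h (by linarith)) ha
  have h2 : b * Real.log b ≤ b * Real.log (a + b) := by
    rcases eq_or_lt_of_le hb with h | h
    · simp [← h]
    · exact mul_le_mul_of_nonneg_left (Real.log_le_log h (by linarith)) hb
  nlinarith

lemma phi_mono {a b : ℝ} (h1 : 1 ≤ a) (hab : a ≤ b) : a * Real.log a ≤ b * Real.log b := by
  have la : 0 ≤ Real.log a := Real.log_nonneg h1
  have : Real.log a ≤ Real.log b := Real.log_le_log (by linarith) hab
  nlinarith

lemma phi_le_of_le {x A : ℝ} (hx : 0 ≤ x) (hA : 1 ≤ A) (h : x ≤ A) :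
    x * Real.log x ≤ A * Real.log A := by
  rcases eq_or_lt_of_le hx with h0 | h0
  · rw [← h0]; simpa using mul_nonneg (by linarith : (0:ℝ) ≤ A) (Real.log_nonneg hA)
  · have : Real.log x ≤ Real.log A := Real.log_le_log h0 h
    nlinarith [Real.log_nonneg hA]

lemma phi_abs_le {x A : ℝ} (hx : 0 ≤ x) (hA : 1 ≤ A) (h : x ≤ A) :
    |x * Real.log x| ≤ A * Real.log A + 1 := by
  rw [abs_le]
  constructor
  · have := phi_ge_neg_one hx
    nlinarith [Real.log_nonneg hA]
  · have := phi_le_of_le hx hA h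
    linarith

lemma phi_min_mono {x a b : ℝ} (hx : 0 ≤ x) (ha : 1 ≤ a) (hab : a ≤ b) :
    min x a * Real.log (min x a) ≤ min x b * Real.log (min x b) := by
  rcases le_total x a with h | h
  · rw [min_eq_left h, min_eq_left (h.trans hab)]
  · rw [min_eq_right h]
    rcases le_total x b with h' | h'
    · rw [min_eq_left h']; exact phi_mono ha h
    · rw [min_eq_right h']; exact phi_mono ha hab

lemma phi_min_le {x a : ℝ} (hx : 0 ≤ x) (ha : 1 ≤ a) :
    min x a * Real.log (min x a) ≤ x * Real.log x := by
  rcases le_total x a with h | h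
  · rw [min_eq_left h]
  · rw [min_eq_right h]; exact phi_mono ha h


noncomputable def gix (m : ℕ) (x : ℝ) : ℕ := (⌈x * m⌉ - 1).toNat

lemma mem_Ioc_iff_ceil {m i : ℕ} (hm : 0 < m) {x : ℝ} :
    x ∈ Ioc ((i : ℝ) / m) ((i + 1 : ℝ) / m) ↔ ⌈x * m⌉ = (i : ℤ) + 1 := by
  have hm' : (0 : ℝ) < m := by exact_mod_cast hm
  rw [Int.ceil_eq_iff]
  push_cast
  constructor
  · rintro ⟨h1, h2⟩
    exact ⟨by linarith [(div_lt_iff₀ hm').1 h1], by linarith [(le_div_iff₀ hm').1 h2]⟩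
  · rintro ⟨h1, h2⟩
    exact ⟨(div_lt_iff₀ hm').2 (by linarith), (le_div_iff₀ hm').2 (by linarith)⟩

lemma gix_eq {m i : ℕ} (hm : 0 < m) {x : ℝ} (hx : x ∈ Ioc ((i : ℝ) / m) ((i + 1 : ℝ) / m)) :
    gix m x = i := by
  have := (mem_Ioc_iff_ceil hm).1 hx
  unfold gix; omega

lemma gix_mem {m : ℕ} (hm : 0 < m) {x : ℝ} (hx : x ∈ Ioc (0 : ℝ) 1) :
    gix m x < m ∧ x ∈ Ioc ((gix m x : ℝ) / m) ((gix m x + 1 : ℝ) / m) := by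
  have hm' : (0 : ℝ) < m := by exact_mod_cast hm
  have hpos : (0 : ℝ) < x * m := mul_pos hx.1 hm'
  have h1 : (1 : ℤ) ≤ ⌈x * m⌉ := by
    have := Int.ceil_pos.2 hpos; omega
  have h2 : ⌈x * m⌉ ≤ (m : ℤ) := Int.ceil_le.2 (by
    calc x * m ≤ 1 * m := by nlinarith [hx.2]
    _ = (m : ℝ) := by ring)
  have hg : (gix m x : ℤ) = ⌈x * m⌉ - 1 := by unfold gix; omega
  constructor
  · omega
  · rw [mem_Ioc_iff_ceil hm]; omega

lemma measurableSet_gridCell (m i j : ℕ) : MeasurableSet (gridCell m i j) :=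
  measurableSet_Ioc.prod measurableSet_Ioc

lemma closedCell_eq_closedBall (m i j : ℕ) :
    (Icc ((i : ℝ) / m) ((i + 1 : ℝ) / m) ×ˢ Icc ((j : ℝ) / m) ((j + 1 : ℝ) / m)) =
      closedBall ((((i : ℝ) + 2⁻¹) / m, ((j : ℝ) + 2⁻¹) / m) : ℝ × ℝ) (2⁻¹ / m) := by
  rw [← closedBall_prod_same, Real.closedBall_eq_Icc, Real.closedBall_eq_Icc]
  congr 1 <;> [skip; congr 1] <;> ring

lemma cell_ae_eq (a b c d : ℝ) :
    (Icc a b ×ˢ Icc c d : Set (ℝ × ℝ)) =ᵐ[volume] (Ioc a b ×ˢ Ioc c d : Set (ℝ × ℝ)) := by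
  rw [MeasureTheory.ae_eq_set]
  constructor
  · apply measure_mono_null (t := ({a} ×ˢ (univ : Set ℝ)) ∪ ((univ : Set ℝ) ×ˢ {c}))
    · rintro ⟨x, y⟩ ⟨⟨⟨hx1, hx2⟩, hy1, hy2⟩, hn⟩
      simp only [mem_union, mem_prod, mem_singleton_iff, mem_univ, and_true, true_and]
      rcases lt_or_eq_of_le hx1 with h1 | h1
      · rcases lt_or_eq_of_le hy1 with h2 | h2
        · exact absurd ⟨⟨h1, hx2⟩, ⟨h2, hy2⟩⟩ hn
        · exact Or.inr h2.symm
      · exact Or.inl h1.symm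
    · apply measure_union_null
      · rw [Measure.volume_eq_prod, Measure.prod_prod]; simp
      · rw [Measure.volume_eq_prod, Measure.prod_prod]; simp
  · apply measure_mono_null (t := (∅ : Set (ℝ × ℝ)))
    · rintro ⟨x, y⟩ ⟨⟨hx, hy⟩, hn⟩
      exact absurd ⟨Ioc_subset_Icc_self hx, Ioc_subset_Icc_self hy⟩ hn
    · simp

lemma volume_gridCell {m : ℕ} (hm : 0 < m) (i j : ℕ) :
    volume (gridCell m i j) = ENNReal.ofReal (1 / (m : ℝ) ^ 2) := by
  have hm' : (0 : ℝ) < m := by exact_mod_cast hm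
  have hd : ∀ k : ℕ, ((k : ℝ) + 1) / m - k / m = 1 / m := by intro k; field_simp; ring
  rw [gridCell, Measure.volume_eq_prod, Measure.prod_prod, Real.volume_Ioc, Real.volume_Ioc,
    hd i, hd j, ← ENNReal.ofReal_mul (by positivity)]
  congr 1
  field_simp

lemma gridCell_subset {m i j : ℕ} (hi : i < m) (hj : j < m) :
    gridCell m i j ⊆ Ioc (0 : ℝ) 1 ×ˢ Ioc (0 : ℝ) 1 := by
  have hm' : (0 : ℝ) < m := by exact_mod_cast (Nat.pos_of_ne_zero (by omega))
  apply Set.prod_mono <;> apply Ioc_subset_Ioc <;>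
    first
    | positivity
    | · rw [div_le_one hm']; exact_mod_cast by omega
noncomputable def stepFun (f : ℝ × ℝ → ℝ) (m : ℕ) : ℝ × ℝ → ℝ := fun p =>
  ∑ i : Fin m, ∑ j : Fin m,
    (gridCell m i j).indicator
      (fun _ => ((m : ℝ) ^ 2 * ∫ q in gridCell m i j, f q) *
        Real.log ((m : ℝ) ^ 2 * ∫ q in gridCell m i j, f q)) p

lemma mem_gridCell_gix {m : ℕ} (hm : 0 < m) {p : ℝ × ℝ}
    (hp : p ∈ Ioc (0 : ℝ) 1 ×ˢ Ioc (0 : ℝ) 1) :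
    gix m p.1 < m ∧ gix m p.2 < m ∧ p ∈ gridCell m (gix m p.1) (gix m p.2) := by
  obtain ⟨h1, h2⟩ := gix_mem hm hp.1
  obtain ⟨h3, h4⟩ := gix_mem hm hp.2
  exact ⟨h1, h3, h2, h4⟩

lemma stepFun_eval {f : ℝ × ℝ → ℝ} {m : ℕ} (hm : 0 < m) {p : ℝ × ℝ}
    (hp : p ∈ Ioc (0 : ℝ) 1 ×ˢ Ioc (0 : ℝ) 1) :
    stepFun f m p =
      ((m : ℝ) ^ 2 * ∫ q in gridCell m (gix m p.1) (gix m p.2), f q) *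
        Real.log ((m : ℝ) ^ 2 * ∫ q in gridCell m (gix m p.1) (gix m p.2), f q) := by
  obtain ⟨hi, hj, hmem⟩ := mem_gridCell_gix hm hp
  rw [stepFun]
  rw [Finset.sum_eq_single_of_mem (⟨gix m p.1, hi⟩ : Fin m) (Finset.mem_univ _)]
  · rw [Finset.sum_eq_single_of_mem (⟨gix m p.2, hj⟩ : Fin m) (Finset.mem_univ _)]
    · exact Set.indicator_of_mem hmem _
    · intro b _ hb
      apply Set.indicator_of_notMem
      intro hmem'
      exact hb (Fin.ext (gix_eq hm hmem'.2).symm)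
  · intro b _ hb
    apply Finset.sum_eq_zero
    intro j _
    apply Set.indicator_of_notMem
    intro hmem'
    exact hb (Fin.ext (gix_eq hm hmem'.1).symm)

lemma stepFun_zero {f : ℝ × ℝ → ℝ} {m : ℕ} {p : ℝ × ℝ}
    (hp : p ∉ Ioc (0 : ℝ) 1 ×ˢ Ioc (0 : ℝ) 1) :
    stepFun f m p = 0 := by
  rw [stepFun]
  apply Finset.sum_eq_zero
  intro i _
  apply Finset.sum_eq_zero
  intro j _
  apply Set.indicator_of_notMem
  intro hmem
  exact hp (gridCell_subset i.isLt j.isLt hmem)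

lemma integrable_stepFun (f : ℝ × ℝ → ℝ) (m : ℕ) :
    Integrable (stepFun f m) volume := by
  apply integrable_finset_sum
  intro i _
  apply integrable_finset_sum
  intro j _
  rw [integrable_indicator_iff (measurableSet_gridCell m i j)]
  refine integrableOn_const (ne_of_lt ?_)
  rcases Nat.eq_zero_or_pos m with h | h
  · subst h; simp [gridCell]
  · rw [volume_gridCell h]; exact ENNReal.ofReal_lt_top

lemma integral_stepFun (f : ℝ × ℝ → ℝ) {m : ℕ} (hm : 0 < m) :
    ∫ p, stepFun f m p =
      (1 / (m : ℝ) ^ 2) * ∑ i : Fin m, ∑ j : Fin m,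
        ((m : ℝ) ^ 2 * ∫ q in gridCell m i j, f q) *
          Real.log ((m : ℝ) ^ 2 * ∫ q in gridCell m i j, f q) := by
  have hint : ∀ (i j : Fin m), Integrable ((gridCell m i j).indicator
      (fun _ => ((m : ℝ) ^ 2 * ∫ q in gridCell m i j, f q) *
        Real.log ((m : ℝ) ^ 2 * ∫ q in gridCell m i j, f q))) volume := by
    intro i j
    rw [integrable_indicator_iff (measurableSet_gridCell m i j)]
    refine integrableOn_const (ne_of_lt ?_)
    rw [volume_gridCell hm]; exact ENNReal.ofReal_lt_top
  simp only [stepFun]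
  rw [integral_finset_sum _ (fun i _ => integrable_finset_sum _ (fun j _ => hint i j))]
  rw [Finset.mul_sum]
  apply Finset.sum_congr rfl
  intro i _
  rw [integral_finset_sum _ (fun j _ => hint i j), Finset.mul_sum]
  apply Finset.sum_congr rfl
  intro j _
  rw [integral_indicator_const _ (measurableSet_gridCell m i j), measureReal_def, volume_gridCell hm,
    ENNReal.toReal_ofReal (by positivity), smul_eq_mul]
lemma volume_closedCell {m : ℕ} (hm : 0 < m) (i j : ℕ) :
    volume (Icc ((i : ℝ) / m) ((i + 1 : ℝ) / m) ×ˢ Icc ((j : ℝ) / m) ((j + 1 : ℝ) / m))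
      = ENNReal.ofReal (1 / (m : ℝ) ^ 2) := by
  have hm' : (0 : ℝ) < m := by exact_mod_cast hm
  have hd : ∀ k : ℕ, ((k : ℝ) + 1) / m - k / m = 1 / m := by intro k; field_simp; ring
  rw [Measure.volume_eq_prod, Measure.prod_prod, Real.volume_Icc, Real.volume_Icc,
    hd i, hd j, ← ENNReal.ofReal_mul (by positivity)]
  congr 1
  field_simp

lemma integrable_of_bdd_supp {f : ℝ × ℝ → ℝ} {K : ℝ} (hK : 0 ≤ K) (hf_meas : Measurable f)
    (hfK : ∀ p, |f p| ≤ K)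
    (hsupp : ∀ p ∉ Icc (0 : ℝ) 1 ×ˢ Icc (0 : ℝ) 1, f p = 0) :
    Integrable f volume := by
  have hT : MeasurableSet (Icc (0 : ℝ) 1 ×ˢ Icc (0 : ℝ) 1) :=
    measurableSet_Icc.prod measurableSet_Icc
  have hTfin : volume (Icc (0 : ℝ) 1 ×ˢ Icc (0 : ℝ) 1) < ⊤ :=
    (isCompact_Icc.prod isCompact_Icc).measure_lt_top
  have hbint : Integrable ((Icc (0 : ℝ) 1 ×ˢ Icc (0 : ℝ) 1).indicator fun _ => K) volume := by
    rw [integrable_indicator_iff hT]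
    exact integrableOn_const hTfin.ne
  apply hbint.mono' hf_meas.aestronglyMeasurable
  apply ae_of_all
  intro p
  by_cases hp : p ∈ Icc (0 : ℝ) 1 ×ˢ Icc (0 : ℝ) 1
  · rw [Set.indicator_of_mem hp]; exact hfK p
  · rw [Set.indicator_of_notMem hp, hsupp p hp]; simp

lemma stepFun_tendsto {f : ℝ × ℝ → ℝ} {K : ℝ} (hK : 1 ≤ K) (hf_meas : Measurable f)
    (hf0 : ∀ p, 0 ≤ f p) (hfK : ∀ p, f p ≤ K)
    (hsupp : ∀ p ∉ Icc (0 : ℝ) 1 ×ˢ Icc (0 : ℝ) 1, f p = 0) :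
    ∀ᵐ p : ℝ × ℝ, Tendsto (fun m => stepFun f m p) atTop
      (𝓝 (f p * Real.log (f p))) := by
  have hint : Integrable f volume :=
    integrable_of_bdd_supp (by linarith) hf_meas
      (fun p => by rw [abs_of_nonneg (hf0 p)]; exact hfK p) hsupp
  have hdiff := IsUnifLocDoublingMeasure.ae_tendsto_average (μ := (volume : Measure (ℝ × ℝ)))
    hint.locallyIntegrable 1
  have hnull : ∀ᵐ p : ℝ × ℝ,
      p ∈ Ioc (0 : ℝ) 1 ×ˢ Ioc (0 : ℝ) 1 ∨ p ∉ Icc (0 : ℝ) 1 ×ˢ Icc (0 : ℝ) 1 := by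
    have h0 := ((MeasureTheory.ae_eq_set.1 (cell_ae_eq 0 1 0 1)).1 :
      volume ((Icc (0:ℝ) 1 ×ˢ Icc (0:ℝ) 1) \ (Ioc (0:ℝ) 1 ×ˢ Ioc (0:ℝ) 1)) = 0)
    rw [MeasureTheory.ae_iff]
    apply measure_mono_null (t := (Icc (0:ℝ) 1 ×ˢ Icc (0:ℝ) 1) \ (Ioc (0:ℝ) 1 ×ˢ Ioc (0:ℝ) 1))
    · intro p hp
      simp only [mem_setOf_eq, not_or, not_not] at hp
      exact ⟨hp.2, hp.1⟩
    · exact h0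
  filter_upwards [hdiff, hnull] with p hdp hcase
  rcases hcase with hp | hp
  · -- main case
    set w : ℕ → ℝ × ℝ := fun m =>
      (((gix m p.1 : ℝ) + 2⁻¹) / m, ((gix m p.2 : ℝ) + 2⁻¹) / m) with hw
    set δ : ℕ → ℝ := fun m => 2⁻¹ / (m : ℝ) with hδdef
    have hδ : Tendsto δ atTop (nhdsWithin 0 (Ioi 0)) := by
      rw [tendsto_nhdsWithin_iff]
      constructor
      · exact Tendsto.div_atTop tendsto_const_nhds tendsto_natCast_atTop_atTop
      · filter_upwards [eventually_ge_atTop 1] with m hm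
        have h0 : (0:ℝ) < m := by exact_mod_cast hm
        exact mem_Ioi.2 (by simp only [hδdef]; positivity)
    have hcb : ∀ m : ℕ, 0 < m → closedBall (w m) (δ m) =
        Icc ((gix m p.1 : ℝ) / m) ((gix m p.1 + 1 : ℝ) / m) ×ˢ
          Icc ((gix m p.2 : ℝ) / m) ((gix m p.2 + 1 : ℝ) / m) := by
      intro m hm
      rw [← closedCell_eq_closedBall]
    have hball : ∀ᶠ m in atTop, p ∈ closedBall (w m) (1 * δ m) := by
      filter_upwards [eventually_ge_atTop 1] with m hm
      have hm0 : 0 < m := hm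
      rw [one_mul, hcb m hm0]
      obtain ⟨_, _, hmem⟩ := mem_gridCell_gix hm0 hp
      exact ⟨Ioc_subset_Icc_self hmem.1, Ioc_subset_Icc_self hmem.2⟩
    have havg := hdp w δ hδ hball
    have hcomp := (Real.continuous_mul_log.tendsto (f p)).comp havg
    apply hcomp.congr'
    filter_upwards [eventually_ge_atTop 1] with m hm
    have hm0 : 0 < m := hm
    have hm' : (0 : ℝ) < m := by exact_mod_cast hm0
    have hIeq : ∫ y in closedBall (w m) (δ m), f y =
        ∫ y in gridCell m (gix m p.1) (gix m p.2), f y := by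
      rw [hcb m hm0]
      exact MeasureTheory.setIntegral_congr_set (cell_ae_eq _ _ _ _)
    have hvol : (volume (closedBall (w m) (δ m))).toReal = 1 / (m : ℝ) ^ 2 := by
      rw [hcb m hm0, volume_closedCell hm0, ENNReal.toReal_ofReal (by positivity)]
    simp only [Function.comp_apply]
    rw [stepFun_eval hm0 hp, MeasureTheory.setAverage_eq, measureReal_def, hvol, hIeq, smul_eq_mul]
    rw [one_div, inv_inv]
  · -- trivial case: p outside the closed unit square
    have h1 : f p = 0 := hsupp p hp
    have h2 : ∀ m, stepFun f m p = 0 := by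
      intro m
      apply stepFun_zero
      intro hmem
      exact hp ⟨Ioc_subset_Icc_self hmem.1, Ioc_subset_Icc_self hmem.2⟩
    rw [h1]
    simp only [h2, Real.log_zero, mul_zero]
    exact tendsto_const_nhds
lemma cellIntegral_mem {f : ℝ × ℝ → ℝ} {K : ℝ} (hf0 : ∀ p, 0 ≤ f p) (hfK : ∀ p, f p ≤ K)
    (hint : Integrable f volume) {m : ℕ} (hm : 0 < m) (i j : ℕ) :
    0 ≤ (m : ℝ) ^ 2 * ∫ q in gridCell m i j, f q ∧
      (m : ℝ) ^ 2 * ∫ q in gridCell m i j, f q ≤ K := by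
  have hm' : (0 : ℝ) < m := by exact_mod_cast hm
  have h0 : 0 ≤ ∫ q in gridCell m i j, f q :=
    setIntegral_nonneg (measurableSet_gridCell m i j) (fun x _ => hf0 x)
  constructor
  · positivity
  · have hle : ∫ q in gridCell m i j, f q ≤ ∫ _ in gridCell m i j, K :=
      setIntegral_mono_on hint.integrableOn (integrableOn_const (ne_of_lt (by
        rw [volume_gridCell hm]; exact ENNReal.ofReal_lt_top)))
        (measurableSet_gridCell m i j) (fun x _ => hfK x)
    rw [setIntegral_const, measureReal_def, volume_gridCell hm, ENNReal.toReal_ofReal (by positivity),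
      smul_eq_mul] at hle
    have h2 : (m : ℝ) ^ 2 * ∫ q in gridCell m i j, f q ≤ (m : ℝ) ^ 2 * (1 / (m : ℝ) ^ 2 * K) :=
      by nlinarith
    calc (m : ℝ) ^ 2 * ∫ q in gridCell m i j, f q ≤ (m : ℝ) ^ 2 * (1 / (m : ℝ) ^ 2 * K) := h2
      _ = K := by field_simp

lemma Ssum_tendsto {f : ℝ × ℝ → ℝ} {K : ℝ} (hK : 1 ≤ K) (hf_meas : Measurable f)
    (hf0 : ∀ p, 0 ≤ f p) (hfK : ∀ p, f p ≤ K)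
    (hsupp : ∀ p ∉ Icc (0 : ℝ) 1 ×ˢ Icc (0 : ℝ) 1, f p = 0) :
    Tendsto (fun m : ℕ => (1 / (m : ℝ) ^ 2) * ∑ i : Fin m, ∑ j : Fin m,
        ((m : ℝ) ^ 2 * ∫ q in gridCell m i j, f q) *
          Real.log ((m : ℝ) ^ 2 * ∫ q in gridCell m i j, f q))
      atTop (𝓝 (∫ p, f p * Real.log (f p))) := by
  have hint : Integrable f volume :=
    integrable_of_bdd_supp (by linarith) hf_meas
      (fun p => by rw [abs_of_nonneg (hf0 p)]; exact hfK p) hsupp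
  have hIoc : MeasurableSet (Ioc (0 : ℝ) 1 ×ˢ Ioc (0 : ℝ) 1) :=
    measurableSet_Ioc.prod measurableSet_Ioc
  have hbound_int : Integrable
      ((Ioc (0 : ℝ) 1 ×ˢ Ioc (0 : ℝ) 1).indicator fun _ => K * Real.log K + 1) volume := by
    rw [integrable_indicator_iff hIoc]
    refine integrableOn_const (ne_of_lt ?_)
    apply lt_of_le_of_lt (measure_mono (Set.prod_mono Ioc_subset_Icc_self Ioc_subset_Icc_self))
    exact (isCompact_Icc.prod isCompact_Icc).measure_lt_top
  have hmain : Tendsto (fun m : ℕ => ∫ p, stepFun f m p) atTop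
      (𝓝 (∫ p, f p * Real.log (f p))) := by
    apply tendsto_integral_of_dominated_convergence
      ((Ioc (0 : ℝ) 1 ×ˢ Ioc (0 : ℝ) 1).indicator fun _ => K * Real.log K + 1)
      (fun m => (integrable_stepFun f m).1) hbound_int
    · intro m
      apply ae_of_all
      intro p
      have hB : 0 ≤ K * Real.log K + 1 := by nlinarith [Real.log_nonneg hK]
      by_cases hp : p ∈ Ioc (0 : ℝ) 1 ×ˢ Ioc (0 : ℝ) 1
      · rcases Nat.eq_zero_or_pos m with hm | hm
        · subst hm
          simp only [stepFun, Finset.univ_eq_empty, Finset.sum_empty, norm_zero]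
          rw [Set.indicator_of_mem hp]; exact hB
        · rw [stepFun_eval hm hp, Set.indicator_of_mem hp]
          obtain ⟨h1, h2⟩ := cellIntegral_mem hf0 hfK hint hm (gix m p.1) (gix m p.2)
          exact (Real.norm_eq_abs _) ▸ phi_abs_le h1 hK h2
      · rw [stepFun_zero hp, Set.indicator_of_notMem hp, norm_zero]
    · exact stepFun_tendsto hK hf_meas hf0 hfK hsupp
  apply hmain.congr'
  filter_upwards [eventually_ge_atTop 1] with m hm
  exact integral_stepFun f hm
lemma one_le_cast_add_one (n : ℕ) : (1:ℝ) ≤ (n:ℝ) + 1 := by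
  have := Nat.cast_nonneg (α := ℝ) n; linarith

lemma volume_unitSq : volume (Icc (0:ℝ) 1 ×ˢ Icc (0:ℝ) 1) = 1 := by
  rw [Measure.volume_eq_prod, Measure.prod_prod, Real.volume_Icc]
  norm_num

lemma exists_truncation (g : ℝ × ℝ → ℝ) (hg_meas : Measurable g)
    (hg_nonneg : ∀ p, 0 ≤ g p)
    (hg_supp : ∀ p ∉ Icc (0 : ℝ) 1 ×ˢ Icc (0 : ℝ) 1, g p = 0)
    (hint : ¬ Integrable (fun p => g p * Real.log (g p)) volume) (M : ℝ) :
    ∃ n : ℕ, M ≤ ∫ p, min (g p) ((n : ℝ) + 1) * Real.log (min (g p) ((n : ℝ) + 1)) := by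
  set T : Set (ℝ × ℝ) := Icc (0 : ℝ) 1 ×ˢ Icc (0 : ℝ) 1 with hTdef
  have hT : MeasurableSet T := measurableSet_Icc.prod measurableSet_Icc
  have hTvol : volume T = 1 := volume_unitSq
  set F : ℕ → ℝ × ℝ → ℝ := fun n p =>
    min (g p) ((n : ℝ) + 1) * Real.log (min (g p) ((n : ℝ) + 1)) +
      T.indicator (fun _ => (1 : ℝ)) p with hFdef
  have hmin0 : ∀ (n : ℕ) (p : ℝ × ℝ), 0 ≤ min (g p) ((n : ℝ) + 1) :=
    fun n p => le_min (hg_nonneg p) (by positivity)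
  have hFzero : ∀ (n : ℕ) (p : ℝ × ℝ), p ∉ T → F n p = 0 := by
    intro n p hp
    simp only [hFdef, hg_supp p hp, Set.indicator_of_notMem hp, add_zero]
    rw [min_eq_left (by positivity)]
    simp
  have hF0 : ∀ (n : ℕ) (p : ℝ × ℝ), 0 ≤ F n p := by
    intro n p
    by_cases hp : p ∈ T
    · simp only [hFdef, Set.indicator_of_mem hp]
      have := phi_ge_neg_one (hmin0 n p)
      linarith
    · rw [hFzero n p hp]
  have hFmeas : ∀ n, Measurable (F n) := by
    intro n
    apply Measurable.add
    · exact Real.continuous_mul_log.measurable.comp (hg_meas.min measurable_const)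
    · exact measurable_const.indicator hT
  have hGmono : Monotone fun n : ℕ => fun p => ENNReal.ofReal (F n p) := by
    intro a b hab
    intro p
    apply ENNReal.ofReal_le_ofReal
    apply add_le_add ?_ le_rfl
    exact phi_min_mono (hg_nonneg p) (one_le_cast_add_one a)
      (by push_cast; exact add_le_add (Nat.cast_le.2 hab) le_rfl)
  have hnn : ∀ p, 0 ≤ g p * Real.log (g p) + T.indicator (fun _ => (1 : ℝ)) p := by
    intro p
    by_cases hp : p ∈ T
    · simp only [Set.indicator_of_mem hp]
      have := phi_ge_neg_one (hg_nonneg p)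
      linarith
    · simp [Set.indicator_of_notMem hp, hg_supp p hp]
  have hsup : ∀ p, (⨆ n : ℕ, ENNReal.ofReal (F n p)) =
      ENNReal.ofReal (g p * Real.log (g p) + T.indicator (fun _ => (1 : ℝ)) p) := by
    intro p
    apply le_antisymm
    · apply iSup_le
      intro n
      apply ENNReal.ofReal_le_ofReal
      exact add_le_add (phi_min_le (hg_nonneg p) (one_le_cast_add_one n)) le_rfl
    · have hle : g p ≤ (⌈g p⌉₊ : ℝ) + 1 := (Nat.le_ceil _).trans (by linarith)
      have : F ⌈g p⌉₊ p = g p * Real.log (g p) + T.indicator (fun _ => (1 : ℝ)) p := by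
        simp only [hFdef, min_eq_left hle]
      exact this ▸ le_iSup (fun n : ℕ => ENNReal.ofReal (F n p)) ⌈g p⌉₊
  have hind : Integrable (T.indicator fun _ => (1 : ℝ)) volume := by
    rw [integrable_indicator_iff hT]
    exact integrableOn_const (ne_of_lt (by rw [hTvol]; exact ENNReal.one_lt_top))
  have hkey : ∫⁻ p, ENNReal.ofReal (g p * Real.log (g p) +
      T.indicator (fun _ => (1 : ℝ)) p) = ⊤ := by
    by_contra htop
    have hInt : Integrable (fun p => g p * Real.log (g p) +
        T.indicator (fun _ => (1 : ℝ)) p) volume := by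
      constructor
      · exact ((Real.continuous_mul_log.measurable.comp hg_meas).add
          (measurable_const.indicator hT)).aestronglyMeasurable
      · rw [hasFiniteIntegral_iff_norm]
        have : ∀ p : ℝ × ℝ, ENNReal.ofReal ‖g p * Real.log (g p) +
            T.indicator (fun _ => (1 : ℝ)) p‖ = ENNReal.ofReal (g p * Real.log (g p) +
            T.indicator (fun _ => (1 : ℝ)) p) := by
          intro p
          rw [Real.norm_of_nonneg (hnn p)]
        simp only [this]
        exact lt_top_iff_ne_top.2 htop
    apply hint
    have h2 : (fun p => g p * Real.log (g p)) = fun p =>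
        (g p * Real.log (g p) + T.indicator (fun _ => (1 : ℝ)) p) -
          T.indicator (fun _ => (1 : ℝ)) p := by
      funext p; ring
    rw [h2]
    exact hInt.sub hind
  have hlsup : (⨆ n : ℕ, ∫⁻ p, ENNReal.ofReal (F n p)) = ⊤ := by
    rw [← lintegral_iSup (fun n => (hFmeas n).ennreal_ofReal) hGmono]
    rw [← hkey]
    apply lintegral_congr
    intro p
    exact hsup p
  -- pick n
  set M' := max M 0 with hM'def
  have hlt : ENNReal.ofReal (M' + 2) < ⨆ n : ℕ, ∫⁻ p, ENNReal.ofReal (F n p) := by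
    rw [hlsup]; exact ENNReal.ofReal_lt_top
  obtain ⟨n, hn⟩ := lt_iSup_iff.1 hlt
  refine ⟨n, ?_⟩
  have hFn_bdd : ∀ p, |F n p| ≤ ((n : ℝ) + 1) * Real.log ((n : ℝ) + 1) + 2 := by
    intro p
    by_cases hp : p ∈ T
    · simp only [hFdef, Set.indicator_of_mem hp]
      calc |min (g p) ((n : ℝ) + 1) * Real.log (min (g p) ((n : ℝ) + 1)) + 1|
          ≤ |min (g p) ((n : ℝ) + 1) * Real.log (min (g p) ((n : ℝ) + 1))| + |(1:ℝ)| :=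
            abs_add_le _ _
        _ ≤ (((n : ℝ) + 1) * Real.log ((n : ℝ) + 1) + 1) + 1 := by
            have := phi_abs_le (hmin0 n p) (one_le_cast_add_one n) (min_le_right _ _)
            simp only [abs_one]
            linarith
        _ = ((n : ℝ) + 1) * Real.log ((n : ℝ) + 1) + 2 := by ring
    · rw [hFzero n p hp, abs_zero]
      have : 0 ≤ ((n : ℝ) + 1) * Real.log ((n : ℝ) + 1) :=
        mul_nonneg (by positivity) (Real.log_nonneg (one_le_cast_add_one n))
      linarith
  have hFn_int : Integrable (F n) volume :=
    integrable_of_bdd_supp (le_trans (abs_nonneg _) (hFn_bdd (0, 0))) (hFmeas n)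
      hFn_bdd (hFzero n)
  have heq : ENNReal.ofReal (∫ p, F n p) = ∫⁻ p, ENNReal.ofReal (F n p) :=
    ofReal_integral_eq_lintegral_ofReal hFn_int (ae_of_all _ (hF0 n))
  have hlt2 : M' + 2 < ∫ p, F n p := by
    rw [← heq] at hn
    exact (ENNReal.ofReal_lt_ofReal_iff_of_nonneg (by positivity)).1 hn
  have hφint : Integrable (fun p => min (g p) ((n : ℝ) + 1) *
      Real.log (min (g p) ((n : ℝ) + 1))) volume := by
    have h2 : (fun p => min (g p) ((n : ℝ) + 1) * Real.log (min (g p) ((n : ℝ) + 1))) =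
        fun p => F n p - T.indicator (fun _ => (1 : ℝ)) p := by
      funext p; simp only [hFdef]; ring
    rw [h2]
    exact hFn_int.sub hind
  have hindval : ∫ p, T.indicator (fun _ => (1 : ℝ)) p = 1 := by
    rw [integral_indicator_const _ hT, measureReal_def, hTvol]
    simp
  have hsub : ∫ p, F n p = (∫ p, min (g p) ((n : ℝ) + 1) *
      Real.log (min (g p) ((n : ℝ) + 1))) + ∫ p, T.indicator (fun _ => (1 : ℝ)) p := by
    rw [← integral_add hφint hind]
  rw [hindval] at hsub
  rw [hsub] at hlt2
  have : M ≤ M' := le_max_left _ _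
  linarith

section Main

lemma g_integrable {g : ℝ × ℝ → ℝ} (hg_meas : Measurable g) (hg_nonneg : ∀ p, 0 ≤ g p)
    {γ : Measure (ℝ × ℝ)}
    (hγ : γ = volume.withDensity fun p => ENNReal.ofReal (g p))
    (hfin : IsFiniteMeasure γ) : Integrable g volume := by
  constructor
  · exact hg_meas.aestronglyMeasurable
  · rw [hasFiniteIntegral_iff_norm]
    have heq : ∀ p : ℝ × ℝ, ENNReal.ofReal ‖g p‖ = ENNReal.ofReal (g p) := fun p => by
      rw [Real.norm_of_nonneg (hg_nonneg p)]
    simp only [heq]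
    have : γ Set.univ < ⊤ := measure_lt_top γ _
    rwa [hγ, withDensity_apply _ MeasurableSet.univ, Measure.restrict_univ] at this

lemma cell_toReal {g : ℝ × ℝ → ℝ} (hg_meas : Measurable g) (hg_nonneg : ∀ p, 0 ≤ g p)
    {γ : Measure (ℝ × ℝ)}
    (hγ : γ = volume.withDensity fun p => ENNReal.ofReal (g p))
    (hfin : IsFiniteMeasure γ) (m i j : ℕ) :
    (γ (gridCell m i j)).toReal = ∫ q in gridCell m i j, g q := by
  have hgint := g_integrable hg_meas hg_nonneg hγ hfin
  have h1 : γ (gridCell m i j) = ∫⁻ q in gridCell m i j, ENNReal.ofReal (g q) := by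
    rw [hγ, withDensity_apply _ (measurableSet_gridCell m i j)]
  have h2 : ENNReal.ofReal (∫ q in gridCell m i j, g q) =
      ∫⁻ q in gridCell m i j, ENNReal.ofReal (g q) :=
    ofReal_integral_eq_lintegral_ofReal hgint.integrableOn (ae_of_all _ hg_nonneg)
  rw [h1, ← h2, ENNReal.toReal_ofReal]
  exact setIntegral_nonneg (measurableSet_gridCell m i j) fun x _ => hg_nonneg x

lemma riemann_ge {g : ℝ × ℝ → ℝ} (hg_meas : Measurable g) (hg_nonneg : ∀ p, 0 ≤ g p)
    {γ : Measure (ℝ × ℝ)}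
    (hγ : γ = volume.withDensity fun p => ENNReal.ofReal (g p))
    (hfin : IsFiniteMeasure γ) (n : ℕ) {m : ℕ} (hm : 0 < m) :
    (1 / (m : ℝ) ^ 2) * (∑ i : Fin m, ∑ j : Fin m,
        ((m : ℝ) ^ 2 * ∫ q in gridCell m i j, min (g q) ((n : ℝ) + 1)) *
          Real.log ((m : ℝ) ^ 2 * ∫ q in gridCell m i j, min (g q) ((n : ℝ) + 1))) - 1
      ≤ riemannSum γ m := by
  have hm' : (0 : ℝ) < m := by exact_mod_cast hm
  have hgint := g_integrable hg_meas hg_nonneg hγ hfin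
  have hfint : Integrable (fun q => min (g q) ((n : ℝ) + 1)) volume := by
    apply hgint.mono' (hg_meas.min measurable_const).aestronglyMeasurable
    apply ae_of_all
    intro p
    rw [Real.norm_of_nonneg (le_min (hg_nonneg p) (by positivity))]
    exact min_le_left _ _
  -- per-cell inequality
  have hcell : ∀ i j : Fin m,
      ((m : ℝ) ^ 2 * ∫ q in gridCell m i j, min (g q) ((n : ℝ) + 1)) *
        Real.log ((m : ℝ) ^ 2 * ∫ q in gridCell m i j, min (g q) ((n : ℝ) + 1)) - 1 ≤
      ((m : ℝ) ^ 2 * (γ (gridCell m (i : ℕ) (j : ℕ))).toReal) *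
        Real.log ((m : ℝ) ^ 2 * (γ (gridCell m (i : ℕ) (j : ℕ))).toReal) := by
    intro i j
    rw [cell_toReal hg_meas hg_nonneg hγ hfin]
    set a := ∫ q in gridCell m i j, min (g q) ((n : ℝ) + 1) with ha
    set c := ∫ q in gridCell m i j, g q with hc
    have ha0 : 0 ≤ a := setIntegral_nonneg (measurableSet_gridCell m i j)
      fun x _ => le_min (hg_nonneg x) (by positivity)
    have hac : a ≤ c := setIntegral_mono_on hfint.integrableOn hgint.integrableOn
      (measurableSet_gridCell m i j) fun x _ => min_le_left _ _
    have hsplit : (m : ℝ) ^ 2 * c = (m : ℝ) ^ 2 * a + (m : ℝ) ^ 2 * (c - a) := by ring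
    rw [hsplit]
    have h1 := phi_superadd (a := (m : ℝ) ^ 2 * a) (b := (m : ℝ) ^ 2 * (c - a))
      (by positivity) (by nlinarith)
    have h2 := phi_ge_neg_one (x := (m : ℝ) ^ 2 * (c - a)) (by nlinarith)
    linarith
  have hsum : ∑ i : Fin m, ∑ j : Fin m,
      (((m : ℝ) ^ 2 * ∫ q in gridCell m i j, min (g q) ((n : ℝ) + 1)) *
        Real.log ((m : ℝ) ^ 2 * ∫ q in gridCell m i j, min (g q) ((n : ℝ) + 1)) - 1) ≤
      ∑ i : Fin m, ∑ j : Fin m,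
      ((m : ℝ) ^ 2 * (γ (gridCell m (i : ℕ) (j : ℕ))).toReal) *
        Real.log ((m : ℝ) ^ 2 * (γ (gridCell m (i : ℕ) (j : ℕ))).toReal) :=
    Finset.sum_le_sum fun i _ => Finset.sum_le_sum fun j _ => hcell i j
  have hdist : ∑ i : Fin m, ∑ j : Fin m,
      (((m : ℝ) ^ 2 * ∫ q in gridCell m i j, min (g q) ((n : ℝ) + 1)) *
        Real.log ((m : ℝ) ^ 2 * ∫ q in gridCell m i j, min (g q) ((n : ℝ) + 1)) - 1) =
      (∑ i : Fin m, ∑ j : Fin m,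
        ((m : ℝ) ^ 2 * ∫ q in gridCell m i j, min (g q) ((n : ℝ) + 1)) *
          Real.log ((m : ℝ) ^ 2 * ∫ q in gridCell m i j, min (g q) ((n : ℝ) + 1)))
        - (m : ℝ) ^ 2 := by
    rw [Finset.sum_congr rfl fun i _ => Finset.sum_sub_distrib _ _]
    rw [Finset.sum_sub_distrib]
    congr 1
    simp [Finset.sum_const, Finset.card_univ]
    ring
  rw [hdist] at hsum
  rw [riemannSum]
  have := mul_le_mul_of_nonneg_left hsum (by positivity : (0:ℝ) ≤ 1 / (m : ℝ) ^ 2)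
  calc (1 / (m : ℝ) ^ 2) * (∑ i : Fin m, ∑ j : Fin m,
        ((m : ℝ) ^ 2 * ∫ q in gridCell m i j, min (g q) ((n : ℝ) + 1)) *
          Real.log ((m : ℝ) ^ 2 * ∫ q in gridCell m i j, min (g q) ((n : ℝ) + 1))) - 1
      = (1 / (m : ℝ) ^ 2) * ((∑ i : Fin m, ∑ j : Fin m,
        ((m : ℝ) ^ 2 * ∫ q in gridCell m i j, min (g q) ((n : ℝ) + 1)) *
          Real.log ((m : ℝ) ^ 2 * ∫ q in gridCell m i j, min (g q) ((n : ℝ) + 1)))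
          - (m : ℝ) ^ 2) := by field_simp
    _ ≤ _ := this

end Main


/-- If `γ` is a finite Borel measure on `Q = [0,1]²` which is absolutely
continuous with density `g`, but `g log g` is not Lebesgue integrable (its integral is `+∞`,
as `g log g ≥ -1/e` is bounded below), then `R_m(γ) → +∞` as `m → ∞`. -/
theorem riemannSum_tendsto_atTop_of_not_integrable (g : ℝ × ℝ → ℝ) (hg_meas : Measurable g)
    (hg_nonneg : ∀ p, 0 ≤ g p)
    (hg_supp : ∀ p ∉ Icc (0 : ℝ) 1 ×ˢ Icc (0 : ℝ) 1, g p = 0)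
    (γ : Measure (ℝ × ℝ)) (hγ : γ = volume.withDensity fun p => ENNReal.ofReal (g p))
    (hfin : IsFiniteMeasure γ)
    (hint : ¬ Integrable (fun p => g p * Real.log (g p)) volume) :
    Filter.Tendsto (riemannSum γ) Filter.atTop Filter.atTop := by
  rw [Filter.tendsto_atTop]
  intro M
  obtain ⟨n, hn⟩ := exists_truncation g hg_meas hg_nonneg hg_supp hint (M + 2)
  have hS := Ssum_tendsto (f := fun p => min (g p) ((n : ℝ) + 1)) (K := (n : ℝ) + 1)
    (one_le_cast_add_one n) (hg_meas.min measurable_const)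
    (fun p => le_min (hg_nonneg p) (by positivity)) (fun p => min_le_right _ _)
    (fun p hp => by show min (g p) ((n : ℝ) + 1) = 0
                    rw [hg_supp p hp, min_eq_left (by positivity)])
  have hev : ∀ᶠ m : ℕ in atTop, M + 1 ≤ (1 / (m : ℝ) ^ 2) * ∑ i : Fin m, ∑ j : Fin m,
      ((m : ℝ) ^ 2 * ∫ q in gridCell m i j, min (g q) ((n : ℝ) + 1)) *
        Real.log ((m : ℝ) ^ 2 * ∫ q in gridCell m i j, min (g q) ((n : ℝ) + 1)) :=
    hS.eventually (eventually_ge_nhds (by linarith))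
  filter_upwards [hev, eventually_ge_atTop 1] with m h1 h2
  have := riemann_ge hg_meas hg_nonneg hγ hfin n (m := m) h2
  linarith
end

section
/- Fix patterns τ₁,…,τ_k and let ρ(γ) = (ρ_{τ₁}(γ),…,ρ_{τ_k}(γ)) ∈ ℝ^k for each permuton γ. Let R = {ρ(γ) : γ a permuton} be the feasible region and R_* = {ρ(γ) : γ a permuton with H(γ) > −∞}. Then R_* is dense in R. -/
open MeasureTheory Real Set Filter
open scoped Classical ENNReal

noncomputable section

def colI (N i : ℕ) : Set ℝ := Ioc ((i:ℝ)/N) ((i+1:ℝ)/N)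

lemma gridCell_eq (N i j : ℕ) : gridCell N i j = colI N i ×ˢ colI N j := rfl

lemma colI_subset {N : ℕ} (i : Fin N) : colI N (i:ℕ) ⊆ Ioc (0:ℝ) 1 := by
  have hN : (0:ℝ) < N := by exact_mod_cast i.pos
  intro x hx
  obtain ⟨h1, h2⟩ := hx
  constructor
  · exact lt_of_le_of_lt (div_nonneg (by positivity) hN.le) h1
  · refine h2.trans ?_
    rw [div_le_one hN]
    have : ((i:ℕ):ℝ) + 1 ≤ (N:ℝ) := by exact_mod_cast i.2
    linarith

lemma colI_disjoint {N : ℕ} {i j : ℕ} (h : i ≠ j) : Disjoint (colI N i) (colI N j) := by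
  rw [colI, colI, Set.Ioc_disjoint_Ioc]
  rcases h.lt_or_gt with h' | h'
  · have h1 : ((i:ℝ)+1) ≤ (j:ℝ) := by exact_mod_cast h'
    refine le_trans (min_le_left _ _) (le_trans ?_ (le_max_right _ _))
    gcongr
  · have h1 : ((j:ℝ)+1) ≤ (i:ℝ) := by exact_mod_cast h'
    refine le_trans (min_le_right _ _) (le_trans ?_ (le_max_left _ _))
    gcongr

lemma colI_cover {N : ℕ} (hN : 0 < N) {x : ℝ} (hx : x ∈ Ioc (0:ℝ) 1) :
    ∃ i : Fin N, x ∈ colI N (i:ℕ) := by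
  have hN' : (0:ℝ) < N := by exact_mod_cast hN
  have hxN : 0 < x * N := mul_pos hx.1 hN'
  set K := ⌈x * N⌉₊ with hK
  have hK1 : 1 ≤ K := Nat.one_le_ceil_iff.2 hxN
  have hKN : K ≤ N := Nat.ceil_le.2 (by nlinarith [hx.2])
  refine ⟨⟨K - 1, by omega⟩, ?_, ?_⟩
  · show ((K - 1 : ℕ) : ℝ) / N < x
    rw [div_lt_iff₀ hN']
    have h1 : ((K - 1 : ℕ) : ℝ) = (K : ℝ) - 1 := by
      push_cast [Nat.cast_sub hK1]; ring
    rw [h1]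
    have := Nat.ceil_lt_add_one hxN.le
    linarith
  · show x ≤ (((K - 1 : ℕ) : ℝ) + 1) / N
    rw [le_div_iff₀ hN']
    have h1 : ((K - 1 : ℕ) : ℝ) + 1 = (K : ℝ) := by
      push_cast [Nat.cast_sub hK1]; ring
    rw [h1]
    exact Nat.le_ceil _

lemma colI_lt {N : ℕ} {i j : ℕ} {u v : ℝ} (hu : u ∈ colI N i) (hv : v ∈ colI N j)
    (hij : i ≠ j) : u < v ↔ i < j := by
  constructor
  · intro huv
    by_contra h
    push_neg at h
    have h' : j < i := lt_of_le_of_ne h (Ne.symm hij)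
    have : ((j:ℝ)+1) ≤ (i:ℝ) := by exact_mod_cast h'
    have hNpos : (0:ℝ) ≤ (N:ℝ) := Nat.cast_nonneg N
    rcases eq_or_lt_of_le hNpos with hN0 | hN0
    · -- N = 0 : colI is Ioc of a/0 = 0, empty? u ∈ Ioc (i/0) ((i+1)/0) = Ioc 0 0 = ∅
      exfalso
      have : (i:ℝ)/N = ((i:ℝ)+1)/N := by rw [← hN0]; simp
      exact absurd (hu.1.trans_le hu.2) (by rw [this]; exact lt_irrefl _)
    · have : ((j:ℝ)+1)/N ≤ (i:ℝ)/N := by gcongr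
      have : v ≤ u := hv.2.trans (this.trans hu.1.le)
      linarith
  · intro hij'
    have : ((i:ℝ)+1) ≤ (j:ℝ) := by exact_mod_cast hij'
    have hNpos : (0:ℝ) ≤ (N:ℝ) := Nat.cast_nonneg N
    rcases eq_or_lt_of_le hNpos with hN0 | hN0
    · exfalso
      have : (i:ℝ)/N = ((i:ℝ)+1)/N := by rw [← hN0]; simp
      exact absurd (hu.1.trans_le hu.2) (by rw [this]; exact lt_irrefl _)
    · have h2 : ((i:ℝ)+1)/N ≤ (j:ℝ)/N := by gcongr
      exact lt_of_le_of_lt (hu.2.trans h2) hv.1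
lemma colI_measurable (N i : ℕ) : MeasurableSet (colI N i) := measurableSet_Ioc

lemma gridCell_measurable (N i j : ℕ) : MeasurableSet (gridCell N i j) :=
  (colI_measurable N i).prod (colI_measurable N j)

lemma volume_colI {N : ℕ} (hN : 0 < N) (i : ℕ) : volume (colI N i) = (N : ℝ≥0∞)⁻¹ := by
  have hN' : (0:ℝ) < N := by exact_mod_cast hN
  rw [colI, Real.volume_Ioc]
  have : ((i:ℝ)+1)/N - (i:ℝ)/N = 1/N := by field_simp; ring
  rw [this, one_div, ← ENNReal.ofReal_natCast N, ← ENNReal.ofReal_inv_of_pos hN']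

lemma colI_iUnion {N : ℕ} (hN : 0 < N) : (⋃ i : Fin N, colI N (i:ℕ)) = Ioc (0:ℝ) 1 := by
  apply Set.Subset.antisymm
  · exact Set.iUnion_subset fun i => colI_subset i
  · intro x hx
    obtain ⟨i, hi⟩ := colI_cover hN hx
    exact Set.mem_iUnion.2 ⟨i, hi⟩

lemma colI_pairwise_disjoint {N : ℕ} :
    Pairwise fun (i j : Fin N) => Disjoint (colI N (i:ℕ)) (colI N (j:ℕ)) :=
  fun _ _ h => colI_disjoint (fun hc => h (Fin.ext hc))

/-- For a measure whose `f`-marginal is Lebesgue on `[0,1]`. -/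
lemma marg_strip {γ : Measure (ℝ × ℝ)} {f : ℝ × ℝ → ℝ} (hf : Measurable f)
    (h : γ.map f = volume.restrict (Icc (0:ℝ) 1)) {N : ℕ} (i : Fin N) :
    γ (f ⁻¹' colI N (i:ℕ)) = (N : ℝ≥0∞)⁻¹ := by
  have := Measure.map_apply (μ := γ) hf (colI_measurable N i)
  rw [h] at this
  rw [← this, Measure.restrict_apply (colI_measurable N i),
    Set.inter_eq_self_of_subset_left ((colI_subset i).trans Ioc_subset_Icc_self),
    volume_colI i.pos]

lemma marg_null {γ : Measure (ℝ × ℝ)} {f : ℝ × ℝ → ℝ} (hf : Measurable f)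
    (h : γ.map f = volume.restrict (Icc (0:ℝ) 1)) :
    γ (f ⁻¹' (Ioc (0:ℝ) 1)ᶜ) = 0 := by
  have := Measure.map_apply (μ := γ) hf (measurableSet_Ioc (a := (0:ℝ)) (b := 1)).compl
  rw [h] at this
  rw [← this, Measure.restrict_apply measurableSet_Ioc.compl]
  have hsub : (Ioc (0:ℝ) 1)ᶜ ∩ Icc 0 1 ⊆ {0} := by
    intro x ⟨hx1, hx2⟩
    simp only [Set.mem_compl_iff, Set.mem_Ioc, not_and_or, not_lt, not_le] at hx1
    rcases hx1 with h0 | h1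
    · exact le_antisymm h0 hx2.1
    · exact absurd hx2.2 (not_le.2 h1)
  exact measure_mono_null hsub (by simp)

lemma perm_rowMass {γ : Measure (ℝ × ℝ)} (hγ : IsPermuton γ) {N : ℕ} (i : Fin N) :
    ∑ j : Fin N, γ (gridCell N (i:ℕ) (j:ℕ)) = (N : ℝ≥0∞)⁻¹ := by
  have hdisj : Pairwise fun (j j' : Fin N) =>
      Disjoint (gridCell N (i:ℕ) (j:ℕ)) (gridCell N (i:ℕ) (j':ℕ)) := by
    intro j j' h
    rw [gridCell_eq, gridCell_eq]
    exact Set.disjoint_prod.2 (Or.inr (colI_pairwise_disjoint h))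
  rw [← tsum_fintype (L := .unconditional _), ← measure_iUnion hdisj (fun j => gridCell_measurable _ _ _)]
  have hU : (⋃ j : Fin N, gridCell N (i:ℕ) (j:ℕ)) = colI N (i:ℕ) ×ˢ Ioc (0:ℝ) 1 := by
    simp_rw [gridCell_eq, ← Set.prod_iUnion, colI_iUnion i.pos]
  rw [hU]
  have hps : colI N (i:ℕ) ×ˢ Ioc (0:ℝ) 1 =
      (Prod.fst ⁻¹' colI N (i:ℕ)) ∩ (Prod.snd ⁻¹' Ioc (0:ℝ) 1) := by
    ext p; simp [Set.mem_prod]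
  rw [hps]
  have hnull : γ ((Prod.snd ⁻¹' Ioc (0:ℝ) 1)ᶜ) = 0 := by
    have := marg_null measurable_snd hγ.2.2
    rwa [Set.preimage_compl] at this
  rw [measure_inter_conull hnull]
  exact marg_strip measurable_fst hγ.2.1 i

lemma perm_colMass {γ : Measure (ℝ × ℝ)} (hγ : IsPermuton γ) {N : ℕ} (j : Fin N) :
    ∑ i : Fin N, γ (gridCell N (i:ℕ) (j:ℕ)) = (N : ℝ≥0∞)⁻¹ := by
  have hdisj : Pairwise fun (i i' : Fin N) =>
      Disjoint (gridCell N (i:ℕ) (j:ℕ)) (gridCell N (i':ℕ) (j:ℕ)) := by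
    intro i i' h
    rw [gridCell_eq, gridCell_eq]
    exact Set.disjoint_prod.2 (Or.inl (colI_pairwise_disjoint h))
  rw [← tsum_fintype (L := .unconditional _), ← measure_iUnion hdisj (fun i => gridCell_measurable _ _ _)]
  have hU : (⋃ i : Fin N, gridCell N (i:ℕ) (j:ℕ)) = Ioc (0:ℝ) 1 ×ˢ colI N (j:ℕ) := by
    simp_rw [gridCell_eq, ← Set.iUnion_prod_const, colI_iUnion j.pos]
  rw [hU]
  have hps : Ioc (0:ℝ) 1 ×ˢ colI N (j:ℕ) =
      (Prod.snd ⁻¹' colI N (j:ℕ)) ∩ (Prod.fst ⁻¹' Ioc (0:ℝ) 1) := by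
    ext p; simp [Set.mem_prod, and_comm]
  rw [hps]
  have hnull : γ ((Prod.fst ⁻¹' Ioc (0:ℝ) 1)ᶜ) = 0 := by
    have := marg_null measurable_fst hγ.2.1
    rwa [Set.preimage_compl] at this
  rw [measure_inter_conull hnull]
  exact marg_strip measurable_snd hγ.2.2 j
/-- Density of the grid averaging of `γ`. -/
def gridDensity (γ : Measure (ℝ × ℝ)) (N : ℕ) : ℝ × ℝ → ℝ≥0∞ := fun p =>
  ∑ q : Fin N × Fin N,
    (gridCell N (q.1:ℕ) (q.2:ℕ)).indicator
      (fun _ => (N:ℝ≥0∞)^2 * γ (gridCell N (q.1:ℕ) (q.2:ℕ))) p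

lemma gridDensity_measurable (γ : Measure (ℝ × ℝ)) (N : ℕ) :
    Measurable (gridDensity γ N) := by
  apply Finset.measurable_sum
  intro q _
  exact Measurable.indicator measurable_const (gridCell_measurable _ _ _)

/-- The grid averaging of `γ`. -/
def gridApprox (γ : Measure (ℝ × ℝ)) (N : ℕ) : Measure (ℝ × ℝ) :=
  volume.withDensity (gridDensity γ N)

lemma gridCell_disjoint {N : ℕ} {q q' : Fin N × Fin N} (h : q ≠ q') :
    Disjoint (gridCell N (q.1:ℕ) (q.2:ℕ)) (gridCell N (q'.1:ℕ) (q'.2:ℕ)) := by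
  rw [gridCell_eq, gridCell_eq]
  rcases not_and_or.1 (Prod.ext_iff.not.1 h) with h1 | h1
  · exact Set.disjoint_prod.2 (Or.inl (colI_disjoint (fun hc => h1 (Fin.ext hc))))
  · exact Set.disjoint_prod.2 (Or.inr (colI_disjoint (fun hc => h1 (Fin.ext hc))))

lemma lintegral_gridDensity (γ : Measure (ℝ × ℝ)) (N : ℕ) {s : Set (ℝ × ℝ)}
    (hs : MeasurableSet s) :
    gridApprox γ N s =
      ∑ q : Fin N × Fin N, (N:ℝ≥0∞)^2 * γ (gridCell N (q.1:ℕ) (q.2:ℕ)) *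
        volume (gridCell N (q.1:ℕ) (q.2:ℕ) ∩ s) := by
  rw [gridApprox, withDensity_apply _ hs]
  simp only [gridDensity]
  rw [lintegral_finset_sum _ (fun q _ =>
    Measurable.indicator measurable_const (gridCell_measurable _ _ _))]
  congr 1
  ext q
  rw [lintegral_indicator_const (gridCell_measurable _ _ _),
    Measure.restrict_apply (gridCell_measurable _ _ _)]

lemma volume_gridCell_s10 {N : ℕ} (hN : 0 < N) (i j : ℕ) :
    volume (gridCell N i j) = (N:ℝ≥0∞)⁻¹ * (N:ℝ≥0∞)⁻¹ := by
  rw [gridCell_eq, Measure.volume_eq_prod ℝ ℝ, Measure.prod_prod,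
    volume_colI hN, volume_colI hN]

lemma gridApprox_cell {γ : Measure (ℝ × ℝ)} {N : ℕ} (hN : 0 < N) (q : Fin N × Fin N) :
    gridApprox γ N (gridCell N (q.1:ℕ) (q.2:ℕ)) = γ (gridCell N (q.1:ℕ) (q.2:ℕ)) := by
  rw [lintegral_gridDensity γ N (gridCell_measurable _ _ _)]
  rw [Finset.sum_eq_single q]
  · rw [Set.inter_self, volume_gridCell_s10 hN]
    have hNne : (N:ℝ≥0∞) ≠ 0 := by exact_mod_cast hN.ne'
    have hNtop : (N:ℝ≥0∞) ≠ ⊤ := ENNReal.natCast_ne_top N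
    calc (N:ℝ≥0∞)^2 * γ (gridCell N (q.1:ℕ) (q.2:ℕ)) * ((N:ℝ≥0∞)⁻¹ * (N:ℝ≥0∞)⁻¹)
        = ((N:ℝ≥0∞) * (N:ℝ≥0∞)⁻¹) * ((N:ℝ≥0∞) * (N:ℝ≥0∞)⁻¹) * γ (gridCell N (q.1:ℕ) (q.2:ℕ)) := by
          ring
      _ = γ (gridCell N (q.1:ℕ) (q.2:ℕ)) := by
          rw [ENNReal.mul_inv_cancel hNne hNtop]; simp
  · intro q' _ hq'
    rw [(gridCell_disjoint hq').inter_eq, measure_empty, mul_zero]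
  · intro h; exact absurd (Finset.mem_univ q) h
lemma gridApprox_map_fst {γ : Measure (ℝ × ℝ)} (hγ : IsPermuton γ) {N : ℕ} (hN : 0 < N) :
    (gridApprox γ N).map Prod.fst = volume.restrict (Icc (0:ℝ) 1) := by
  apply Measure.ext
  intro s hs
  rw [Measure.map_apply measurable_fst hs,
    lintegral_gridDensity γ N (measurable_fst hs)]
  have hNne : (N:ℝ≥0∞) ≠ 0 := by exact_mod_cast hN.ne'
  have hNtop : (N:ℝ≥0∞) ≠ ⊤ := ENNReal.natCast_ne_top N
  have hcell : ∀ q : Fin N × Fin N,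
      volume (gridCell N (q.1:ℕ) (q.2:ℕ) ∩ Prod.fst ⁻¹' s) =
        volume (colI N (q.1:ℕ) ∩ s) * (N:ℝ≥0∞)⁻¹ := by
    intro q
    have : gridCell N (q.1:ℕ) (q.2:ℕ) ∩ Prod.fst ⁻¹' s =
        (colI N (q.1:ℕ) ∩ s) ×ˢ colI N (q.2:ℕ) := by
      ext p
      simp only [gridCell_eq, Set.mem_inter_iff, Set.mem_prod, Set.mem_preimage]
      tauto
    rw [this, Measure.volume_eq_prod ℝ ℝ, Measure.prod_prod, volume_colI hN]
  calc ∑ q : Fin N × Fin N, (N:ℝ≥0∞)^2 * γ (gridCell N (q.1:ℕ) (q.2:ℕ)) *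
        volume (gridCell N (q.1:ℕ) (q.2:ℕ) ∩ Prod.fst ⁻¹' s)
      = ∑ i : Fin N, ∑ j : Fin N, (N:ℝ≥0∞)^2 * (N:ℝ≥0∞)⁻¹ * volume (colI N (i:ℕ) ∩ s) *
          γ (gridCell N (i:ℕ) (j:ℕ)) := by
        rw [Fintype.sum_prod_type]
        refine Finset.sum_congr rfl fun i _ => Finset.sum_congr rfl fun j _ => ?_
        rw [hcell (i, j)]
        ring
    _ = ∑ i : Fin N, volume (colI N (i:ℕ) ∩ s) := by
        refine Finset.sum_congr rfl fun i _ => ?_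
        rw [← Finset.mul_sum, perm_rowMass hγ i]
        calc (N:ℝ≥0∞)^2 * (N:ℝ≥0∞)⁻¹ * volume (colI N (i:ℕ) ∩ s) * (N:ℝ≥0∞)⁻¹
            = ((N:ℝ≥0∞) * (N:ℝ≥0∞)⁻¹) * ((N:ℝ≥0∞) * (N:ℝ≥0∞)⁻¹) * volume (colI N (i:ℕ) ∩ s) := by
              ring
          _ = volume (colI N (i:ℕ) ∩ s) := by rw [ENNReal.mul_inv_cancel hNne hNtop]; simp
    _ = volume (⋃ i : Fin N, colI N (i:ℕ) ∩ s) := by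
        rw [← tsum_fintype (L := .unconditional _), ← measure_iUnion]
        · intro i j h
          exact ((colI_pairwise_disjoint h).mono (Set.inter_subset_left) (Set.inter_subset_left))
        · exact fun i => (colI_measurable _ _).inter hs
    _ = volume (Ioc (0:ℝ) 1 ∩ s) := by rw [← Set.iUnion_inter, colI_iUnion hN]
    _ = volume.restrict (Icc (0:ℝ) 1) s := by
        rw [Measure.restrict_apply hs]
        apply le_antisymm
        · exact measure_mono (Set.inter_subset_inter_left s Ioc_subset_Icc_self) |>.trans
            (le_of_eq (by rw [Set.inter_comm]))
        · have hsplit : s ∩ Icc 0 1 ⊆ (Ioc (0:ℝ) 1 ∩ s) ∪ {0} := by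
            intro x ⟨hx1, hx2⟩
            rcases eq_or_lt_of_le hx2.1 with h0 | h0
            · exact Or.inr (by simp [← h0])
            · exact Or.inl ⟨⟨h0, hx2.2⟩, hx1⟩
          calc volume (s ∩ Icc 0 1) ≤ volume ((Ioc (0:ℝ) 1 ∩ s) ∪ {0}) := measure_mono hsplit
            _ ≤ volume (Ioc (0:ℝ) 1 ∩ s) + volume ({0} : Set ℝ) := measure_union_le _ _
            _ = volume (Ioc (0:ℝ) 1 ∩ s) := by simp

lemma gridApprox_map_snd {γ : Measure (ℝ × ℝ)} (hγ : IsPermuton γ) {N : ℕ} (hN : 0 < N) :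
    (gridApprox γ N).map Prod.snd = volume.restrict (Icc (0:ℝ) 1) := by
  apply Measure.ext
  intro s hs
  rw [Measure.map_apply measurable_snd hs,
    lintegral_gridDensity γ N (measurable_snd hs)]
  have hNne : (N:ℝ≥0∞) ≠ 0 := by exact_mod_cast hN.ne'
  have hNtop : (N:ℝ≥0∞) ≠ ⊤ := ENNReal.natCast_ne_top N
  have hcell : ∀ q : Fin N × Fin N,
      volume (gridCell N (q.1:ℕ) (q.2:ℕ) ∩ Prod.snd ⁻¹' s) =
        volume (colI N (q.2:ℕ) ∩ s) * (N:ℝ≥0∞)⁻¹ := by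
    intro q
    have : gridCell N (q.1:ℕ) (q.2:ℕ) ∩ Prod.snd ⁻¹' s =
        colI N (q.1:ℕ) ×ˢ (colI N (q.2:ℕ) ∩ s) := by
      ext p
      simp only [gridCell_eq, Set.mem_inter_iff, Set.mem_prod, Set.mem_preimage]
      tauto
    rw [this, Measure.volume_eq_prod ℝ ℝ, Measure.prod_prod, volume_colI hN, mul_comm]
  calc ∑ q : Fin N × Fin N, (N:ℝ≥0∞)^2 * γ (gridCell N (q.1:ℕ) (q.2:ℕ)) *
        volume (gridCell N (q.1:ℕ) (q.2:ℕ) ∩ Prod.snd ⁻¹' s)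
      = ∑ j : Fin N, ∑ i : Fin N, (N:ℝ≥0∞)^2 * (N:ℝ≥0∞)⁻¹ * volume (colI N (j:ℕ) ∩ s) *
          γ (gridCell N (i:ℕ) (j:ℕ)) := by
        rw [Fintype.sum_prod_type, Finset.sum_comm]
        refine Finset.sum_congr rfl fun j _ => Finset.sum_congr rfl fun i _ => ?_
        rw [hcell (i, j)]
        ring
    _ = ∑ j : Fin N, volume (colI N (j:ℕ) ∩ s) := by
        refine Finset.sum_congr rfl fun j _ => ?_
        rw [← Finset.mul_sum, perm_colMass hγ j]
        calc (N:ℝ≥0∞)^2 * (N:ℝ≥0∞)⁻¹ * volume (colI N (j:ℕ) ∩ s) * (N:ℝ≥0∞)⁻¹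
            = ((N:ℝ≥0∞) * (N:ℝ≥0∞)⁻¹) * ((N:ℝ≥0∞) * (N:ℝ≥0∞)⁻¹) * volume (colI N (j:ℕ) ∩ s) := by
              ring
          _ = volume (colI N (j:ℕ) ∩ s) := by rw [ENNReal.mul_inv_cancel hNne hNtop]; simp
    _ = volume (⋃ j : Fin N, colI N (j:ℕ) ∩ s) := by
        rw [← tsum_fintype (L := .unconditional _), ← measure_iUnion]
        · intro i j h
          exact ((colI_pairwise_disjoint h).mono (Set.inter_subset_left) (Set.inter_subset_left))
        · exact fun i => (colI_measurable _ _).inter hs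
    _ = volume (Ioc (0:ℝ) 1 ∩ s) := by rw [← Set.iUnion_inter, colI_iUnion hN]
    _ = volume.restrict (Icc (0:ℝ) 1) s := by
        rw [Measure.restrict_apply hs]
        apply le_antisymm
        · exact measure_mono (Set.inter_subset_inter_left s Ioc_subset_Icc_self) |>.trans
            (le_of_eq (by rw [Set.inter_comm]))
        · have hsplit : s ∩ Icc 0 1 ⊆ (Ioc (0:ℝ) 1 ∩ s) ∪ {0} := by
            intro x ⟨hx1, hx2⟩
            rcases eq_or_lt_of_le hx2.1 with h0 | h0
            · exact Or.inr (by simp [← h0])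
            · exact Or.inl ⟨⟨h0, hx2.2⟩, hx1⟩
          calc volume (s ∩ Icc 0 1) ≤ volume ((Ioc (0:ℝ) 1 ∩ s) ∪ {0}) := measure_mono hsplit
            _ ≤ volume (Ioc (0:ℝ) 1 ∩ s) + volume ({0} : Set ℝ) := measure_union_le _ _
            _ = volume (Ioc (0:ℝ) 1 ∩ s) := by simp

lemma gridApprox_isPermuton {γ : Measure (ℝ × ℝ)} (hγ : IsPermuton γ) {N : ℕ} (hN : 0 < N) :
    IsPermuton (gridApprox γ N) := by
  refine ⟨⟨?_⟩, gridApprox_map_fst hγ hN, gridApprox_map_snd hγ hN⟩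
  have h := gridApprox_map_fst hγ hN
  have h2 : (gridApprox γ N).map Prod.fst Set.univ = gridApprox γ N Set.univ := by
    rw [Measure.map_apply measurable_fst MeasurableSet.univ, Set.preimage_univ]
  rw [h] at h2
  rw [← h2, Measure.restrict_apply MeasurableSet.univ, Set.univ_inter, Real.volume_Icc]
  norm_num
lemma gridApprox_entropy_ne_bot (γ : Measure (ℝ × ℝ)) (N : ℕ) :
    permutonEntropy (gridApprox γ N) ≠ ⊥ := by
  have hac : gridApprox γ N ≪ volume := withDensity_absolutelyContinuous _ _
  set g := gridDensity γ N with hg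
  have hgm : Measurable g := gridDensity_measurable γ N
  have hrn : (gridApprox γ N).rnDeriv volume =ᵐ[volume] g :=
    Measure.rnDeriv_withDensity volume hgm
  set φ : ℝ≥0∞ → ℝ := fun x => x.toReal * Real.log x.toReal with hφ
  set F : ℝ × ℝ → ℝ := fun p => φ (g p) with hF
  have hFeq : F = fun p => ∑ q : Fin N × Fin N,
      (gridCell N (q.1:ℕ) (q.2:ℕ)).indicator
        (fun _ => φ ((N:ℝ≥0∞)^2 * γ (gridCell N (q.1:ℕ) (q.2:ℕ)))) p := by
    funext p
    by_cases hp : ∃ q : Fin N × Fin N, p ∈ gridCell N (q.1:ℕ) (q.2:ℕ)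
    · obtain ⟨q₀, hq₀⟩ := hp
      have hgp : g p = (N:ℝ≥0∞)^2 * γ (gridCell N (q₀.1:ℕ) (q₀.2:ℕ)) := by
        rw [hg, gridDensity, Finset.sum_eq_single q₀]
        · rw [Set.indicator_of_mem hq₀]
        · intro q _ hq
          exact Set.indicator_of_notMem
            (Set.disjoint_left.1 (gridCell_disjoint hq) · hq₀ |> fun h => h) _
        · intro h; exact absurd (Finset.mem_univ q₀) h
      rw [hF]
      simp only
      rw [hgp, Finset.sum_eq_single q₀]
      · rw [Set.indicator_of_mem hq₀]
      · intro q _ hq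
        exact Set.indicator_of_notMem
          (Set.disjoint_left.1 (gridCell_disjoint hq) · hq₀ |> fun h => h) _
      · intro h; exact absurd (Finset.mem_univ q₀) h
    · push_neg at hp
      have hgp : g p = 0 := by
        rw [hg, gridDensity]
        exact Finset.sum_eq_zero fun q _ => Set.indicator_of_notMem (hp q) _
      rw [hF]
      simp only
      rw [hgp, Finset.sum_eq_zero fun q _ => Set.indicator_of_notMem (hp q) _]
      simp [hφ]
  have hFint : Integrable F volume := by
    rw [hFeq]
    apply integrable_finset_sum
    intro q _
    rw [integrable_indicator_iff (gridCell_measurable _ _ _)]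
    refine integrableOn_const ?_
    rw [gridCell_eq, Measure.volume_eq_prod ℝ ℝ, Measure.prod_prod, colI, colI,
      Real.volume_Ioc, Real.volume_Ioc]
    exact (ENNReal.mul_lt_top ENNReal.ofReal_lt_top ENNReal.ofReal_lt_top).ne
  have hint : Integrable (fun p => ((gridApprox γ N).rnDeriv volume p).toReal *
      Real.log ((gridApprox γ N).rnDeriv volume p).toReal) volume := by
    apply hFint.congr
    filter_upwards [hrn] with p hp
    rw [hF, hφ]
    simp only
    rw [hp]
  rw [permutonEntropy, if_pos ⟨hac, hint⟩]
  exact EReal.coe_ne_bot _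
section Core

variable {m N : ℕ}

lemma measurableSet_patternEvent {m : ℕ} (τ : Equiv.Perm (Fin m)) :
    MeasurableSet (patternEvent τ) := by
  have : patternEvent τ = ⋃ σ : Equiv.Perm (Fin m),
      ((⋂ i, ⋂ j, ⋂ (_ : i < j), {p : Fin m → ℝ × ℝ | (p (σ i)).1 < (p (σ j)).1}) ∩
       (⋂ i, ⋂ j, ⋂ (_ : i < j), {p : Fin m → ℝ × ℝ |
          ((p (σ i)).2 < (p (σ j)).2 ↔ τ i < τ j)})) := by
    ext p
    simp only [patternEvent, Set.mem_setOf_eq, Set.mem_iUnion, Set.mem_inter_iff,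
      Set.mem_iInter]
    constructor
    · rintro ⟨σ, h1, h2⟩
      exact ⟨σ, fun i j hij => h1 hij, fun i j hij => h2 i j hij⟩
    · rintro ⟨σ, h1, h2⟩
      exact ⟨σ, fun i j hij => h1 i j hij, fun i j hij => h2 i j hij⟩
  rw [this]
  apply MeasurableSet.iUnion
  intro σ
  apply MeasurableSet.inter
  · refine MeasurableSet.iInter fun i => MeasurableSet.iInter fun j =>
      MeasurableSet.iInter fun _ => ?_
    exact measurableSet_lt ((measurable_pi_apply (σ i)).fst) ((measurable_pi_apply (σ j)).fst)
  · refine MeasurableSet.iInter fun i => MeasurableSet.iInter fun j =>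
      MeasurableSet.iInter fun _ => ?_
    by_cases h : τ i < τ j
    · simp only [h, iff_true]
      exact measurableSet_lt ((measurable_pi_apply (σ i)).snd) ((measurable_pi_apply (σ j)).snd)
    · simp only [h, iff_false, not_lt]
      exact measurableSet_le ((measurable_pi_apply (σ j)).snd) ((measurable_pi_apply (σ i)).snd)

/-- The cylinder set of tuples whose `a`-th point lies in the cell indexed by `c a`. -/
def cellSet (N : ℕ) {m : ℕ} (c : Fin m → Fin N × Fin N) : Set (Fin m → ℝ × ℝ) :=
  Set.pi Set.univ fun a => gridCell N ((c a).1 : ℕ) ((c a).2 : ℕ)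

lemma cellSet_measurable (c : Fin m → Fin N × Fin N) : MeasurableSet (cellSet N c) :=
  MeasurableSet.univ_pi fun a => gridCell_measurable _ _ _

lemma cellSet_disjoint {c c' : Fin m → Fin N × Fin N} (h : c ≠ c') :
    Disjoint (cellSet N c) (cellSet N c') := by
  obtain ⟨a, ha⟩ := Function.ne_iff.1 h
  rw [Set.disjoint_left]
  intro p hp hp'
  exact Set.disjoint_left.1 (gridCell_disjoint ha) (hp a (Set.mem_univ a))
    (hp' a (Set.mem_univ a))

lemma cellSet_measure (μ : Measure (ℝ × ℝ)) [SigmaFinite μ] (c : Fin m → Fin N × Fin N) :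
    Measure.pi (fun _ : Fin m => μ) (cellSet N c) =
      ∏ a : Fin m, μ (gridCell N ((c a).1 : ℕ) ((c a).2 : ℕ)) :=
  Measure.pi_pi _ _

/-- Whether the cell assignment is "good": all columns and all rows distinct. -/
def goodAssign {m N : ℕ} (c : Fin m → Fin N × Fin N) : Prop :=
  Function.Injective (fun a => (c a).1) ∧ Function.Injective (fun a => (c a).2)

/-- The combinatorial pattern condition on a cell assignment. -/
def assignPattern {m N : ℕ} (τ : Equiv.Perm (Fin m)) (c : Fin m → Fin N × Fin N) : Prop :=
  ∃ σ : Equiv.Perm (Fin m), StrictMono (fun i => (c (σ i)).1) ∧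
    ∀ i j : Fin m, i < j → ((c (σ i)).2 < (c (σ j)).2 ↔ τ i < τ j)

/-- For a good assignment, membership in the pattern event is determined combinatorially. -/
lemma patternEvent_iff_assign {τ : Equiv.Perm (Fin m)} {c : Fin m → Fin N × Fin N}
    (hc : goodAssign c) {p : Fin m → ℝ × ℝ} (hp : p ∈ cellSet N c) :
    p ∈ patternEvent τ ↔ assignPattern τ c := by
  have hmem : ∀ a, (p a).1 ∈ colI N (((c a).1 : ℕ)) ∧ (p a).2 ∈ colI N (((c a).2 : ℕ)) :=
    fun a => hp a (Set.mem_univ a)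
  have hx : ∀ a b : Fin m, a ≠ b → ((p a).1 < (p b).1 ↔ (c a).1 < (c b).1) := by
    intro a b hab
    have hne : ((c a).1 : ℕ) ≠ ((c b).1 : ℕ) :=
      fun hh => hab (hc.1 (Fin.ext hh))
    rw [colI_lt (hmem a).1 (hmem b).1 hne]
    exact Iff.symm Fin.lt_iff_val_lt_val
  have hy : ∀ a b : Fin m, a ≠ b → ((p a).2 < (p b).2 ↔ (c a).2 < (c b).2) := by
    intro a b hab
    have hne : ((c a).2 : ℕ) ≠ ((c b).2 : ℕ) :=
      fun hh => hab (hc.2 (Fin.ext hh))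
    rw [colI_lt (hmem a).2 (hmem b).2 hne]
    exact Iff.symm Fin.lt_iff_val_lt_val
  constructor
  · rintro ⟨σ, h1, h2⟩
    refine ⟨σ, ?_, ?_⟩
    · intro i j hij
      exact (hx (σ i) (σ j) (fun hh => hij.ne (σ.injective hh))).1 (h1 hij)
    · intro i j hij
      rw [← hy (σ i) (σ j) (fun hh => hij.ne (σ.injective hh))]
      exact h2 i j hij
  · rintro ⟨σ, h1, h2⟩
    refine ⟨σ, ?_, ?_⟩
    · intro i j hij
      exact (hx (σ i) (σ j) (fun hh => hij.ne (σ.injective hh))).2 (h1 hij)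
    · intro i j hij
      rw [hy (σ i) (σ j) (fun hh => hij.ne (σ.injective hh))]
      exact h2 i j hij

end Core
section Main

variable {m N : ℕ}

lemma prod_two_le {α : Type*} [Fintype α] (x : α → ℝ≥0∞) (hx : ∀ t, x t ≤ 1)
    {a b : α} (hab : a ≠ b) : ∏ t, x t ≤ x a * x b := by
  rw [← Finset.mul_prod_erase Finset.univ x (Finset.mem_univ a)]
  have hb : b ∈ Finset.univ.erase a := Finset.mem_erase.2 ⟨hab.symm, Finset.mem_univ b⟩
  rw [← Finset.mul_prod_erase _ x hb]
  calc x a * (x b * ∏ t ∈ (Finset.univ.erase a).erase b, x t)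
      ≤ x a * (x b * 1) := by
        gcongr
        exact Finset.prod_le_one (fun t _ => zero_le) (fun t _ => hx t)
    _ = x a * x b := by ring

/-- Union of the cells of all good assignments. -/
def goodSet (N m : ℕ) : Set (Fin m → ℝ × ℝ) :=
  ⋃ c ∈ Finset.univ.filter (fun c : Fin m → Fin N × Fin N => goodAssign c), cellSet N c

lemma goodSet_measurable : MeasurableSet (goodSet N m) :=
  MeasurableSet.biUnion (Finset.univ.filter _).countable_toSet
    (fun c _ => cellSet_measurable c)

lemma pair_set_bound (μ : Measure (ℝ × ℝ)) [IsProbabilityMeasure μ] {T : Set (ℝ × ℝ)}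
    (hT : MeasurableSet T) (a b : Fin m) :
    Measure.pi (fun _ : Fin m => μ) {p : Fin m → ℝ × ℝ | a ≠ b ∧ p a ∈ T ∧ p b ∈ T} ≤
      μ T * μ T := by
  by_cases hab : a = b
  · simp [hab]
  · have hset : {p : Fin m → ℝ × ℝ | a ≠ b ∧ p a ∈ T ∧ p b ∈ T} =
        Set.pi Set.univ (fun t => if t = a then T else if t = b then T else Set.univ) := by
      ext p
      simp only [Set.mem_setOf_eq, Set.mem_pi, Set.mem_univ, forall_true_left]
      constructor
      · rintro ⟨-, h1, h2⟩ t
        by_cases ht : t = a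
        · subst ht; simp [h1]
        · by_cases ht' : t = b
          · subst ht'; simp [ht, h2]
          · simp [ht, ht']
      · intro h
        refine ⟨hab, ?_, ?_⟩
        · have := h a; simpa using this
        · have := h b; have hba : ¬(b = a) := fun hh => hab hh.symm
          simpa [hba] using this
    rw [hset, Measure.pi_pi]
    have := prod_two_le (fun t => μ (if t = a then T else if t = b then T else Set.univ))
      (fun t => prob_le_one) hab
    refine this.trans ?_
    have hba : ¬(b = a) := fun hh => hab hh.symm
    simp [hba]

lemma single_set_null (μ : Measure (ℝ × ℝ)) [IsProbabilityMeasure μ] {T : Set (ℝ × ℝ)}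
    (hTnull : μ T = 0) (a : Fin m) :
    Measure.pi (fun _ : Fin m => μ) {p : Fin m → ℝ × ℝ | p a ∈ T} = 0 := by
  have hset : {p : Fin m → ℝ × ℝ | p a ∈ T} ⊆
      Set.pi Set.univ (Function.update (fun _ : Fin m => (Set.univ : Set (ℝ × ℝ))) a
        (toMeasurable μ T)) := by
    intro p hp t _
    by_cases ht : t = a
    · subst ht; simp only [Function.update_self]; exact subset_toMeasurable μ T hp
    · simp [Function.update_of_ne ht]
  apply measure_mono_null hset
  rw [Measure.pi_pi]
  apply Finset.prod_eq_zero (Finset.mem_univ a)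
  rw [Function.update_self, measure_toMeasurable]
  exact hTnull

lemma perm_offsquare_null {μ : Measure (ℝ × ℝ)} (hμ : IsPermuton μ) :
    μ ((Ioc (0:ℝ) 1 ×ˢ Ioc (0:ℝ) 1)ᶜ) = 0 := by
  have hsub : (Ioc (0:ℝ) 1 ×ˢ Ioc (0:ℝ) 1)ᶜ ⊆
      (Prod.fst ⁻¹' (Ioc (0:ℝ) 1)ᶜ) ∪ (Prod.snd ⁻¹' (Ioc (0:ℝ) 1)ᶜ) := by
    intro p hp
    simp only [Set.mem_compl_iff, Set.mem_prod, not_and_or] at hp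
    rcases hp with h | h
    · exact Or.inl h
    · exact Or.inr h
  apply measure_mono_null hsub
  exact measure_union_null (marg_null measurable_fst hμ.2.1) (marg_null measurable_snd hμ.2.2)

lemma compl_goodSet_subset (hN : 0 < N) :
    (goodSet N m)ᶜ ⊆
      (⋃ a : Fin m, {p : Fin m → ℝ × ℝ | p a ∈ (Ioc (0:ℝ) 1 ×ˢ Ioc (0:ℝ) 1)ᶜ}) ∪
      (⋃ a : Fin m, ⋃ b : Fin m, ⋃ i : Fin N, {p : Fin m → ℝ × ℝ |
        a ≠ b ∧ p a ∈ Prod.fst ⁻¹' colI N (i:ℕ) ∧ p b ∈ Prod.fst ⁻¹' colI N (i:ℕ)}) ∪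
      (⋃ a : Fin m, ⋃ b : Fin m, ⋃ j : Fin N, {p : Fin m → ℝ × ℝ |
        a ≠ b ∧ p a ∈ Prod.snd ⁻¹' colI N (j:ℕ) ∧ p b ∈ Prod.snd ⁻¹' colI N (j:ℕ)}) := by
  intro p hp
  by_contra hcon
  apply hp
  simp only [Set.mem_union, not_or, Set.mem_iUnion, not_exists, Set.mem_setOf_eq,
    Set.mem_compl_iff, not_not] at hcon
  obtain ⟨⟨h0, hX⟩, hY⟩ := hcon
  have h1 : ∀ a : Fin m, ∃ i : Fin N, (p a).1 ∈ colI N (i:ℕ) :=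
    fun a => colI_cover hN (h0 a).1
  have h2 : ∀ a : Fin m, ∃ j : Fin N, (p a).2 ∈ colI N (j:ℕ) :=
    fun a => colI_cover hN (h0 a).2
  choose ci hci using h1
  choose cj hcj using h2
  set c : Fin m → Fin N × Fin N := fun a => (ci a, cj a) with hc
  have hgood : goodAssign c := by
    constructor
    · intro a b hab
      by_contra hne
      exact hX a b (ci a) ⟨hne, hci a, by rw [show ci a = ci b from hab]; exact hci b⟩
    · intro a b hab
      by_contra hne
      exact hY a b (cj a) ⟨hne, hcj a, by rw [show cj a = cj b from hab]; exact hcj b⟩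
  apply Set.mem_biUnion (Finset.mem_coe.2 (Finset.mem_filter.2 ⟨Finset.mem_univ c, hgood⟩))
  intro a _
  exact ⟨hci a, hcj a⟩

lemma triple_bound (μ : Measure (ℝ × ℝ)) [IsProbabilityMeasure μ] (hN : 0 < N)
    {T : Fin N → Set (ℝ × ℝ)} (hT : ∀ i, MeasurableSet (T i))
    (hstrip : ∀ i, μ (T i) ≤ (N : ℝ≥0∞)⁻¹) :
    Measure.pi (fun _ : Fin m => μ)
      (⋃ a : Fin m, ⋃ b : Fin m, ⋃ i : Fin N,
        {p : Fin m → ℝ × ℝ | a ≠ b ∧ p a ∈ T i ∧ p b ∈ T i}) ≤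
      (m : ℝ≥0∞)^2 * (N : ℝ≥0∞)⁻¹ := by
  have hNne : (N:ℝ≥0∞) ≠ 0 := by exact_mod_cast hN.ne'
  have hNtop : (N:ℝ≥0∞) ≠ ⊤ := ENNReal.natCast_ne_top N
  have hterm : ∀ (a b : Fin m) (i : Fin N),
      Measure.pi (fun _ : Fin m => μ) {p : Fin m → ℝ × ℝ | a ≠ b ∧ p a ∈ T i ∧ p b ∈ T i} ≤
        (N : ℝ≥0∞)⁻¹ * (N : ℝ≥0∞)⁻¹ := by
    intro a b i
    exact (pair_set_bound μ (hT i) a b).trans (mul_le_mul' (hstrip i) (hstrip i))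
  calc Measure.pi (fun _ : Fin m => μ)
        (⋃ a : Fin m, ⋃ b : Fin m, ⋃ i : Fin N,
          {p : Fin m → ℝ × ℝ | a ≠ b ∧ p a ∈ T i ∧ p b ∈ T i})
      ≤ ∑' a : Fin m, ∑' b : Fin m, ∑' i : Fin N,
          Measure.pi (fun _ : Fin m => μ)
            {p : Fin m → ℝ × ℝ | a ≠ b ∧ p a ∈ T i ∧ p b ∈ T i} := by
        refine le_trans (measure_iUnion_le _) (ENNReal.tsum_le_tsum fun a => ?_)
        exact le_trans (measure_iUnion_le _)
          (ENNReal.tsum_le_tsum fun b => measure_iUnion_le _)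
    _ ≤ ∑' _ : Fin m, ∑' _ : Fin m, ∑' _ : Fin N, (N : ℝ≥0∞)⁻¹ * (N : ℝ≥0∞)⁻¹ := by
        refine ENNReal.tsum_le_tsum fun a => ENNReal.tsum_le_tsum fun b =>
          ENNReal.tsum_le_tsum fun i => hterm a b i
    _ = (m : ℝ≥0∞) * ((m : ℝ≥0∞) * ((N : ℝ≥0∞) * ((N : ℝ≥0∞)⁻¹ * (N : ℝ≥0∞)⁻¹))) := by
        simp only [tsum_fintype, Finset.sum_const, Finset.card_univ, nsmul_eq_mul,
          Fintype.card_fin]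
    _ = (m : ℝ≥0∞)^2 * (N : ℝ≥0∞)⁻¹ := by
        rw [show (N : ℝ≥0∞) * ((N : ℝ≥0∞)⁻¹ * (N : ℝ≥0∞)⁻¹) =
          ((N : ℝ≥0∞) * (N : ℝ≥0∞)⁻¹) * (N : ℝ≥0∞)⁻¹ by ring,
          ENNReal.mul_inv_cancel hNne hNtop, one_mul]
        ring

lemma compl_goodSet_bound {μ : Measure (ℝ × ℝ)} (hμ : IsPermuton μ) (hN : 0 < N) :
    Measure.pi (fun _ : Fin m => μ) (goodSet N m)ᶜ ≤
      2 * (m : ℝ≥0∞)^2 * (N : ℝ≥0∞)⁻¹ := by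
  haveI : IsProbabilityMeasure μ := hμ.1
  calc Measure.pi (fun _ : Fin m => μ) (goodSet N m)ᶜ
      ≤ Measure.pi (fun _ : Fin m => μ)
          ((⋃ a : Fin m, {p : Fin m → ℝ × ℝ | p a ∈ (Ioc (0:ℝ) 1 ×ˢ Ioc (0:ℝ) 1)ᶜ}) ∪
          (⋃ a : Fin m, ⋃ b : Fin m, ⋃ i : Fin N, {p : Fin m → ℝ × ℝ |
            a ≠ b ∧ p a ∈ Prod.fst ⁻¹' colI N (i:ℕ) ∧ p b ∈ Prod.fst ⁻¹' colI N (i:ℕ)}) ∪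
          (⋃ a : Fin m, ⋃ b : Fin m, ⋃ j : Fin N, {p : Fin m → ℝ × ℝ |
            a ≠ b ∧ p a ∈ Prod.snd ⁻¹' colI N (j:ℕ) ∧ p b ∈ Prod.snd ⁻¹' colI N (j:ℕ)})) :=
        measure_mono (compl_goodSet_subset hN)
    _ ≤ Measure.pi (fun _ : Fin m => μ)
          (⋃ a : Fin m, {p : Fin m → ℝ × ℝ | p a ∈ (Ioc (0:ℝ) 1 ×ˢ Ioc (0:ℝ) 1)ᶜ}) +
        Measure.pi (fun _ : Fin m => μ)
          (⋃ a : Fin m, ⋃ b : Fin m, ⋃ i : Fin N, {p : Fin m → ℝ × ℝ |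
            a ≠ b ∧ p a ∈ Prod.fst ⁻¹' colI N (i:ℕ) ∧ p b ∈ Prod.fst ⁻¹' colI N (i:ℕ)}) +
        Measure.pi (fun _ : Fin m => μ)
          (⋃ a : Fin m, ⋃ b : Fin m, ⋃ j : Fin N, {p : Fin m → ℝ × ℝ |
            a ≠ b ∧ p a ∈ Prod.snd ⁻¹' colI N (j:ℕ) ∧ p b ∈ Prod.snd ⁻¹' colI N (j:ℕ)}) := by
        refine (measure_union_le _ _).trans ?_
        gcongr
        exact measure_union_le _ _
    _ ≤ 0 + (m : ℝ≥0∞)^2 * (N : ℝ≥0∞)⁻¹ + (m : ℝ≥0∞)^2 * (N : ℝ≥0∞)⁻¹ := by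
        gcongr
        · refine le_trans (measure_iUnion_le _) (le_of_eq ?_)
          have h0 : ∀ a : Fin m, Measure.pi (fun _ : Fin m => μ)
              {p : Fin m → ℝ × ℝ | p a ∈ (Ioc (0:ℝ) 1 ×ˢ Ioc (0:ℝ) 1)ᶜ} = 0 :=
            fun a => single_set_null μ (perm_offsquare_null hμ) a
          simp only [h0, tsum_zero]
        · exact triple_bound μ hN (fun i => measurable_fst (colI_measurable N i))
            (fun i => le_of_eq (marg_strip measurable_fst hμ.2.1 i))
        · exact triple_bound μ hN (fun j => measurable_snd (colI_measurable N j))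
            (fun j => le_of_eq (marg_strip measurable_snd hμ.2.2 j))
    _ = 2 * (m : ℝ≥0∞)^2 * (N : ℝ≥0∞)⁻¹ := by ring

end Main
section Diff

variable {m N : ℕ}

lemma inter_goodSet_eq (τ : Equiv.Perm (Fin m)) (N : ℕ) :
    patternEvent τ ∩ goodSet N m =
      ⋃ c ∈ Finset.univ.filter (fun c : Fin m → Fin N × Fin N =>
        goodAssign c ∧ assignPattern τ c), cellSet N c := by
  ext p
  constructor
  · rintro ⟨hE, hG⟩
    obtain ⟨c, hc, hpc⟩ := Set.mem_iUnion₂.1 hG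
    have hgood : goodAssign c := (Finset.mem_filter.1 (Finset.mem_coe.1 hc)).2
    refine Set.mem_biUnion (Finset.mem_coe.2 (Finset.mem_filter.2
      ⟨Finset.mem_univ c, hgood, ?_⟩)) hpc
    exact (patternEvent_iff_assign hgood hpc).1 hE
  · intro hp
    obtain ⟨c, hc, hpc⟩ := Set.mem_iUnion₂.1 hp
    obtain ⟨-, hgood, hpat⟩ := Finset.mem_filter.1 (Finset.mem_coe.1 hc)
    refine ⟨(patternEvent_iff_assign hgood hpc).2 hpat, ?_⟩
    exact Set.mem_biUnion (Finset.mem_coe.2 (Finset.mem_filter.2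
      ⟨Finset.mem_univ c, hgood⟩)) hpc

lemma inter_goodSet_measure_eq {μ ν : Measure (ℝ × ℝ)}
    [IsProbabilityMeasure μ] [IsProbabilityMeasure ν]
    (hcell : ∀ q : Fin N × Fin N,
      μ (gridCell N (q.1:ℕ) (q.2:ℕ)) = ν (gridCell N (q.1:ℕ) (q.2:ℕ)))
    (τ : Equiv.Perm (Fin m)) :
    Measure.pi (fun _ : Fin m => μ) (patternEvent τ ∩ goodSet N m) =
      Measure.pi (fun _ : Fin m => ν) (patternEvent τ ∩ goodSet N m) := by
  rw [inter_goodSet_eq τ N]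
  rw [measure_biUnion_finset ?hd (fun c _ => cellSet_measurable c),
    measure_biUnion_finset ?hd' (fun c _ => cellSet_measurable c)]
  case hd =>
    intro c _ c' _ hcc
    exact cellSet_disjoint hcc
  case hd' =>
    intro c _ c' _ hcc
    exact cellSet_disjoint hcc
  refine Finset.sum_congr rfl fun c _ => ?_
  rw [cellSet_measure μ c, cellSet_measure ν c]
  exact Finset.prod_congr rfl fun a _ => hcell (c a)

lemma patternDensity_diff_bound {μ ν : Measure (ℝ × ℝ)} (hμ : IsPermuton μ)
    (hν : IsPermuton ν) {N : ℕ} (hN : 0 < N)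
    (hcell : ∀ q : Fin N × Fin N,
      μ (gridCell N (q.1:ℕ) (q.2:ℕ)) = ν (gridCell N (q.1:ℕ) (q.2:ℕ)))
    {m : ℕ} (τ : Equiv.Perm (Fin m)) :
    |patternDensity τ ν - patternDensity τ μ| ≤ 2 * (m:ℝ)^2 / N := by
  haveI : IsProbabilityMeasure μ := hμ.1
  haveI : IsProbabilityMeasure ν := hν.1
  set P := Measure.pi (fun _ : Fin m => μ) with hP
  set Q := Measure.pi (fun _ : Fin m => ν) with hQ
  haveI : IsProbabilityMeasure P := by rw [hP]; infer_instance
  haveI : IsProbabilityMeasure Q := by rw [hQ]; infer_instance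
  set E := patternEvent τ with hE
  set G := goodSet N m with hG
  have hGm : MeasurableSet G := goodSet_measurable
  have hPsplit : P (E ∩ G) + P (E \ G) = P E := measure_inter_add_diff E hGm
  have hQsplit : Q (E ∩ G) + Q (E \ G) = Q E := measure_inter_add_diff E hGm
  have hAG : P (E ∩ G) = Q (E ∩ G) := inter_goodSet_measure_eq hcell τ
  have hbound : (2 : ℝ≥0∞) * (m : ℝ≥0∞)^2 * (N : ℝ≥0∞)⁻¹ ≠ ⊤ := by
    apply ENNReal.mul_ne_top
    · exact ENNReal.mul_ne_top (by simp) (by simp [ENNReal.pow_ne_top])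
    · exact ENNReal.inv_ne_top.2 (by exact_mod_cast hN.ne')
  have hPb : P (E \ G) ≤ 2 * (m : ℝ≥0∞)^2 * (N : ℝ≥0∞)⁻¹ :=
    (measure_mono (Set.diff_subset_compl E G)).trans (compl_goodSet_bound hμ hN)
  have hQb : Q (E \ G) ≤ 2 * (m : ℝ≥0∞)^2 * (N : ℝ≥0∞)⁻¹ :=
    (measure_mono (Set.diff_subset_compl E G)).trans (compl_goodSet_bound hν hN)
  have htb : ((2 : ℝ≥0∞) * (m : ℝ≥0∞)^2 * (N : ℝ≥0∞)⁻¹).toReal = 2 * (m:ℝ)^2 / N := by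
    rw [ENNReal.toReal_mul, ENNReal.toReal_mul, ENNReal.toReal_inv]
    simp [div_eq_mul_inv]
  have hPfin : ∀ s : Set (Fin m → ℝ × ℝ), P s ≠ ⊤ := fun s => measure_ne_top P s
  have hQfin : ∀ s : Set (Fin m → ℝ × ℝ), Q s ≠ ⊤ := fun s => measure_ne_top Q s
  have hPE : patternDensity τ μ = (P (E ∩ G)).toReal + (P (E \ G)).toReal := by
    rw [patternDensity, ← hP, ← hE, ← hPsplit, ENNReal.toReal_add (hPfin _) (hPfin _)]
  have hQE : patternDensity τ ν = (Q (E ∩ G)).toReal + (Q (E \ G)).toReal := by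
    rw [patternDensity, ← hQ, ← hE, ← hQsplit, ENNReal.toReal_add (hQfin _) (hQfin _)]
  rw [hPE, hQE, hAG]
  have h1 : (Q (E \ G)).toReal ≤ 2 * (m:ℝ)^2 / N := by
    rw [← htb]; exact ENNReal.toReal_mono hbound hQb
  have h2 : (P (E \ G)).toReal ≤ 2 * (m:ℝ)^2 / N := by
    rw [← htb]; exact ENNReal.toReal_mono hbound hPb
  have h3 : 0 ≤ (Q (E \ G)).toReal := ENNReal.toReal_nonneg
  have h4 : 0 ≤ (P (E \ G)).toReal := ENNReal.toReal_nonneg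
  rw [abs_sub_le_iff]
  constructor <;> linarith

end Diff
end

/-- Fix patterns `τ₁,…,τ_k` and let `ρ(γ)` be the vector of their
densities in `γ`. The set `R_*` of density vectors realized by permutons of finite entropy
is dense in the feasible region `R` of all realizable density vectors: for every permuton
`γ` and `ε > 0` there is a permuton `γ'` with `H(γ') > -∞` whose density vector is within
`ε` of that of `γ` in each coordinate. -/
theorem finite_entropy_densities_dense (k : ℕ) (m : Fin k → ℕ)
    (pat : ∀ j : Fin k, Equiv.Perm (Fin (m j)))
    (γ : Measure (ℝ × ℝ)) (hγ : IsPermuton γ) (ε : ℝ) (hε : 0 < ε) :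
    ∃ γ', IsPermuton γ' ∧ permutonEntropy γ' ≠ ⊥ ∧
      ∀ j, |patternDensity (pat j) γ' - patternDensity (pat j) γ| < ε := by
  obtain ⟨N, hNgt⟩ := exists_nat_gt ((2 * (∑ j, ((m j):ℝ)^2) + 1) / ε)
  have hsum_nonneg : (0:ℝ) ≤ ∑ j, ((m j):ℝ)^2 :=
    Finset.sum_nonneg fun j _ => sq_nonneg _
  have hq : (0:ℝ) < (2 * (∑ j, ((m j):ℝ)^2) + 1) / ε := by positivity
  have hNpos : 0 < N := by exact_mod_cast Nat.cast_pos.1 (hq.trans hNgt)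
  refine ⟨gridApprox γ N, gridApprox_isPermuton hγ hNpos,
    gridApprox_entropy_ne_bot γ N, fun j => ?_⟩
  have hd := patternDensity_diff_bound hγ (gridApprox_isPermuton hγ hNpos) hNpos
    (fun q => (gridApprox_cell hNpos q).symm) (pat j)
  refine lt_of_le_of_lt hd ?_
  have hNR : (0:ℝ) < N := Nat.cast_pos.2 hNpos
  rw [div_lt_iff₀ hNR]
  rw [div_lt_iff₀ hε] at hNgt
  have h2 : ((m j):ℝ)^2 ≤ ∑ j', ((m j'):ℝ)^2 :=
    Finset.single_le_sum (fun j' _ => sq_nonneg ((m j' : ℝ))) (Finset.mem_univ j)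
  nlinarith [hε.le, hNR.le]
end
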